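/- arXiv:math/0307383 — 3 statements merged into one kernel-verified Lean document; each statement's English description precedes it below -/
import Mathlib

section
/- Let r ≥ 2 and let I be a nonempty finite set with a free μ_r-action. Then T(r,I) is in natural bijection with the set of tuples (I_1, I_2, T', π, (T_J)_{J∈π}) where: I = I_1 ⊔ I_2 is an ordered decomposition into μ_r-stable subsets with I_2 ≠ ∅; T' ∈ T(r,I_1) if I_1 ≠ ∅, and T' is the unique empty datum if I_1 = ∅; π is a partition of I_2 preserved by the μ_r-action such that μ_r acts freely on the set of parts of π; and (T_J)_{J∈π} is a family with T_J ∈ T(1,J) satisfying T_{ζ·J} = ζ·T_J for all ζ ∈ μ_r and J ∈ π (i.e. the relabelling bijection ζ : J → ζ·J carries the class T_J to the class T_{ζ·J}). -/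
open scoped Classical

noncomputable section

/-- The group `μ_r` of complex `r`-th roots of unity. -/
abbrev mu (r : ℕ) : Type := rootsOfUnity r ℂ

/-- A family of subsets is laminar if any two members are nested or disjoint. -/
def IsLaminar {α : Type} (F : Set (Set α)) : Prop :=
  ∀ J ∈ F, ∀ K ∈ F, J ⊆ K ∨ K ⊆ J ∨ Disjoint J K

/-- `IsHierarchyOn S F` encodes an isomorphism class of rooted trees with leaf set `S` in
which every internal vertex has at least two children, via the family
`F = {J_v : v a vertex}` of the sets of leaves lying below the vertices; the last
condition says that no vertex has a unique child.  The set `T(1,S)` of isomorphism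
classes of such trees is realized as `{F | IsHierarchyOn S F}`. -/
def IsHierarchyOn {α : Type} (S : Set α) (F : Set (Set α)) : Prop :=
  (∀ J ∈ F, J.Nonempty ∧ J ⊆ S) ∧ (∀ i ∈ S, ({i} : Set α) ∈ F) ∧ S ∈ F ∧ IsLaminar F ∧
  (∀ K ∈ F, ∀ J ∈ F, J ⊂ K → ¬(∀ L ∈ F, L ⊂ K → L ⊆ J))

/-- The action of `ζ ∈ μ_r` on subsets of a `μ_r`-set. -/
def zdot {r : ℕ} {I : Type} [MulAction (mu r) I] (ζ : mu r) (J : Set I) : Set I :=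
  (ζ • ·) '' J

/-- A subset is `μ_r`-fixed if it is stable under every `ζ ∈ μ_r`. -/
def IsFixedSet (r : ℕ) {I : Type} [MulAction (mu r) I] (J : Set I) : Prop :=
  ∀ ζ : mu r, zdot ζ J = J

/-- `C` is a child of the vertex `K` in the tree encoded by `F` (an edge of the fibre of
`K` leads to `C`): `C` is a maximal member of `F` properly contained in `K`. -/
def IsChild {I : Type} (F : Set (Set I)) (C K : Set I) : Prop :=
  C ∈ F ∧ C ⊂ K ∧ ∀ L ∈ F, L ⊂ K → C ⊆ L → L = C

/-- `IsTrHierarchyOn r S F` encodes membership in `T(r,S)`: the tree encoded by `F` is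
`μ_r`-stable (so the `μ_r`-action on the leaves extends to the tree), every `μ_r`-fixed
vertex has at most one `μ_r`-fixed edge in its fibre, and `μ_r` acts freely on the
non-`μ_r`-fixed edges of the fibre of each `μ_r`-fixed vertex. -/
def IsTrHierarchyOn (r : ℕ) {I : Type} [MulAction (mu r) I] (S : Set I)
    (F : Set (Set I)) : Prop :=
  IsHierarchyOn S F ∧
  (∀ ζ : mu r, ∀ J ∈ F, zdot ζ J ∈ F) ∧
  (∀ K ∈ F, IsFixedSet r K → ∀ C C' : Set I, IsChild F C K → IsChild F C' K →
    IsFixedSet r C → IsFixedSet r C' → C = C') ∧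
  (∀ K ∈ F, IsFixedSet r K → ∀ C : Set I, IsChild F C K → ¬IsFixedSet r C →
    ∀ ζ : mu r, zdot ζ C = C → ζ = 1)

namespace StaGlue

lemma mu_exists_ne_one {r : ℕ} (hr : 2 ≤ r) : ∃ ζ : mu r, ζ ≠ 1 := by
  have h0 : r ≠ 0 := by omega
  have : NeZero r := ⟨h0⟩
  have hp := Complex.isPrimitiveRoot_exp r h0
  refine ⟨hp.toRootsOfUnity, ?_⟩
  intro h
  have h3 : Complex.exp (2 * Real.pi * Complex.I / r) = 1 := by
    have := hp.val_toRootsOfUnity_coe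
    rw [h] at this
    simpa using this.symm
  have := hp.pow_eq_one_iff_dvd 1
  simp [h3] at this
  omega

variable {r : ℕ} {I : Type} [MulAction (mu r) I]

lemma mem_zdot {ζ : mu r} {J : Set I} {x : I} : x ∈ zdot ζ J ↔ ζ⁻¹ • x ∈ J := by
  constructor
  · rintro ⟨y, hy, rfl⟩; simpa using hy
  · intro h; exact ⟨ζ⁻¹ • x, h, by simp⟩

lemma zdot_zdot (ζ η : mu r) (J : Set I) : zdot ζ (zdot η J) = zdot (ζ * η) J := by
  simp [zdot, Set.image_image, mul_smul]

@[simp] lemma zdot_one (J : Set I) : zdot (1 : mu r) J = J := by simp [zdot]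

@[simp] lemma zdot_zdot_inv (ζ : mu r) (J : Set I) : zdot ζ (zdot ζ⁻¹ J) = J := by
  rw [zdot_zdot]; simp

@[simp] lemma zdot_inv_zdot (ζ : mu r) (J : Set I) : zdot ζ⁻¹ (zdot ζ J) = J := by
  rw [zdot_zdot]; simp

lemma zdot_eq_iff {ζ : mu r} {J K : Set I} : zdot ζ J = K ↔ J = zdot ζ⁻¹ K := by
  constructor
  · rintro rfl; simp
  · rintro rfl; simp

lemma zdot_mono {ζ : mu r} {J K : Set I} (h : J ⊆ K) : zdot ζ J ⊆ zdot ζ K :=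
  Set.image_mono h

lemma zdot_subset_iff {ζ : mu r} {J K : Set I} : zdot ζ J ⊆ zdot ζ K ↔ J ⊆ K := by
  constructor
  · intro h
    have := zdot_mono (ζ := ζ⁻¹) h
    simpa using this
  · exact zdot_mono

lemma zdot_inj {ζ : mu r} {J K : Set I} (h : zdot ζ J = zdot ζ K) : J = K := by
  have := congrArg (zdot ζ⁻¹) h
  simpa using this

lemma zdot_ssubset_iff {ζ : mu r} {J K : Set I} : zdot ζ J ⊂ zdot ζ K ↔ J ⊂ K := by
  simp only [Set.ssubset_def, zdot_subset_iff]

@[simp] lemma zdot_univ (ζ : mu r) : zdot ζ (Set.univ : Set I) = Set.univ := by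
  ext x
  simp only [Set.mem_univ, iff_true]
  exact mem_zdot.mpr (Set.mem_univ _)

@[simp] lemma zdot_empty (ζ : mu r) : zdot ζ (∅ : Set I) = ∅ := by simp [zdot]

lemma zdot_nonempty {ζ : mu r} {J : Set I} : (zdot ζ J).Nonempty ↔ J.Nonempty :=
  Set.image_nonempty

lemma zdot_disjoint {ζ : mu r} {J K : Set I} :
    Disjoint (zdot ζ J) (zdot ζ K) ↔ Disjoint J K := by
  unfold zdot
  exact Set.disjoint_image_iff (MulAction.injective ζ)

lemma zdot_singleton (ζ : mu r) (i : I) : zdot ζ ({i} : Set I) = {ζ • i} := by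
  simp [zdot]

lemma isFixedSet_of_forall {J : Set I} (h : ∀ ζ : mu r, ∀ x ∈ J, ζ • x ∈ J) :
    IsFixedSet r J := by
  intro ζ
  apply Set.Subset.antisymm
  · rintro x ⟨y, hy, rfl⟩; exact h ζ y hy
  · intro x hx
    exact mem_zdot.mpr (h ζ⁻¹ x hx)

lemma isFixedSet_zdot_iff {ζ : mu r} {J : Set I} :
    IsFixedSet r (zdot ζ J) ↔ IsFixedSet r J := by
  constructor
  · intro h η
    have h1 := congrArg (zdot ζ⁻¹) (h η)
    rw [zdot_zdot, zdot_zdot, show ζ⁻¹ * η * ζ = η by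
      rw [mul_assoc, mul_comm η ζ, ← mul_assoc, inv_mul_cancel, one_mul]] at h1
    simpa using h1
  · intro h η
    rw [zdot_zdot, mul_comm, ← zdot_zdot, h η]

lemma isFixedSet_univ : IsFixedSet r (Set.univ : Set I) := fun ζ => zdot_univ ζ

lemma exists_child_above {F : Set (Set I)} [Fintype I] {K R : Set I}
    (hK : K ∈ F) (hKR : K ⊂ R) : ∃ C, IsChild F C R ∧ K ⊆ C := by
  have hfin : {L | L ∈ F ∧ K ⊆ L ∧ L ⊂ R}.Finite := Set.toFinite _
  obtain ⟨M, hM, hmax⟩ := hfin.exists_maximalFor id _ ⟨K, hK, subset_rfl, hKR⟩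
  exact ⟨M, ⟨hM.1, hM.2.2, fun L hL hLR hML =>
    Set.Subset.antisymm (hmax ⟨hL, hM.2.1.trans hML, hLR⟩ hML) hML⟩, hM.2.1⟩

lemma child_disjoint {F : Set (Set I)} (hlam : IsLaminar F) {C D K : Set I}
    (hC : IsChild F C K) (hD : IsChild F D K) (hne : C ≠ D) : Disjoint C D := by
  rcases hlam C hC.1 D hD.1 with h | h | h
  · exact absurd (hC.2.2 D hD.1 hD.2.1 h) (fun e => hne e.symm)
  · exact absurd (hD.2.2 C hC.1 hC.2.1 h) hne
  · exact h

lemma isChild_zdot {F : Set (Set I)} (hstab : ∀ ζ : mu r, ∀ J ∈ F, zdot ζ J ∈ F)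
    {C K : Set I} (ζ : mu r) (h : IsChild F C K) : IsChild F (zdot ζ C) (zdot ζ K) := by
  refine ⟨hstab ζ C h.1, zdot_ssubset_iff.mpr h.2.1, ?_⟩
  intro L hL hLK hCL
  have hL' : zdot ζ⁻¹ L ∈ F := hstab ζ⁻¹ L hL
  have h1 : zdot ζ⁻¹ L ⊂ K := by
    have := (zdot_ssubset_iff (ζ := ζ⁻¹)).mpr hLK
    simpa using this
  have h2 : C ⊆ zdot ζ⁻¹ L := by
    have := zdot_mono (ζ := ζ⁻¹) hCL
    simpa using this
  have h3 := h.2.2 _ hL' h1 h2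
  have := congrArg (zdot ζ) h3
  simpa using this

lemma isChild_restrict {F : Set (Set I)} {C₀ C K : Set I} (hK : K ⊆ C₀) :
    IsChild {L | L ∈ F ∧ L ⊆ C₀} C K ↔ IsChild F C K := by
  constructor
  · rintro ⟨hC, hCK, hmax⟩
    exact ⟨hC.1, hCK, fun L hL hLK hCL => hmax L ⟨hL, hLK.1.trans hK⟩ hLK hCL⟩
  · rintro ⟨hC, hCK, hmax⟩
    exact ⟨⟨hC, hCK.1.trans hK⟩, hCK, fun L hL hLK hCL => hmax L hL.1 hLK hCL⟩

lemma restrict_hierarchy {S : Set I} {F : Set (Set I)} (hH : IsHierarchyOn S F)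
    {C : Set I} (hC : C ∈ F) : IsHierarchyOn C {K | K ∈ F ∧ K ⊆ C} := by
  obtain ⟨h1, h2, h3, h4, h5⟩ := hH
  refine ⟨fun J hJ => ⟨(h1 J hJ.1).1, hJ.2⟩, fun i hi => ⟨h2 i ((h1 C hC).2 hi), by simpa⟩,
    ⟨hC, subset_rfl⟩, ?_, ?_⟩
  · intro J hJ K hK
    exact h4 J hJ.1 K hK.1
  · intro K hK J hJ hJK hall
    exact h5 K hK.1 J hJ.1 hJK (fun L hL hLK => hall L ⟨hL, hLK.1.trans hK.2⟩ hLK)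

end StaGlue

/-- The data `(I₁, T', π, (T_J)_{J∈π})` of Statement 9: an ordered decomposition
`I = I₁ ⊔ I₂` into `μ_r`-stable subsets with `I₂ = I₁ᶜ ≠ ∅`; a tree `T' ∈ T(r,I₁)`
(the empty datum if `I₁ = ∅`); a partition `π` of `I₂` preserved by `μ_r` with `μ_r`
acting freely on the set of parts; and an equivariant family of trees `T_J ∈ T(1,J)`
(normalized by `T_J = ∅` for `J ∉ π`). -/
def glueDataR (r : ℕ) (I : Type) [MulAction (mu r) I] :
    Set ((Set I) × (Set (Set I)) × (Set (Set I)) × (Set I → Set (Set I))) :=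
  {q | (∀ (ζ : mu r) (x : I), x ∈ q.1 → ζ • x ∈ q.1) ∧ q.1 ≠ Set.univ ∧
    ((q.1 = ∅ ∧ q.2.1 = ∅) ∨ (q.1.Nonempty ∧ IsTrHierarchyOn r q.1 q.2.1)) ∧
    (∀ J ∈ q.2.2.1, (J : Set I).Nonempty) ∧ (q.2.2.1 : Set (Set I)).PairwiseDisjoint id ∧
    ⋃₀ q.2.2.1 = q.1ᶜ ∧
    (∀ ζ : mu r, ∀ J ∈ q.2.2.1, zdot ζ J ∈ q.2.2.1) ∧
    (∀ J ∈ q.2.2.1, ∀ ζ : mu r, zdot ζ J = J → ζ = 1) ∧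
    (∀ J ∈ q.2.2.1, IsHierarchyOn J (q.2.2.2 J)) ∧ (∀ J ∉ q.2.2.1, q.2.2.2 J = ∅) ∧
    (∀ ζ : mu r, ∀ J ∈ q.2.2.1, q.2.2.2 (zdot ζ J) = (Set.image (ζ • ·)) '' (q.2.2.2 J))}

/-- The gluing map of Statement 9: the root of `T'` is joined to the root of the tree
whose root has the trees `T_J` hanging below it, and the latter becomes the root. -/
def glueR {r : ℕ} {I : Type} [MulAction (mu r) I]
    (q : (Set I) × (Set (Set I)) × (Set (Set I)) × (Set I → Set (Set I))) : Set (Set I) :=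
  insert Set.univ (q.2.1 ∪ ⋃ J ∈ q.2.2.1, q.2.2.2 J)

namespace StaGlue

variable {r : ℕ} {I : Type} [MulAction (mu r) I]

lemma mem_glueR_iff {q : (Set I) × (Set (Set I)) × (Set (Set I)) × (Set I → Set (Set I))}
    {K : Set I} :
    K ∈ glueR (r := r) q ↔ K = Set.univ ∨ K ∈ q.2.1 ∨ ∃ J ∈ q.2.2.1, K ∈ q.2.2.2 J := by
  simp [glueR]

lemma block_ne_univ {π : Set (Set I)}
    (hπfree : ∀ J ∈ π, ∀ ζ : mu r, zdot ζ J = J → ζ = 1) (hζ : ∃ ζ : mu r, ζ ≠ 1)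
    {J : Set I} (hJ : J ∈ π) : J ≠ Set.univ := by
  rintro rfl
  obtain ⟨ζ, hζ1⟩ := hζ
  exact hζ1 (hπfree _ hJ ζ (zdot_univ ζ))

lemma glueR_mem_target [Nonempty I]
    {q : (Set I) × (Set (Set I)) × (Set (Set I)) × (Set I → Set (Set I))}
    (hζ : ∃ ζ : mu r, ζ ≠ 1) (hq : q ∈ glueDataR r I) :
    IsTrHierarchyOn r (Set.univ : Set I) (glueR (r := r) q) := by
  obtain ⟨I₁, F', π, T⟩ := q
  obtain ⟨hstab1, hne_univ, hF'case, hπne, hπdisj, hπunion, hπstab, hπfree, hT, hT0, hTeq⟩ := hq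
  simp only at hstab1 hne_univ hF'case hπne hπdisj hπunion hπstab hπfree hT hT0 hTeq
  have hmem : ∀ K : Set I, K ∈ glueR (r := r) (I₁, F', π, T) ↔
      K = Set.univ ∨ K ∈ F' ∨ ∃ J ∈ π, K ∈ T J := fun K => mem_glueR_iff
  have hF'sub : ∀ K ∈ F', K.Nonempty ∧ K ⊆ I₁ := by
    rcases hF'case with ⟨h1, h2⟩ | ⟨h1, h2⟩
    · intro K hK; rw [h2] at hK; exact absurd hK (Set.notMem_empty K)
    · exact h2.1.1
  have hTsub : ∀ J ∈ π, ∀ K ∈ T J, K.Nonempty ∧ K ⊆ J := fun J hJ => (hT J hJ).1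
  have hJsub : ∀ J ∈ π, J ⊆ I₁ᶜ := by
    intro J hJ
    rw [← hπunion]
    exact Set.subset_sUnion_of_mem hJ
  have hπne' : π.Nonempty := by
    have h1 : (I₁ᶜ).Nonempty := Set.nonempty_compl.mpr hne_univ
    rw [← hπunion] at h1
    obtain ⟨x, J, hJ, _⟩ := h1
    exact ⟨J, hJ⟩
  have hJmem : ∀ J ∈ π, J ∈ glueR (r := r) (I₁, F', π, T) := by
    intro J hJ
    exact (hmem J).2 (Or.inr (Or.inr ⟨J, hJ, (hT J hJ).2.2.1⟩))
  have hI₁fix : IsFixedSet r I₁ := isFixedSet_of_forall hstab1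
  have hJne_univ : ∀ J ∈ π, J ≠ Set.univ := fun J hJ => block_ne_univ hπfree hζ hJ
  have hJnonfix : ∀ J ∈ π, ¬IsFixedSet r J := by
    intro J hJ h
    obtain ⟨ζ, hζ1⟩ := hζ
    exact hζ1 (hπfree J hJ ζ (h ζ))
  have hF'mem : ∀ K ∈ F', K ∈ glueR (r := r) (I₁, F', π, T) :=
    fun K hK => (hmem K).2 (Or.inr (Or.inl hK))
  have hTmem : ∀ J ∈ π, ∀ K ∈ T J, K ∈ glueR (r := r) (I₁, F', π, T) :=
    fun J hJ K hK => (hmem K).2 (Or.inr (Or.inr ⟨J, hJ, hK⟩))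
  have hdisjF'T : ∀ K ∈ F', ∀ J ∈ π, ∀ L ∈ T J, Disjoint K L := by
    intro K hK J hJ L hL
    exact Set.disjoint_of_subset (hF'sub K hK).2 ((hTsub J hJ L hL).2.trans (hJsub J hJ))
      (disjoint_compl_right : Disjoint I₁ I₁ᶜ)
  have hsubF' : ∀ K ∈ F', ∀ L ∈ glueR (r := r) (I₁, F', π, T), L ⊂ K → L ∈ F' := by
    intro K hK L hL hLK
    rcases (hmem L).1 hL with rfl | hL' | ⟨J₀, hJ₀, hL'⟩
    · exact absurd (Set.subset_univ K) hLK.2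
    · exact hL'
    · exfalso
      have h1 : L ⊆ I₁ := hLK.1.trans (hF'sub K hK).2
      have h2 : L ⊆ I₁ᶜ := (hTsub J₀ hJ₀ L hL').2.trans (hJsub J₀ hJ₀)
      obtain ⟨x, hx⟩ := (hTsub J₀ hJ₀ L hL').1
      exact (h2 hx) (h1 hx)
  have hsubT : ∀ J ∈ π, ∀ K ∈ T J, ∀ L ∈ glueR (r := r) (I₁, F', π, T), L ⊂ K → L ∈ T J := by
    intro J hJ K hK L hL hLK
    rcases (hmem L).1 hL with rfl | hL' | ⟨J₀, hJ₀, hL'⟩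
    · exact absurd (Set.subset_univ K) hLK.2
    · exfalso
      have h1 : L ⊆ I₁ := (hF'sub L hL').2
      have h2 : L ⊆ I₁ᶜ := (hLK.1.trans (hTsub J hJ K hK).2).trans (hJsub J hJ)
      obtain ⟨x, hx⟩ := (hF'sub L hL').1
      exact (h2 hx) (h1 hx)
    · rcases eq_or_ne J₀ J with rfl | hne
      · exact hL'
      · exfalso
        have h1 : L ⊆ J₀ := (hTsub J₀ hJ₀ L hL').2
        have h2 : L ⊆ J := hLK.1.trans (hTsub J hJ K hK).2
        obtain ⟨x, hx⟩ := (hTsub J₀ hJ₀ L hL').1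
        exact Set.disjoint_left.1 (hπdisj hJ₀ hJ hne) (h1 hx) (h2 hx)
  have hchild_F' : ∀ K ∈ F', ∀ C : Set I,
      IsChild (glueR (r := r) (I₁, F', π, T)) C K ↔ IsChild F' C K := by
    intro K hK C
    constructor
    · rintro ⟨hC, hCK, hmax⟩
      exact ⟨hsubF' K hK C hC hCK, hCK,
        fun L hL hLK hCL => hmax L (hF'mem L hL) hLK hCL⟩
    · rintro ⟨hC, hCK, hmax⟩
      exact ⟨hF'mem C hC, hCK,
        fun L hL hLK hCL => hmax L (hsubF' K hK L hL hLK) hLK hCL⟩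
  have hnofixT : ∀ J ∈ π, ∀ K ∈ T J, ¬IsFixedSet r K := by
    intro J hJ K hK hfix
    obtain ⟨ζ, hζ1⟩ := hζ
    have h1 : K ⊆ J := (hTsub J hJ K hK).2
    have h2 : K ⊆ zdot ζ J := by
      rw [← hfix ζ]; exact zdot_mono h1
    have h3 : zdot ζ J ≠ J := fun h => hζ1 (hπfree J hJ ζ h)
    have h4 : Disjoint (zdot ζ J) J := hπdisj (hπstab ζ J hJ) hJ h3
    obtain ⟨x, hx⟩ := (hTsub J hJ K hK).1
    exact Set.disjoint_left.1 h4 (h2 hx) (h1 hx)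
  constructor
  · -- IsHierarchyOn
    refine ⟨?_, ?_, ?_, ?_, ?_⟩
    · intro K hK
      rcases (hmem K).1 hK with rfl | hK' | ⟨J, hJ, hK'⟩
      · exact ⟨Set.univ_nonempty, subset_rfl⟩
      · exact ⟨(hF'sub K hK').1, Set.subset_univ K⟩
      · exact ⟨(hTsub J hJ K hK').1, Set.subset_univ K⟩
    · intro i _
      by_cases hi : i ∈ I₁
      · rcases hF'case with ⟨h1, _⟩ | ⟨_, h2⟩
        · rw [h1] at hi; exact absurd hi (Set.notMem_empty i)
        · exact hF'mem _ (h2.1.2.1 i hi)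
      · have : i ∈ ⋃₀ π := by rw [hπunion]; exact hi
        obtain ⟨J, hJ, hiJ⟩ := this
        exact hTmem J hJ _ ((hT J hJ).2.1 i hiJ)
    · exact (hmem _).2 (Or.inl rfl)
    · -- laminar
      have hF'lam : IsLaminar F' := by
        rcases hF'case with ⟨_, h2⟩ | ⟨_, h2⟩
        · rw [h2]; intro J hJ; exact absurd hJ (Set.notMem_empty J)
        · exact h2.1.2.2.2.1
      intro A hA B hB
      rcases (hmem A).1 hA with rfl | hA' | ⟨J, hJ, hA'⟩
      · right; left; exact Set.subset_univ B
      · rcases (hmem B).1 hB with rfl | hB' | ⟨J', hJ', hB'⟩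
        · left; exact Set.subset_univ A
        · exact hF'lam A hA' B hB'
        · right; right; exact hdisjF'T A hA' J' hJ' B hB'
      · rcases (hmem B).1 hB with rfl | hB' | ⟨J', hJ', hB'⟩
        · left; exact Set.subset_univ A
        · right; right; exact (hdisjF'T B hB' J hJ A hA').symm
        · rcases eq_or_ne J J' with rfl | hne
          · exact (hT J hJ).2.2.2.1 A hA' B hB'
          · right; right
            exact Set.disjoint_of_subset (hTsub J hJ A hA').2 (hTsub J' hJ' B hB').2
              (hπdisj hJ hJ' hne)
    · -- no unique child
      intro K hK J₁ hJ₁ hssub hall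
      rcases (hmem K).1 hK with rfl | hK' | ⟨J, hJ, hK'⟩
      · -- K = univ
        rcases (hmem J₁).1 hJ₁ with rfl | hJ₁' | ⟨J₀, hJ₀, hJ₁'⟩
        · exact hssub.2 hssub.1
        · -- J₁ ∈ F'
          obtain ⟨J, hJ⟩ := hπne'
          have h1 : J ⊆ J₁ := hall J (hJmem J hJ)
            (Set.ssubset_univ_iff.mpr (hJne_univ J hJ))
          obtain ⟨x, hx⟩ := hπne J hJ
          exact (hJsub J hJ hx) ((hF'sub J₁ hJ₁').2 (h1 hx))
        · -- J₁ ∈ T J₀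
          rcases hF'case with ⟨hI₁e, _⟩ | ⟨hI₁ne, h2⟩
          · obtain ⟨ζ, hζ1⟩ := hζ
            have hJ' : zdot ζ J₀ ∈ π := hπstab ζ J₀ hJ₀
            have h1 : zdot ζ J₀ ⊆ J₁ := hall _ (hJmem _ hJ')
              (Set.ssubset_univ_iff.mpr (hJne_univ _ hJ'))
            have h2 : zdot ζ J₀ ⊆ J₀ := h1.trans (hTsub J₀ hJ₀ J₁ hJ₁').2
            have h3 : zdot ζ J₀ ≠ J₀ := fun h => hζ1 (hπfree J₀ hJ₀ ζ h)
            obtain ⟨x, hx⟩ := (zdot_nonempty (ζ := ζ)).2 (hπne J₀ hJ₀)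
            exact Set.disjoint_left.1 (hπdisj hJ' hJ₀ h3) hx (h2 hx)
          · have h1 : I₁ ⊆ J₁ := hall I₁ (hF'mem I₁ h2.1.2.2.1)
              (Set.ssubset_univ_iff.mpr hne_univ)
            obtain ⟨x, hx⟩ := hI₁ne
            exact (hJsub J₀ hJ₀ ((hTsub J₀ hJ₀ J₁ hJ₁').2 (h1 hx))) hx
      · -- K ∈ F'
        have hJ₁F' : J₁ ∈ F' := hsubF' K hK' J₁ hJ₁ hssub
        rcases hF'case with ⟨_, h2⟩ | ⟨_, h2⟩
        · rw [h2] at hK'; exact absurd hK' (Set.notMem_empty K)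
        · exact h2.1.2.2.2.2 K hK' J₁ hJ₁F' hssub
            (fun L hL hLK => hall L (hF'mem L hL) hLK)
      · -- K ∈ T J
        have hJ₁T : J₁ ∈ T J := hsubT J hJ K hK' J₁ hJ₁ hssub
        exact (hT J hJ).2.2.2.2 K hK' J₁ hJ₁T hssub
          (fun L hL hLK => hall L (hTmem J hJ L hL) hLK)
  refine ⟨?_, ?_, ?_⟩
  · -- stability
    intro ζ K hK
    rcases (hmem K).1 hK with rfl | hK' | ⟨J, hJ, hK'⟩
    · rw [zdot_univ]; exact (hmem _).2 (Or.inl rfl)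
    · rcases hF'case with ⟨_, h2⟩ | ⟨_, h2⟩
      · rw [h2] at hK'; exact absurd hK' (Set.notMem_empty K)
      · exact hF'mem _ (h2.2.1 ζ K hK')
    · refine hTmem _ (hπstab ζ J hJ) _ ?_
      rw [hTeq ζ J hJ]
      exact ⟨K, hK', rfl⟩
  · -- cond 3
    intro K hK hKfix C C' hC hC' hCfix hC'fix
    have hchild_univ : ∀ D : Set I, IsChild (glueR (r := r) (I₁, F', π, T)) D Set.univ →
        (I₁.Nonempty ∧ D = I₁) ∨ D ∈ π := by
      intro D hD
      rcases (hmem D).1 hD.1 with rfl | hD' | ⟨J, hJ, hD'⟩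
      · exact absurd (subset_refl _) hD.2.1.2
      · rcases hF'case with ⟨_, h2⟩ | ⟨hI₁ne, h2⟩
        · rw [h2] at hD'; exact absurd hD' (Set.notMem_empty D)
        · left
          refine ⟨hI₁ne, ?_⟩
          exact (hD.2.2 I₁ (hF'mem I₁ h2.1.2.2.1)
            (Set.ssubset_univ_iff.mpr hne_univ) (hF'sub D hD').2).symm
      · right
        have := hD.2.2 J (hJmem J hJ) (Set.ssubset_univ_iff.mpr (hJne_univ J hJ))
          (hTsub J hJ D hD').2
        rw [← this]; exact hJ
    rcases (hmem K).1 hK with rfl | hK' | ⟨J, hJ, hK'⟩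
    · rcases hchild_univ C hC with ⟨_, rfl⟩ | hCπ
      · rcases hchild_univ C' hC' with ⟨_, rfl⟩ | hC'π
        · rfl
        · exact absurd hC'fix (hJnonfix _ hC'π)
      · exact absurd hCfix (hJnonfix _ hCπ)
    · rcases hF'case with ⟨_, h2⟩ | ⟨_, h2⟩
      · rw [h2] at hK'; exact absurd hK' (Set.notMem_empty K)
      · exact h2.2.2.1 K hK' hKfix C C' ((hchild_F' K hK' C).1 hC)
          ((hchild_F' K hK' C').1 hC') hCfix hC'fix
    · exact absurd hKfix (hnofixT J hJ K hK')
  · -- cond 4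
    intro K hK hKfix C hC hCnonfix ζ hζC
    have hchild_univ : ∀ D : Set I, IsChild (glueR (r := r) (I₁, F', π, T)) D Set.univ →
        (I₁.Nonempty ∧ D = I₁) ∨ D ∈ π := by
      intro D hD
      rcases (hmem D).1 hD.1 with rfl | hD' | ⟨J, hJ, hD'⟩
      · exact absurd (subset_refl _) hD.2.1.2
      · rcases hF'case with ⟨_, h2⟩ | ⟨hI₁ne, h2⟩
        · rw [h2] at hD'; exact absurd hD' (Set.notMem_empty D)
        · left
          refine ⟨hI₁ne, ?_⟩
          exact (hD.2.2 I₁ (hF'mem I₁ h2.1.2.2.1)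
            (Set.ssubset_univ_iff.mpr hne_univ) (hF'sub D hD').2).symm
      · right
        have := hD.2.2 J (hJmem J hJ) (Set.ssubset_univ_iff.mpr (hJne_univ J hJ))
          (hTsub J hJ D hD').2
        rw [← this]; exact hJ
    rcases (hmem K).1 hK with rfl | hK' | ⟨J, hJ, hK'⟩
    · rcases hchild_univ C hC with ⟨_, rfl⟩ | hCπ
      · exact absurd hI₁fix hCnonfix
      · exact hπfree C hCπ ζ hζC
    · rcases hF'case with ⟨_, h2⟩ | ⟨_, h2⟩
      · rw [h2] at hK'; exact absurd hK' (Set.notMem_empty K)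
      · exact h2.2.2.2 K hK' hKfix C ((hchild_F' K hK' C).1 hC) hCnonfix ζ hζC
    · exact absurd hKfix (hnofixT J hJ K hK')

end StaGlue


namespace StaGlue

variable {r : ℕ} {I : Type} [MulAction (mu r) I]

/-- The fixed child of the root (or `∅`). -/
def fixedRoot (r : ℕ) {I : Type} [MulAction (mu r) I] (F : Set (Set I)) : Set I :=
  ⋃₀ {C | IsChild F C Set.univ ∧ IsFixedSet r C}

/-- The inverse of the gluing map. -/
def unglue (r : ℕ) {I : Type} [MulAction (mu r) I] (F : Set (Set I)) :
    (Set I) × (Set (Set I)) × (Set (Set I)) × (Set I → Set (Set I)) :=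
  (fixedRoot r F, {K | K ∈ F ∧ K ⊆ fixedRoot r F},
   {C | IsChild F C Set.univ ∧ ¬IsFixedSet r C},
   fun J => if IsChild F J Set.univ ∧ ¬IsFixedSet r J then {K | K ∈ F ∧ K ⊆ J} else ∅)

lemma isChild_univ_zdot {F : Set (Set I)} (hstab : ∀ ζ : mu r, ∀ J ∈ F, zdot ζ J ∈ F)
    {C : Set I} (ζ : mu r) (h : IsChild F C Set.univ) : IsChild F (zdot ζ C) Set.univ := by
  have := isChild_zdot hstab ζ h
  rwa [zdot_univ] at this

lemma fixedRoot_spec {F : Set (Set I)} (hF : IsTrHierarchyOn r Set.univ F) :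
    (fixedRoot r F = ∅ ∧ {C | IsChild F C Set.univ ∧ IsFixedSet r C} = (∅ : Set (Set I))) ∨
    (IsChild F (fixedRoot r F) Set.univ ∧ IsFixedSet r (fixedRoot r F) ∧
      {C | IsChild F C Set.univ ∧ IsFixedSet r C} = {fixedRoot r F}) := by
  by_cases hex : ∃ C, IsChild F C Set.univ ∧ IsFixedSet r C
  · obtain ⟨C₀, hC₀, hC₀fix⟩ := hex
    have hset : {C | IsChild F C Set.univ ∧ IsFixedSet r C} = {C₀} := by
      ext D
      constructor
      · rintro ⟨hD, hDfix⟩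
        exact hF.2.2.1 Set.univ hF.1.2.2.1 isFixedSet_univ D C₀ hD hC₀ hDfix hC₀fix
      · rintro rfl
        exact ⟨hC₀, hC₀fix⟩
    have hroot : fixedRoot r F = C₀ := by
      rw [fixedRoot, hset, Set.sUnion_singleton]
    right
    rw [hroot, hset]
    exact ⟨hC₀, hC₀fix, rfl⟩
  · left
    have hset : {C | IsChild F C Set.univ ∧ IsFixedSet r C} = (∅ : Set (Set I)) := by
      ext D
      simp only [Set.mem_setOf_eq, Set.mem_empty_iff_false, iff_false]
      exact fun h => hex ⟨D, h⟩
    rw [fixedRoot, hset]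
    simp

lemma mem_child_of_ne_univ [Fintype I] {F : Set (Set I)} {K : Set I}
    (hK : K ∈ F) (hne : K ≠ Set.univ) : ∃ C, IsChild F C Set.univ ∧ K ⊆ C :=
  exists_child_above hK ⟨Set.subset_univ K, fun h => hne (Set.univ_subset_iff.1 h)⟩

lemma unglue_mem_glueData [Fintype I] [Nonempty I] {F : Set (Set I)}
    (hsing : ∀ i : I, ({i} : Set I) ≠ Set.univ)
    (hF : IsTrHierarchyOn r Set.univ F) : unglue r F ∈ glueDataR r I := by
  obtain ⟨⟨h1, h2, h3, h4, h5⟩, hstab, hc3, hc4⟩ := hF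
  have hFtr : IsTrHierarchyOn r Set.univ F := ⟨⟨h1, h2, h3, h4, h5⟩, hstab, hc3, hc4⟩
  simp only [glueDataR, unglue, Set.mem_setOf_eq]
  refine ⟨?_, ?_, ?_, ?_, ?_, ?_, ?_, ?_, ?_, ?_, ?_⟩
  · -- stability of I₁
    intro ζ x hx
    obtain ⟨C, hC, hxC⟩ := hx
    exact Set.mem_sUnion.2 ⟨C, hC, by rw [← hC.2 ζ]; exact ⟨x, hxC, rfl⟩⟩
  · -- I₁ ≠ univ
    rcases fixedRoot_spec hFtr with ⟨he, _⟩ | ⟨hch, _, _⟩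
    · rw [he]; exact Set.empty_ne_univ
    · exact fun h => hch.2.1.2 (h ▸ subset_rfl)
  · -- tree on I₁
    rcases fixedRoot_spec hFtr with ⟨he, _⟩ | ⟨hch, hfix, _⟩
    · left
      refine ⟨he, ?_⟩
      rw [he]
      ext K
      simp only [Set.mem_setOf_eq, Set.mem_empty_iff_false, iff_false, not_and]
      intro hK hsub
      exact absurd (Set.subset_empty_iff.1 hsub) (Set.nonempty_iff_ne_empty.1 (h1 K hK).1)
    · right
      refine ⟨(h1 _ hch.1).1, ?_, ?_, ?_, ?_⟩
      · exact restrict_hierarchy ⟨h1, h2, h3, h4, h5⟩ hch.1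
      · intro ζ K hK
        refine ⟨hstab ζ K hK.1, ?_⟩
        rw [← hfix ζ]
        exact zdot_mono hK.2
      · intro K hK hKfix C C' hC hC' hCfix hC'fix
        exact hc3 K hK.1 hKfix C C' ((isChild_restrict hK.2).1 hC)
          ((isChild_restrict hK.2).1 hC') hCfix hC'fix
      · intro K hK hKfix C hC hCnonfix ζ hζC
        exact hc4 K hK.1 hKfix C ((isChild_restrict hK.2).1 hC) hCnonfix ζ hζC
  · -- blocks nonempty
    rintro J ⟨hJ, _⟩
    exact (h1 J hJ.1).1
  · -- pairwise disjoint
    rintro A ⟨hA, _⟩ B ⟨hB, _⟩ hne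
    exact child_disjoint h4 hA hB hne
  · -- union = I₁ᶜ
    ext x
    simp only [Set.mem_sUnion, Set.mem_compl_iff, Set.mem_setOf_eq]
    constructor
    · rintro ⟨J, ⟨hJ, hJnonfix⟩, hxJ⟩ hx
      obtain ⟨C, hC, hxC⟩ := hx
      have hne : J ≠ C := by
        rintro rfl
        exact hJnonfix hC.2
      exact Set.disjoint_left.1 (child_disjoint h4 hJ hC.1 hne) hxJ hxC
    · intro hx
      obtain ⟨D, hD, hxD⟩ := mem_child_of_ne_univ (h2 x (Set.mem_univ x)) (hsing x)
      have hDnonfix : ¬IsFixedSet r D := by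
        intro hDfix
        exact hx ⟨D, ⟨hD, hDfix⟩, hxD rfl⟩
      exact ⟨D, ⟨hD, hDnonfix⟩, hxD rfl⟩
  · -- π stability
    rintro ζ J ⟨hJ, hJnonfix⟩
    exact ⟨isChild_univ_zdot hstab ζ hJ, fun h => hJnonfix (isFixedSet_zdot_iff.1 h)⟩
  · -- π freeness
    rintro J ⟨hJ, hJnonfix⟩ ζ hζJ
    exact hc4 Set.univ h3 isFixedSet_univ J hJ hJnonfix ζ hζJ
  · -- T J hierarchy
    rintro J hJ
    rw [if_pos hJ]
    exact restrict_hierarchy ⟨h1, h2, h3, h4, h5⟩ hJ.1.1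
  · -- T J = ∅ off π
    intro J hJ
    rw [if_neg hJ]
  · -- equivariance
    rintro ζ J ⟨hJ, hJnonfix⟩
    have hJ' : IsChild F (zdot ζ J) Set.univ ∧ ¬IsFixedSet r (zdot ζ J) :=
      ⟨isChild_univ_zdot hstab ζ hJ, fun h => hJnonfix (isFixedSet_zdot_iff.1 h)⟩
    rw [if_pos hJ', if_pos (⟨hJ, hJnonfix⟩ : IsChild F J Set.univ ∧ ¬IsFixedSet r J)]
    ext K
    constructor
    · rintro ⟨hK, hKJ⟩
      refine ⟨zdot ζ⁻¹ K, ⟨hstab ζ⁻¹ K hK, ?_⟩, zdot_zdot_inv ζ K⟩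
      have := zdot_mono (ζ := ζ⁻¹) hKJ
      simpa using this
    · rintro ⟨L, ⟨hL, hLJ⟩, rfl⟩
      exact ⟨hstab ζ L hL, zdot_mono hLJ⟩

lemma glueR_unglue [Fintype I] [Nonempty I] {F : Set (Set I)}
    (hsing : ∀ i : I, ({i} : Set I) ≠ Set.univ)
    (hF : IsTrHierarchyOn r Set.univ F) : glueR (r := r) (unglue r F) = F := by
  obtain ⟨⟨h1, h2, h3, h4, h5⟩, hstab, hc3, hc4⟩ := hF
  ext K
  rw [mem_glueR_iff]
  simp only [unglue]
  constructor
  · rintro (rfl | hK | ⟨J, hJ, hK⟩)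
    · exact h3
    · exact hK.1
    · have hJ' : IsChild F J Set.univ ∧ ¬IsFixedSet r J := hJ
      rw [if_pos hJ'] at hK
      exact hK.1
  · intro hK
    rcases eq_or_ne K Set.univ with rfl | hne
    · exact Or.inl rfl
    · obtain ⟨D, hD, hKD⟩ := mem_child_of_ne_univ hK hne
      by_cases hDfix : IsFixedSet r D
      · refine Or.inr (Or.inl ⟨hK, ?_⟩)
        exact hKD.trans (Set.subset_sUnion_of_mem ⟨hD, hDfix⟩)
      · refine Or.inr (Or.inr ⟨D, ⟨hD, hDfix⟩, ?_⟩)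
        rw [if_pos (⟨hD, hDfix⟩ : IsChild F D Set.univ ∧ ¬IsFixedSet r D)]
        exact ⟨hK, hKD⟩

end StaGlue


namespace StaGlue

variable {r : ℕ} {I : Type} [MulAction (mu r) I]

lemma glue_children
    {q : (Set I) × (Set (Set I)) × (Set (Set I)) × (Set I → Set (Set I))}
    (hζ : ∃ ζ : mu r, ζ ≠ 1) (hq : q ∈ glueDataR r I) (D : Set I) :
    IsChild (glueR (r := r) q) D Set.univ ↔ ((q.1.Nonempty ∧ D = q.1) ∨ D ∈ q.2.2.1) := by
  obtain ⟨I₁, F', π, T⟩ := q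
  obtain ⟨hstab1, hne_univ, hF'case, hπne, hπdisj, hπunion, hπstab, hπfree, hT, hT0, hTeq⟩ := hq
  simp only at hstab1 hne_univ hF'case hπne hπdisj hπunion hπstab hπfree hT hT0 hTeq ⊢
  have hmem : ∀ K : Set I, K ∈ glueR (r := r) (I₁, F', π, T) ↔
      K = Set.univ ∨ K ∈ F' ∨ ∃ J ∈ π, K ∈ T J := fun K => mem_glueR_iff
  have hF'sub : ∀ K ∈ F', K.Nonempty ∧ K ⊆ I₁ := by
    rcases hF'case with ⟨h1, h2⟩ | ⟨h1, h2⟩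
    · intro K hK; rw [h2] at hK; exact absurd hK (Set.notMem_empty K)
    · exact h2.1.1
  have hTsub : ∀ J ∈ π, ∀ K ∈ T J, K.Nonempty ∧ K ⊆ J := fun J hJ => (hT J hJ).1
  have hJsub : ∀ J ∈ π, J ⊆ I₁ᶜ := by
    intro J hJ
    rw [← hπunion]
    exact Set.subset_sUnion_of_mem hJ
  have hJmem : ∀ J ∈ π, J ∈ glueR (r := r) (I₁, F', π, T) := by
    intro J hJ
    exact (hmem J).2 (Or.inr (Or.inr ⟨J, hJ, (hT J hJ).2.2.1⟩))
  have hJne_univ : ∀ J ∈ π, J ≠ Set.univ := fun J hJ => block_ne_univ hπfree hζ hJ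
  have hF'mem : ∀ K ∈ F', K ∈ glueR (r := r) (I₁, F', π, T) :=
    fun K hK => (hmem K).2 (Or.inr (Or.inl hK))
  constructor
  · intro hD
    rcases (hmem D).1 hD.1 with rfl | hD' | ⟨J, hJ, hD'⟩
    · exact absurd (subset_refl _) hD.2.1.2
    · rcases hF'case with ⟨_, h2⟩ | ⟨hI₁ne, h2⟩
      · rw [h2] at hD'; exact absurd hD' (Set.notMem_empty D)
      · left
        exact ⟨hI₁ne, (hD.2.2 I₁ (hF'mem I₁ h2.1.2.2.1)
          (Set.ssubset_univ_iff.mpr hne_univ) (hF'sub D hD').2).symm⟩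
    · right
      have := hD.2.2 J (hJmem J hJ) (Set.ssubset_univ_iff.mpr (hJne_univ J hJ))
        (hTsub J hJ D hD').2
      rw [← this]; exact hJ
  · rintro (⟨hI₁ne, rfl⟩ | hDπ)
    · rcases hF'case with ⟨h1, _⟩ | ⟨_, h2⟩
      · exact absurd (h1 ▸ hI₁ne) (Set.not_nonempty_empty)
      · refine ⟨hF'mem D h2.1.2.2.1, Set.ssubset_univ_iff.mpr hne_univ, ?_⟩
        intro L hL hLuniv hDL
        rcases (hmem L).1 hL with rfl | hL' | ⟨J, hJ, hL'⟩
        · exact absurd rfl (Set.ssubset_univ_iff.1 hLuniv)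
        · exact Set.Subset.antisymm (hF'sub L hL').2 hDL
        · exfalso
          obtain ⟨x, hx⟩ := hI₁ne
          exact hJsub J hJ ((hTsub J hJ L hL').2 (hDL hx)) hx
    · refine ⟨hJmem D hDπ, Set.ssubset_univ_iff.mpr (hJne_univ D hDπ), ?_⟩
      intro L hL hLuniv hDL
      rcases (hmem L).1 hL with rfl | hL' | ⟨J, hJ, hL'⟩
      · exact absurd rfl (Set.ssubset_univ_iff.1 hLuniv)
      · exfalso
        obtain ⟨x, hx⟩ := hπne D hDπ
        exact hJsub D hDπ hx ((hF'sub L hL').2 (hDL hx))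
      · have hDJ : D = J := by
          by_contra hne
          obtain ⟨x, hx⟩ := hπne D hDπ
          exact Set.disjoint_left.1 (hπdisj hDπ hJ hne) hx ((hTsub J hJ L hL').2 (hDL hx))
        subst hDJ
        exact Set.Subset.antisymm (hTsub D hDπ L hL').2 hDL
    
lemma unglue_glueR [Nonempty I]
    {q : (Set I) × (Set (Set I)) × (Set (Set I)) × (Set I → Set (Set I))}
    (hζ : ∃ ζ : mu r, ζ ≠ 1) (hq : q ∈ glueDataR r I) :
    unglue r (glueR (r := r) q) = q := by
  have hch := glue_children hζ hq
  obtain ⟨I₁, F', π, T⟩ := q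
  obtain ⟨hstab1, hne_univ, hF'case, hπne, hπdisj, hπunion, hπstab, hπfree, hT, hT0, hTeq⟩ := hq
  simp only at hstab1 hne_univ hF'case hπne hπdisj hπunion hπstab hπfree hT hT0 hTeq hch
  set G := glueR (r := r) (I₁, F', π, T) with hG
  have hmem : ∀ K : Set I, K ∈ G ↔
      K = Set.univ ∨ K ∈ F' ∨ ∃ J ∈ π, K ∈ T J := fun K => mem_glueR_iff
  have hF'sub : ∀ K ∈ F', K.Nonempty ∧ K ⊆ I₁ := by
    rcases hF'case with ⟨h1, h2⟩ | ⟨h1, h2⟩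
    · intro K hK; rw [h2] at hK; exact absurd hK (Set.notMem_empty K)
    · exact h2.1.1
  have hTsub : ∀ J ∈ π, ∀ K ∈ T J, K.Nonempty ∧ K ⊆ J := fun J hJ => (hT J hJ).1
  have hJsub : ∀ J ∈ π, J ⊆ I₁ᶜ := by
    intro J hJ
    rw [← hπunion]
    exact Set.subset_sUnion_of_mem hJ
  have hJne_univ : ∀ J ∈ π, J ≠ Set.univ := fun J hJ => block_ne_univ hπfree hζ hJ
  have hI₁fix : IsFixedSet r I₁ := isFixedSet_of_forall hstab1
  have hJnonfix : ∀ J ∈ π, ¬IsFixedSet r J := by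
    intro J hJ h
    obtain ⟨ζ, hζ1⟩ := hζ
    exact hζ1 (hπfree J hJ ζ (h ζ))
  have hF'mem : ∀ K ∈ F', K ∈ G := fun K hK => (hmem K).2 (Or.inr (Or.inl hK))
  have hTmem : ∀ J ∈ π, ∀ K ∈ T J, K ∈ G :=
    fun J hJ K hK => (hmem K).2 (Or.inr (Or.inr ⟨J, hJ, hK⟩))
  have e1 : fixedRoot r G = I₁ := by
    rcases Set.eq_empty_or_nonempty I₁ with hI₁e | hI₁ne
    · have hset : {C | IsChild G C Set.univ ∧ IsFixedSet r C} = (∅ : Set (Set I)) := by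
        ext D
        simp only [Set.mem_setOf_eq, Set.mem_empty_iff_false, iff_false, not_and]
        intro hD hDfix
        rcases (hch D).1 hD with ⟨hne, rfl⟩ | hDπ
        · exact Set.not_nonempty_empty (hI₁e ▸ hne)
        · exact hJnonfix D hDπ hDfix
      rw [fixedRoot, hset, hI₁e]
      simp
    · have hset : {C | IsChild G C Set.univ ∧ IsFixedSet r C} = {I₁} := by
        ext D
        constructor
        · rintro ⟨hD, hDfix⟩
          rcases (hch D).1 hD with ⟨_, rfl⟩ | hDπ
          · rfl
          · exact absurd hDfix (hJnonfix D hDπ)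
        · intro hD
          rw [Set.mem_singleton_iff] at hD
          rw [hD]
          exact ⟨(hch I₁).2 (Or.inl ⟨hI₁ne, rfl⟩), hI₁fix⟩
      rw [fixedRoot, hset, Set.sUnion_singleton]
  have e2 : {K | K ∈ G ∧ K ⊆ I₁} = F' := by
    ext K
    constructor
    · rintro ⟨hK, hsub⟩
      rcases (hmem K).1 hK with rfl | hK' | ⟨J, hJ, hK'⟩
      · exact absurd (Set.univ_subset_iff.1 hsub) hne_univ
      · exact hK'
      · exfalso
        obtain ⟨x, hx⟩ := (hTsub J hJ K hK').1
        exact hJsub J hJ ((hTsub J hJ K hK').2 hx) (hsub hx)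
    · intro hK
      exact ⟨hF'mem K hK, (hF'sub K hK).2⟩
  have e3 : {C | IsChild G C Set.univ ∧ ¬IsFixedSet r C} = π := by
    ext D
    constructor
    · rintro ⟨hD, hDnonfix⟩
      rcases (hch D).1 hD with ⟨_, rfl⟩ | hDπ
      · exact absurd hI₁fix hDnonfix
      · exact hDπ
    · intro hDπ
      exact ⟨(hch D).2 (Or.inr hDπ), hJnonfix D hDπ⟩
  have e4 : (fun J => if IsChild G J Set.univ ∧ ¬IsFixedSet r J
      then {K | K ∈ G ∧ K ⊆ J} else ∅) = T := by
    funext J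
    by_cases hJπ : J ∈ π
    · rw [if_pos ⟨(hch J).2 (Or.inr hJπ), hJnonfix J hJπ⟩]
      ext K
      constructor
      · rintro ⟨hK, hKJ⟩
        rcases (hmem K).1 hK with rfl | hK' | ⟨J', hJ', hK'⟩
        · exact absurd (Set.univ_subset_iff.1 hKJ) (hJne_univ J hJπ)
        · exfalso
          obtain ⟨x, hx⟩ := (hF'sub K hK').1
          exact hJsub J hJπ (hKJ hx) ((hF'sub K hK').2 hx)
        · have hJJ' : J' = J := by
            by_contra hne
            obtain ⟨x, hx⟩ := (hTsub J' hJ' K hK').1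
            exact Set.disjoint_left.1 (hπdisj hJ' hJπ hne) ((hTsub J' hJ' K hK').2 hx) (hKJ hx)
          rw [← hJJ']; exact hK'
      · intro hK
        exact ⟨hTmem J hJπ K hK, (hTsub J hJπ K hK).2⟩
    · rw [if_neg, (hT0 J hJπ)]
      rintro ⟨hD, hDnonfix⟩
      rcases (hch J).1 hD with ⟨_, rfl⟩ | hJπ'
      · exact hDnonfix hI₁fix
      · exact hJπ hJπ'
  simp only [unglue, Prod.mk.injEq]
  exact ⟨e1, by rw [e1]; exact e2, e3, e4⟩

end StaGlue


/--
Let `r ≥ 2` and let `I` be a nonempty finite set with a free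
`μ_r`-action.  Then `T(r,I)` is in natural bijection (given by gluing) with the set of
tuples `(I₁, I₂ = I₁ᶜ, T', π, (T_J)_{J∈π})` described in `glueDataR`.
(Here `T(r,I)` is realized as `{F | IsTrHierarchyOn r univ F}`.)
-/
theorem treesR_glue_bijection (r : ℕ) (hr : 2 ≤ r) (I : Type) [Fintype I]
    [Nonempty I] [MulAction (mu r) I]
    (hfree : ∀ (ζ : mu r) (x : I), ζ • x = x → ζ = 1) :
    Set.BijOn (glueR (r := r)) (glueDataR r I) {F | IsTrHierarchyOn r (Set.univ : Set I) F} := by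
  have hζ : ∃ ζ : mu r, ζ ≠ 1 := StaGlue.mu_exists_ne_one hr
  have hsing : ∀ i : I, ({i} : Set I) ≠ Set.univ := by
    intro i h
    obtain ⟨ζ, hζ1⟩ := hζ
    have h2 : ζ • i ∈ ({i} : Set I) := by rw [h]; exact Set.mem_univ _
    exact hζ1 (hfree ζ i (by simpa using h2))
  refine Set.InvOn.bijOn (f' := StaGlue.unglue r) ⟨?_, ?_⟩ ?_ ?_
  · intro q hq
    exact StaGlue.unglue_glueR hζ hq
  · intro F hF
    exact StaGlue.glueR_unglue hsing hF
  · intro q hq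
    exact StaGlue.glueR_mem_target hζ hq
  · intro F hF
    exact StaGlue.unglue_mem_glueData hsing hF

end
end

section
/- Let r ≥ 2 and let I be a nonempty finite set with a free μ_r-action. For T ∈ T(r,I) and an internal vertex v of T, let J_v ⊆ I be the set of leaves of the subtree rooted at v; for a μ_r-orbit O of non-μ_r-fixed internal vertices, let J_O := ∪_{v∈O} J_v and π_O := {J_v : v ∈ O}. Then the set S_T := {X_{J_v} : v a non-root μ_r-fixed internal vertex of T} ∪ {X_{J_O, π_O} : O a μ_r-orbit of non-μ_r-fixed internal vertices} is a nested subset of F*, and the map T ↦ S_T is a bijection from T(r,I) onto the set of all nested subsets of F*. -/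
open scoped Classical

noncomputable section

variable (r : ℕ) (I : Type) [MulAction (mu r) I]

/-- The reflection representation `V(r,I) = {z ∈ ℂ^I : z_{ζ·i} = ζ z_i}`. -/
def Vsp : Set (I → ℂ) :=
  {z | ∀ (ζ : mu r) (i : I), z (ζ • i) = ((ζ : ℂˣ) : ℂ) * z i}

/-- The subspace `X_J = {z ∈ V(r,I) : z_j = 0 for j ∈ J}`. -/
def XJ (J : Set I) : Set (I → ℂ) := {z ∈ Vsp r I | ∀ j ∈ J, z j = 0}

/-- The subspace `X_{J,π} = {z ∈ V(r,I) : z_j = z_{j'} for j, j' in the same part of π}`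
(where `J = ⋃₀ π`). -/
def XJpi (π : Set (Set I)) : Set (I → ℂ) :=
  {z ∈ Vsp r I | ∀ P ∈ π, ∀ j ∈ P, ∀ j' ∈ P, z j = z j'}

/-- `J` is a `μ_r`-stable subset. -/
def IsStable (J : Set I) : Prop := ∀ (ζ : mu r) (x : I), x ∈ J → ζ • x ∈ J

/-- `π` is a partition (of its union) into `r` parts on which `μ_r` acts freely and
transitively. -/
def IsFTPartition (π : Set (Set I)) : Prop :=
  (∀ P ∈ π, (P : Set I).Nonempty) ∧ (π : Set (Set I)).PairwiseDisjoint id ∧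
  (∀ (ζ : mu r), ∀ P ∈ π, zdot ζ P ∈ π) ∧
  (∀ P ∈ π, ∀ ζ : mu r, zdot ζ P = P → ζ = 1) ∧
  (∀ P ∈ π, ∀ Q ∈ π, ∃ ζ : mu r, zdot ζ P = Q) ∧
  (π : Set (Set I)).ncard = r

/-- The set `F` of irreducible subspaces: the `X_J` for `∅ ≠ J ⊆ I` stable, and the
`X_{J,π}` for stable `J` with `|J| ≥ 2r` and `π` a partition of `J` into `r` parts
permuted freely and transitively by `μ_r`. -/
def Fcal : Set (Set (I → ℂ)) :=
  {X | (∃ J : Set I, J.Nonempty ∧ IsStable r I J ∧ X = XJ r I J) ∨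
       (∃ π : Set (Set I), IsFTPartition r I π ∧ 2 * r ≤ (⋃₀ π : Set I).ncard ∧
         X = XJpi r I π)}

/-- `F* = F ∖ {X_I}`. -/
def Fstar : Set (Set (I → ℂ)) := Fcal r I \ {XJ r I Set.univ}

/-- `S ⊆ F*` is nested if for every collection of at least two pairwise incomparable
members of `S`, the intersection of the collection does not belong to `F`. -/
def IsNested (S : Set (Set (I → ℂ))) : Prop :=
  S ⊆ Fstar r I ∧
  ∀ C : Finset (Set (I → ℂ)), ↑C ⊆ S → 2 ≤ C.card →
    (∀ Y ∈ C, ∀ Y' ∈ C, Y ≠ Y' → ¬Y ⊆ Y') → ⋂₀ (C : Set (Set (I → ℂ))) ∉ Fcal r I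

/-- The map `T ↦ S_T`: to a tree `T ∈ T(r,I)` (encoded by the hierarchy `F`, whose
internal vertices `v` correspond to the members `J_v = J ∈ F` with `|J| ≥ 2`) we attach
the set consisting of the `X_{J_v}` for `v` a non-root `μ_r`-fixed internal vertex,
and the `X_{J_O, π_O}` for `O` a `μ_r`-orbit of non-`μ_r`-fixed internal vertices
(where `π_O = {ζ·J_v : ζ ∈ μ_r}` for any `v ∈ O`). -/
def nestedOfTree (F : Set (Set I)) : Set (Set (I → ℂ)) :=
  {X | ∃ J ∈ F, 2 ≤ (J : Set I).ncard ∧ IsFixedSet r J ∧ J ≠ Set.univ ∧ X = XJ r I J} ∪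
  {X | ∃ J ∈ F, 2 ≤ (J : Set I).ncard ∧ ¬IsFixedSet r J ∧
    X = XJpi r I {P : Set I | ∃ ζ : mu r, P = zdot ζ J}}

section Aux
set_option linter.unusedSectionVars false
set_option linter.unusedTactic false
set_option linter.unreachableTactic false

open Set

/-- Freeness of the action. -/
def FreeAct : Prop := ∀ (ζ : mu r) (x : I), ζ • x = x → ζ = 1

variable {r} {I}

lemma mu_coe_inj {ζ η : mu r} (h : ((ζ : ℂˣ) : ℂ) = ((η : ℂˣ) : ℂ)) : ζ = η :=
  Subtype.ext (Units.ext h)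

lemma mu_coe_mul (ζ η : mu r) : (((ζ * η : mu r) : ℂˣ) : ℂ) = ((ζ : ℂˣ) : ℂ) * ((η : ℂˣ) : ℂ) := by
  push_cast; ring

lemma mu_coe_one : (((1 : mu r) : ℂˣ) : ℂ) = 1 := by push_cast; ring

lemma mu_coe_ne_zero (ζ : mu r) : ((ζ : ℂˣ) : ℂ) ≠ 0 := Units.ne_zero _

variable [MulAction (mu r) I]

lemma smul_cancel (hfree : FreeAct r I) {ζ η : mu r} {x : I} (h : ζ • x = η • x) : ζ = η := by
  have h2 : (η⁻¹ * ζ) • x = x := by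
    rw [mul_smul, h, ← mul_smul, inv_mul_cancel, one_smul]
  have := hfree _ _ h2
  rwa [inv_mul_eq_one, eq_comm] at this

lemma mem_zdot {ζ : mu r} {A : Set I} {x : I} : x ∈ zdot ζ A ↔ ζ⁻¹ • x ∈ A := by
  constructor
  · rintro ⟨a, ha, rfl⟩; simpa [inv_smul_smul] using ha
  · intro h; exact ⟨ζ⁻¹ • x, h, smul_inv_smul ζ x⟩

lemma zdot_one (A : Set I) : zdot (1 : mu r) A = A := by
  ext x; simp [mem_zdot]

lemma zdot_zdot (ζ η : mu r) (A : Set I) : zdot ζ (zdot η A) = zdot (ζ * η) A := by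
  ext x; simp [mem_zdot, mul_smul]

lemma zdot_mono {ζ : mu r} {A B : Set I} (h : A ⊆ B) : zdot ζ A ⊆ zdot ζ B :=
  Set.image_mono h

lemma zdot_nonempty {ζ : mu r} {A : Set I} (h : A.Nonempty) : (zdot ζ A).Nonempty :=
  h.image _

lemma zdot_ncard {ζ : mu r} {A : Set I} : (zdot ζ A).ncard = A.ncard :=
  Set.ncard_image_of_injective _ (MulAction.injective ζ)

lemma zdot_univ (ζ : mu r) : zdot ζ (Set.univ : Set I) = Set.univ := by
  ext x; simp [mem_zdot]

lemma zdot_singleton (ζ : mu r) (x : I) : zdot ζ ({x} : Set I) = {ζ • x} := by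
  simp [zdot]

lemma univ_fixed : IsFixedSet r (Set.univ : Set I) := fun ζ => zdot_univ ζ

lemma stable_iff_fixed {A : Set I} : IsStable r I A ↔ IsFixedSet r A := by
  constructor
  · intro h ζ
    apply Set.Subset.antisymm
    · rintro x ⟨a, ha, rfl⟩; exact h ζ a ha
    · intro x hx
      exact ⟨ζ⁻¹ • x, h ζ⁻¹ x hx, smul_inv_smul ζ x⟩
  · intro h ζ x hx
    rw [← h ζ]; exact ⟨x, hx, rfl⟩

lemma stable_union {A B : Set I} (hA : IsStable r I A) (hB : IsStable r I B) :
    IsStable r I (A ∪ B) := by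
  intro ζ x hx
  rcases hx with h | h
  · exact Or.inl (hA ζ x h)
  · exact Or.inr (hB ζ x h)

lemma stable_sUnion {Ps : Set (Set I)} (h : ∀ (ζ : mu r), ∀ P ∈ Ps, zdot ζ P ∈ Ps) :
    IsStable r I (⋃₀ Ps) := by
  rintro ζ x ⟨P, hP, hx⟩
  exact ⟨zdot ζ P, h ζ P hP, ⟨x, hx, rfl⟩⟩

lemma mem_Vsp {z : I → ℂ} :
    z ∈ Vsp r I ↔ ∀ (ζ : mu r) (i : I), z (ζ • i) = ((ζ : ℂˣ) : ℂ) * z i := Iff.rfl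

variable (r)

/-- basis-type vector supported on the orbit of `i₀`. -/
def bvec (i₀ : I) : I → ℂ := fun x =>
  if h : ∃ ζ : mu r, ζ • i₀ = x then ((h.choose : ℂˣ) : ℂ) else 0

variable {r}

lemma bvec_apply (i₀ x : I) : bvec r i₀ x =
    if h : ∃ ζ : mu r, ζ • i₀ = x then ((h.choose : ℂˣ) : ℂ) else 0 := rfl

lemma bvec_smul (hfree : FreeAct r I) (i₀ : I) (ζ : mu r) :
    bvec r i₀ (ζ • i₀) = ((ζ : ℂˣ) : ℂ) := by
  have h : ∃ η : mu r, η • i₀ = ζ • i₀ := ⟨ζ, rfl⟩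
  rw [bvec_apply, dif_pos h]
  congr 2
  exact smul_cancel hfree h.choose_spec

lemma bvec_self (hfree : FreeAct r I) (i₀ : I) : bvec r i₀ i₀ = 1 := by
  have := bvec_smul hfree i₀ 1
  rwa [one_smul, mu_coe_one] at this

lemma bvec_not {i₀ x : I} (h : ¬∃ ζ : mu r, ζ • i₀ = x) : bvec r i₀ x = 0 :=
  dif_neg h

lemma bvec_mem_Vsp (hfree : FreeAct r I) (i₀ : I) : bvec r i₀ ∈ Vsp r I := by
  intro ζ x
  by_cases h : ∃ η : mu r, η • i₀ = x
  · obtain ⟨η, rfl⟩ := h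
    rw [← mul_smul, bvec_smul hfree, bvec_smul hfree, mu_coe_mul]
  · rw [bvec_not h, bvec_not ?_, mul_zero]
    rintro ⟨θ, hθ⟩
    exact h ⟨ζ⁻¹ * θ, by rw [mul_smul, hθ, inv_smul_smul]⟩

lemma bvec_ne_one (hfree : FreeAct r I) {i₀ y : I} (h : y ≠ i₀) : bvec r i₀ y ≠ 1 := by
  by_cases hy : ∃ ζ : mu r, ζ • i₀ = y
  · obtain ⟨ζ, rfl⟩ := hy
    rw [bvec_smul hfree]
    intro hc
    rw [← mu_coe_one] at hc
    exact h (by rw [mu_coe_inj hc, one_smul])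
  · rw [bvec_not hy]; norm_num

variable [Fintype I]

variable (r)

/-- indicator-type vector: `1` on a partial transversal `P`, equivariantly extended. -/
def onevec (P : Set I) : I → ℂ := fun x => ∑ j : I, if j ∈ P then bvec r j x else 0

variable {r}

lemma onevec_apply (P : Set I) (x : I) :
    onevec r P x = ∑ j : I, if j ∈ P then bvec r j x else 0 := rfl

variable (r) in
/-- transversality: no two elements of `P` in the same orbit. -/
def Transv (P : Set I) : Prop := ∀ x ∈ P, ∀ ζ : mu r, ζ • x ∈ P → ζ = 1

lemma onevec_smul_mem (hfree : FreeAct r I) {P : Set I} (htr : Transv r P) {p : I}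
    (hp : p ∈ P) (ζ : mu r) : onevec r P (ζ • p) = ((ζ : ℂˣ) : ℂ) := by
  rw [onevec_apply, Finset.sum_eq_single p]
  · rw [if_pos hp, bvec_smul hfree]
  · intro j _ hj
    by_cases hjP : j ∈ P
    · rw [if_pos hjP]
      apply bvec_not
      rintro ⟨η, hη⟩
      have : (η⁻¹ * ζ) • p = j := by rw [mul_smul, ← hη, inv_smul_smul]
      have h1 : (η⁻¹ * ζ) = 1 := htr p hp _ (this ▸ hjP)
      exact hj (by rw [← this, h1, one_smul])
    · rw [if_neg hjP]
  · intro h; exact absurd (Finset.mem_univ p) h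

lemma onevec_self (hfree : FreeAct r I) {P : Set I} (htr : Transv r P) {p : I} (hp : p ∈ P) :
    onevec r P p = 1 := by
  have := onevec_smul_mem hfree htr hp 1
  rwa [one_smul, mu_coe_one] at this

lemma onevec_zero {P : Set I} {x : I} (h : ¬∃ p ∈ P, ∃ ζ : mu r, ζ • p = x) :
    onevec r P x = 0 := by
  rw [onevec_apply]
  apply Finset.sum_eq_zero
  intro j _
  by_cases hj : j ∈ P
  · rw [if_pos hj]
    exact bvec_not (fun ⟨ζ, hζ⟩ => h ⟨j, hj, ζ, hζ⟩)
  · rw [if_neg hj]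

lemma onevec_mem_Vsp (hfree : FreeAct r I) (P : Set I) : onevec r P ∈ Vsp r I := by
  intro ζ x
  rw [onevec_apply, onevec_apply, Finset.mul_sum]
  apply Finset.sum_congr rfl
  intro j _
  by_cases hj : j ∈ P
  · rw [if_pos hj, if_pos hj, bvec_mem_Vsp hfree j ζ x]
  · rw [if_neg hj, if_neg hj, mul_zero]

end Aux
section Aux2
set_option linter.unusedSectionVars false

open Set

variable {r} {I}
variable [MulAction (mu r) I]

variable (r) in
/-- Common generalization of `XJ` and `XJpi`: vanishing on `A`, constant on members of `Ps`. -/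
def Ysp (A : Set I) (Ps : Set (Set I)) : Set (I → ℂ) :=
  {z ∈ Vsp r I | (∀ a ∈ A, z a = 0) ∧ ∀ P ∈ Ps, ∀ j ∈ P, ∀ j' ∈ P, z j = z j'}

lemma mem_Ysp {A : Set I} {Ps : Set (Set I)} {z : I → ℂ} :
    z ∈ Ysp r A Ps ↔ z ∈ Vsp r I ∧ (∀ a ∈ A, z a = 0) ∧
      ∀ P ∈ Ps, ∀ j ∈ P, ∀ j' ∈ P, z j = z j' := Iff.rfl

lemma XJ_eq_Ysp (J : Set I) : XJ r I J = Ysp r J ∅ := by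
  ext z; simp [XJ, Ysp]

lemma XJpi_eq_Ysp (π : Set (Set I)) : XJpi r I π = Ysp r ∅ π := by
  ext z; simp [XJpi, Ysp]

variable (r) in
/-- A coherent system: the data recoverable from the subspace `Ysp r A Ps`. -/
structure Coh (A : Set I) (Ps : Set (Set I)) : Prop where
  hA : IsStable r I A
  hnt : ∀ P ∈ Ps, P.Nontrivial
  hdj : Ps.PairwiseDisjoint id
  hst : ∀ (ζ : mu r), ∀ P ∈ Ps, zdot ζ P ∈ Ps
  hfr : ∀ P ∈ Ps, ∀ ζ : mu r, zdot ζ P = P → ζ = 1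
  hAd : ∀ P ∈ Ps, ∀ x ∈ P, x ∉ A

lemma pd_eq {Ps : Set (Set I)} (hdj : Ps.PairwiseDisjoint id) {P Q : Set I}
    (hP : P ∈ Ps) (hQ : Q ∈ Ps) {x : I} (hxP : x ∈ P) (hxQ : x ∈ Q) : P = Q := by
  by_contra hne
  exact Set.disjoint_left.mp (hdj hP hQ hne) hxP hxQ

lemma Coh.htr {A : Set I} {Ps : Set (Set I)} (hc : Coh r A Ps) {P : Set I} (hP : P ∈ Ps) :
    Transv r P := by
  intro x hx ζ hζ
  have h1 : ζ • x ∈ zdot ζ P := ⟨x, hx, rfl⟩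
  have h2 : zdot ζ P = P := pd_eq hc.hdj (hc.hst ζ P hP) hP h1 hζ
  exact hc.hfr P hP ζ h2

lemma Coh.orbit_compat {A : Set I} {Ps : Set (Set I)} (hc : Coh r A Ps) {P Q : Set I}
    (hP : P ∈ Ps) (hQ : Q ∈ Ps) {p : I} (hp : p ∈ P) {ζ : mu r} (h : ζ • p ∈ Q) :
    Q = zdot ζ P :=
  (pd_eq hc.hdj (hc.hst ζ P hP) hQ ⟨p, hp, rfl⟩ h).symm

variable [Fintype I]

lemma onevec_mem_Ysp (hfree : FreeAct r I) {A : Set I} {Ps : Set (Set I)}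
    (hc : Coh r A Ps) {P : Set I} (hP : P ∈ Ps) : onevec r P ∈ Ysp r A Ps := by
  refine ⟨onevec_mem_Vsp hfree P, ?_, ?_⟩
  · intro a ha
    apply onevec_zero
    rintro ⟨p, hp, ζ, rfl⟩
    exact hc.hAd P hP p hp (by simpa [inv_smul_smul] using hc.hA ζ⁻¹ _ ha)
  · intro Q hQ j hj j' hj'
    by_cases h : ∃ p ∈ P, ∃ ζ : mu r, ζ • p = j
    · obtain ⟨p, hp, ζ, rfl⟩ := h
      have hQP : Q = zdot ζ P := hc.orbit_compat hP hQ hp hj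
      obtain ⟨p', hp', rfl⟩ : j' ∈ zdot ζ P := hQP ▸ hj'
      rw [onevec_smul_mem hfree (hc.htr hP) hp, onevec_smul_mem hfree (hc.htr hP) hp']
    · have h2 : ¬∃ p ∈ P, ∃ ζ : mu r, ζ • p = j' := by
        rintro ⟨p, hp, ζ, rfl⟩
        have hQP : Q = zdot ζ P := hc.orbit_compat hP hQ hp hj'
        obtain ⟨p'', hp'', hj⟩ : j ∈ zdot ζ P := hQP ▸ hj
        exact h ⟨p'', hp'', ζ, hj⟩
      rw [onevec_zero h, onevec_zero h2]

lemma bvec_mem_Ysp (hfree : FreeAct r I) {A : Set I} {Ps : Set (Set I)}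
    (hc : Coh r A Ps) {x : I} (hxA : x ∉ A) (hxP : ∀ P ∈ Ps, x ∉ P) :
    bvec r x ∈ Ysp r A Ps := by
  refine ⟨bvec_mem_Vsp hfree x, ?_, ?_⟩
  · intro a ha
    apply bvec_not
    rintro ⟨ζ, rfl⟩
    exact hxA (by simpa [inv_smul_smul] using hc.hA ζ⁻¹ _ ha)
  · intro Q hQ j hj j' hj'
    have hz : ∀ y ∈ Q, bvec r x y = 0 := by
      intro y hy
      apply bvec_not
      rintro ⟨ζ, rfl⟩
      have : x ∈ zdot ζ⁻¹ Q := mem_zdot.mpr (by simpa [inv_inv] using hy)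
      exact hxP _ (hc.hst ζ⁻¹ Q hQ) this
    rw [hz j hj, hz j' hj']

lemma Ysp_exists_ne_zero (hfree : FreeAct r I) {A : Set I} {Ps : Set (Set I)}
    (hc : Coh r A Ps) {x : I} (hxA : x ∉ A) : ∃ z ∈ Ysp r A Ps, z x ≠ 0 := by
  by_cases h : ∃ P ∈ Ps, x ∈ P
  · obtain ⟨P, hP, hx⟩ := h
    exact ⟨onevec r P, onevec_mem_Ysp hfree hc hP,
      by rw [onevec_self hfree (hc.htr hP) hx]; norm_num⟩
  · push_neg at h
    exact ⟨bvec r x, bvec_mem_Ysp hfree hc hxA h,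
      by rw [bvec_self hfree x]; norm_num⟩

lemma Ysp_zero_set (hfree : FreeAct r I) {A : Set I} {Ps : Set (Set I)}
    (hc : Coh r A Ps) : A = {x | ∀ z ∈ Ysp r A Ps, z x = 0} := by
  apply Set.Subset.antisymm
  · intro a ha z hz; exact hz.2.1 a ha
  · intro x hx
    by_contra hxA
    obtain ⟨z, hz, hzx⟩ := Ysp_exists_ne_zero hfree hc hxA
    exact hzx (hx z hz)

/-- Forced nonzero pairs of a subspace. -/
def FP (X : Set (I → ℂ)) (j j' : I) : Prop :=
  j ≠ j' ∧ (∃ z ∈ X, z j ≠ 0) ∧ ∀ z ∈ X, z j = z j'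

lemma onevec_eq_one_mem (hfree : FreeAct r I) {P : Set I} (htr : Transv r P) {y : I}
    (h : onevec r P y = 1) : y ∈ P := by
  by_cases hy : ∃ p ∈ P, ∃ ζ : mu r, ζ • p = y
  · obtain ⟨p, hp, ζ, rfl⟩ := hy
    rw [onevec_smul_mem hfree htr hp] at h
    rw [← mu_coe_one] at h
    rw [mu_coe_inj h, one_smul]; exact hp
  · rw [onevec_zero hy] at h; norm_num at h

lemma FP_Ysp (hfree : FreeAct r I) {A : Set I} {Ps : Set (Set I)} (hc : Coh r A Ps)
    {j j' : I} : FP (Ysp r A Ps) j j' ↔ ∃ P ∈ Ps, j ∈ P ∧ j' ∈ P ∧ j ≠ j' := by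
  constructor
  · rintro ⟨hne, ⟨z₀, hz₀m, hz₀⟩, hforce⟩
    have hjA : j ∉ A := fun h => hz₀ (hz₀m.2.1 j h)
    by_cases hjP : ∃ P ∈ Ps, j ∈ P
    · obtain ⟨P, hP, hj⟩ := hjP
      refine ⟨P, hP, hj, ?_, hne⟩
      have h1 : onevec r P j = 1 := onevec_self hfree (hc.htr hP) hj
      have h2 : onevec r P j' = 1 := by
        rw [← hforce _ (onevec_mem_Ysp hfree hc hP)]; exact h1
      exact onevec_eq_one_mem hfree (hc.htr hP) h2
    · push_neg at hjP
      exfalso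
      have h1 : bvec r j j = 1 := bvec_self hfree j
      have h2 : bvec r j j' = 1 := by
        rw [← hforce _ (bvec_mem_Ysp hfree hc hjA hjP)]; exact h1
      exact bvec_ne_one hfree (Ne.symm hne) h2
  · rintro ⟨P, hP, hj, hj', hne⟩
    refine ⟨hne, ⟨onevec r P, onevec_mem_Ysp hfree hc hP,
      by rw [onevec_self hfree (hc.htr hP) hj]; norm_num⟩,
      fun z hz => hz.2.2 P hP j hj j' hj'⟩

lemma Ysp_inj_sub (hfree : FreeAct r I) {A A' : Set I} {Ps Ps' : Set (Set I)}
    (hc : Coh r A Ps) (hc' : Coh r A' Ps') (h : Ysp r A Ps = Ysp r A' Ps') :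
    Ps ⊆ Ps' := by
  intro P hP
  obtain ⟨j, hj, j', hj', hne⟩ := hc.hnt P hP
  have hFP : FP (Ysp r A' Ps') j j' := by
    rw [← h, FP_Ysp hfree hc]; exact ⟨P, hP, hj, hj', hne⟩
  rw [FP_Ysp hfree hc'] at hFP
  obtain ⟨P', hP', hjP', hj'P', -⟩ := hFP
  have : P = P' := by
    apply Set.Subset.antisymm
    · intro x hx
      by_cases hxj : x = j
      · rw [hxj]; exact hjP'
      · have hFPx : FP (Ysp r A' Ps') j x := by
          rw [← h, FP_Ysp hfree hc]; exact ⟨P, hP, hj, hx, fun hh => hxj hh.symm⟩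
        rw [FP_Ysp hfree hc'] at hFPx
        obtain ⟨Q', hQ', hjQ', hxQ', -⟩ := hFPx
        rw [← pd_eq hc'.hdj hQ' hP' hjQ' hjP']; exact hxQ'
    · intro x hx
      by_cases hxj : x = j
      · rw [hxj]; exact hj
      · have hFPx : FP (Ysp r A Ps) j x := by
          rw [h, FP_Ysp hfree hc']; exact ⟨P', hP', hjP', hx, fun hh => hxj hh.symm⟩
        rw [FP_Ysp hfree hc] at hFPx
        obtain ⟨Q, hQ, hjQ, hxQ, -⟩ := hFPx
        rw [← pd_eq hc.hdj hQ hP hjQ hj]; exact hxQ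
  rw [this]; exact hP'

lemma Ysp_inj (hfree : FreeAct r I) {A A' : Set I} {Ps Ps' : Set (Set I)}
    (hc : Coh r A Ps) (hc' : Coh r A' Ps') (h : Ysp r A Ps = Ysp r A' Ps') :
    A = A' ∧ Ps = Ps' := by
  constructor
  · rw [Ysp_zero_set hfree hc, Ysp_zero_set hfree hc', h]
  · exact Set.Subset.antisymm (Ysp_inj_sub hfree hc hc' h) (Ysp_inj_sub hfree hc' hc h.symm)

end Aux2
section Aux3
set_option linter.unusedSectionVars false

open Set

variable {r} {I}
variable [MulAction (mu r) I]

lemma card_mu (hr : 1 ≤ r) : Nat.card (mu r) = r := by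
  haveI : NeZero r := ⟨by omega⟩
  rw [Complex.card_rootsOfUnity]

lemma exists_ne_one (hr : 2 ≤ r) : ∃ ζ : mu r, ζ ≠ 1 := by
  haveI : NeZero r := ⟨by omega⟩
  have h : 1 < Nat.card (mu r) := by rw [Complex.card_rootsOfUnity]; omega
  haveI : Finite (mu r) := Nat.finite_of_card_ne_zero (by omega)
  haveI := Finite.one_lt_card_iff_nontrivial.mp h
  exact exists_ne 1

variable [Fintype I]

lemma stable_ncard (hr : 1 ≤ r) (hfree : FreeAct r I) {K : Set I}
    (hK : IsStable r I K) (hne : K.Nonempty) : r ≤ K.ncard := by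
  obtain ⟨x, hx⟩ := hne
  have hinj : Function.Injective (fun ζ : mu r => ζ • x) :=
    fun ζ η h => smul_cancel hfree h
  have hsub : (fun ζ : mu r => ζ • x) '' Set.univ ⊆ K := by
    rintro y ⟨ζ, -, rfl⟩; exact hK ζ x hx
  have hcard : ((fun ζ : mu r => ζ • x) '' Set.univ).ncard = r := by
    rw [Set.ncard_image_of_injective _ hinj, Set.ncard_univ, card_mu hr]
  rw [← hcard]
  exact Set.ncard_le_ncard hsub (Set.toFinite _)

/-- accessors for `IsFTPartition`. -/
lemma IsFTPartition.nonempty {π : Set (Set I)} (h : IsFTPartition r I π) : ∀ P ∈ π, P.Nonempty := h.1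
lemma IsFTPartition.disj {π : Set (Set I)} (h : IsFTPartition r I π) : π.PairwiseDisjoint id := h.2.1
lemma IsFTPartition.stab {π : Set (Set I)} (h : IsFTPartition r I π) :
    ∀ (ζ : mu r), ∀ P ∈ π, zdot ζ P ∈ π := h.2.2.1
lemma IsFTPartition.free {π : Set (Set I)} (h : IsFTPartition r I π) :
    ∀ P ∈ π, ∀ ζ : mu r, zdot ζ P = P → ζ = 1 := h.2.2.2.1
lemma IsFTPartition.trans {π : Set (Set I)} (h : IsFTPartition r I π) :
    ∀ P ∈ π, ∀ Q ∈ π, ∃ ζ : mu r, zdot ζ P = Q := h.2.2.2.2.1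
lemma IsFTPartition.card {π : Set (Set I)} (h : IsFTPartition r I π) : π.ncard = r := h.2.2.2.2.2

lemma FT_sUnion_eq {π : Set (Set I)} (hπ : IsFTPartition r I π) {P : Set I} (hP : P ∈ π) :
    ⋃₀ π = (fun q : mu r × I => q.1 • q.2) '' ((Set.univ : Set (mu r)) ×ˢ P) := by
  ext y
  constructor
  · rintro ⟨Q, hQ, hy⟩
    obtain ⟨ζ, hζ⟩ := hπ.trans P hP Q hQ
    obtain ⟨p, hp, rfl⟩ : y ∈ zdot ζ P := hζ ▸ hy
    exact ⟨(ζ, p), ⟨Set.mem_univ _, hp⟩, rfl⟩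
  · rintro ⟨⟨ζ, p⟩, ⟨-, hp⟩, rfl⟩
    exact ⟨zdot ζ P, hπ.stab ζ P hP, ⟨p, hp, rfl⟩⟩

lemma FT_ncard (hr : 1 ≤ r) {π : Set (Set I)} (hπ : IsFTPartition r I π) {P : Set I}
    (hP : P ∈ π) : (⋃₀ π).ncard = r * P.ncard := by
  rw [FT_sUnion_eq hπ hP]
  have hinj : Set.InjOn (fun q : mu r × I => q.1 • q.2)
      ((Set.univ : Set (mu r)) ×ˢ P) := by
    rintro ⟨ζ, p⟩ ⟨-, hp⟩ ⟨η, q⟩ ⟨-, hq⟩ h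
    simp only at h
    have hq' : q = (η⁻¹ * ζ) • p := by rw [mul_smul, h, inv_smul_smul]
    have hmem : q ∈ zdot (η⁻¹ * ζ) P := hq' ▸ ⟨p, hp, rfl⟩
    have heq : zdot (η⁻¹ * ζ) P = P :=
      pd_eq hπ.disj (hπ.stab _ P hP) hP hmem hq
    have h1 : η⁻¹ * ζ = 1 := hπ.free P hP _ heq
    have hζη : ζ = η := by rwa [inv_mul_eq_one, eq_comm] at h1
    have hpq : p = q := by rw [hq', h1, one_smul]
    simp [hζη, hpq]
  rw [Set.ncard_image_of_injOn hinj, ← Nat.card_coe_set_eq,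
    Nat.card_congr (Equiv.Set.prod _ _), Nat.card_prod,
    Nat.card_congr (Equiv.Set.univ _), card_mu hr, Nat.card_coe_set_eq]

lemma FT_part_nontrivial (hr : 1 ≤ r) {π : Set (Set I)} (hπ : IsFTPartition r I π)
    (hcard : 2 * r ≤ (⋃₀ π).ncard) {P : Set I} (hP : P ∈ π) : P.Nontrivial := by
  have h := FT_ncard hr hπ hP
  have h2 : 2 ≤ P.ncard := by
    rw [h] at hcard
    by_contra hlt
    push_neg at hlt
    interval_cases hn : P.ncard <;> omega
  obtain ⟨a, b, ha, hb, hab⟩ := (Set.one_lt_ncard_iff (Set.toFinite P)).mp (by omega)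
  exact ⟨a, ha, b, hb, hab⟩

lemma FT_sUnion_stable {π : Set (Set I)} (hπ : IsFTPartition r I π) :
    IsStable r I (⋃₀ π) := stable_sUnion hπ.stab

lemma Coh_XJ {K : Set I} (hK : IsStable r I K) : Coh r K ∅ :=
  ⟨hK, fun P hP => absurd hP (Set.notMem_empty P), by simp [Set.PairwiseDisjoint, Set.Pairwise],
    fun ζ P hP => absurd hP (Set.notMem_empty P), fun P hP => absurd hP (Set.notMem_empty P),
    fun P hP => absurd hP (Set.notMem_empty P)⟩

lemma Coh_FT (hr : 1 ≤ r) {π : Set (Set I)} (hπ : IsFTPartition r I π)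
    (hcard : 2 * r ≤ (⋃₀ π).ncard) : Coh r ∅ π :=
  ⟨fun ζ x hx => hx.elim, fun P hP => FT_part_nontrivial hr hπ hcard hP, hπ.disj, hπ.stab,
    hπ.free, fun P _ x _ h => h⟩

/-- Construction of an FT partition from the orbit of a set. -/
lemma FT_orbit (hr : 1 ≤ r) (hfree : FreeAct r I) {B : Set I} (hB : B.Nonempty)
    (hfreeB : ∀ ζ : mu r, zdot ζ B = B → ζ = 1)
    (hmeet : ∀ ζ : mu r, (zdot ζ B ∩ B).Nonempty → zdot ζ B = B) :
    IsFTPartition r I {P | ∃ ζ : mu r, P = zdot ζ B} := by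
  have key : ∀ ζ η : mu r, ((zdot ζ B) ∩ (zdot η B)).Nonempty → zdot ζ B = zdot η B := by
    intro ζ η ⟨x, hx1, hx2⟩
    have h1 : η⁻¹ • x ∈ zdot (η⁻¹ * ζ) B ∩ B := by
      constructor
      · rw [← zdot_zdot]; exact ⟨x, hx1, rfl⟩
      · exact mem_zdot.mp (by simpa [inv_inv] using hx2)
    have h2 := hmeet _ ⟨η⁻¹ • x, h1⟩
    calc zdot ζ B = zdot η (zdot (η⁻¹ * ζ) B) := by rw [zdot_zdot, ← mul_assoc,
          mul_inv_cancel, one_mul]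
      _ = zdot η B := by rw [h2]
  refine ⟨?_, ?_, ?_, ?_, ?_, ?_⟩
  · rintro P ⟨ζ, rfl⟩; exact zdot_nonempty hB
  · rintro P ⟨ζ, rfl⟩ Q ⟨η, rfl⟩ hne
    simp only [Function.onFun, id_eq]
    rw [Set.disjoint_left]
    intro x hx1 hx2
    exact hne (key ζ η ⟨x, hx1, hx2⟩)
  · rintro ζ P ⟨η, rfl⟩; exact ⟨ζ * η, (zdot_zdot ζ η B)⟩
  · rintro P ⟨η, rfl⟩ ζ h
    rw [zdot_zdot] at h
    have h2 : zdot (η⁻¹ * (ζ * η)) B = B := by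
      rw [← zdot_zdot, h, zdot_zdot, inv_mul_cancel, zdot_one]
    have := hfreeB _ h2
    have : ζ * η = η := by
      have h3 : η * (η⁻¹ * (ζ * η)) = η * 1 := by rw [this]
      rwa [← mul_assoc, mul_inv_cancel, one_mul, mul_one] at h3
    rwa [mul_eq_right] at this
  · rintro P ⟨ζ, rfl⟩ Q ⟨η, rfl⟩
    exact ⟨η * ζ⁻¹, by rw [zdot_zdot, mul_assoc, inv_mul_cancel, mul_one]⟩
  · have himg : {P | ∃ ζ : mu r, P = zdot ζ B} = (fun ζ : mu r => zdot ζ B) '' Set.univ := by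
      ext P; simp [eq_comm]
    have hinj : Function.Injective (fun ζ : mu r => zdot ζ B) := by
      intro ζ η h
      simp only at h
      have h2 : zdot (η⁻¹ * ζ) B = B := by rw [← zdot_zdot, h, zdot_zdot, inv_mul_cancel,
        zdot_one]
      have := hfreeB _ h2
      rwa [inv_mul_eq_one, eq_comm] at this
    rw [himg, Set.ncard_image_of_injective _ hinj, Set.ncard_univ, card_mu hr]

/-- monotonicity lemmas -/
lemma XJ_anti {J K : Set I} (h : J ⊆ K) : XJ r I K ⊆ XJ r I J :=
  fun z hz => ⟨hz.1, fun j hj => hz.2 j (h hj)⟩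

lemma XJpi_mono {π π' : Set (Set I)} (h : ∀ P ∈ π', ∃ Q ∈ π, P ⊆ Q) :
    XJpi r I π ⊆ XJpi r I π' := by
  rintro z ⟨hV, hconst⟩
  refine ⟨hV, ?_⟩
  intro P hP j hj j' hj'
  obtain ⟨Q, hQ, hPQ⟩ := h P hP
  exact hconst Q hQ j (hPQ hj) j' (hPQ hj')

lemma XJ_subset_iff (hfree : FreeAct r I) {J K : Set I} (hJ : IsStable r I J)
    (hK : IsStable r I K) : XJ r I J ⊆ XJ r I K ↔ K ⊆ J := by
  constructor
  · intro h
    intro k hk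
    by_contra hkJ
    obtain ⟨z, hz, hzk⟩ := Ysp_exists_ne_zero hfree (Coh_XJ hJ) hkJ
    rw [← XJ_eq_Ysp] at hz
    exact hzk ((h hz).2 k hk)
  · exact XJ_anti

lemma XJ_inj (hfree : FreeAct r I) {J K : Set I} (hJ : IsStable r I J)
    (hK : IsStable r I K) (h : XJ r I J = XJ r I K) : J = K := by
  rw [XJ_eq_Ysp, XJ_eq_Ysp] at h
  exact (Ysp_inj hfree (Coh_XJ hJ) (Coh_XJ hK) h).1

lemma XJ_ne_XJpi (hfree : FreeAct r I) {K : Set I} (hK : IsStable r I K)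
    (hKne : K.Nonempty) {π : Set (Set I)} (hc : Coh r ∅ π) : XJ r I K ≠ XJpi r I π := by
  intro h
  rw [XJ_eq_Ysp, XJpi_eq_Ysp] at h
  obtain ⟨x, hx⟩ := hKne
  have := (Ysp_inj hfree (Coh_XJ hK) hc h).1
  rw [this] at hx
  exact hx

lemma XJpi_not_subset_XJ (hfree : FreeAct r I) {K : Set I} (hKne : K.Nonempty)
    {π : Set (Set I)} (hc : Coh r ∅ π) : ¬XJpi r I π ⊆ XJ r I K := by
  intro h
  obtain ⟨k, hk⟩ := hKne
  obtain ⟨z, hz, hzk⟩ := Ysp_exists_ne_zero hfree hc (Set.notMem_empty k)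
  rw [← XJpi_eq_Ysp] at hz
  exact hzk ((h hz).2 k hk)

lemma XJ_subset_XJpi_iff (hfree : FreeAct r I) {K : Set I} (hK : IsStable r I K)
    {π : Set (Set I)} (hc : Coh r ∅ π) : XJ r I K ⊆ XJpi r I π ↔ ⋃₀ π ⊆ K := by
  constructor
  · intro h x hx
    obtain ⟨P, hP, hxP⟩ := hx
    by_contra hxK
    have hmem : bvec r x ∈ XJ r I K := by
      refine ⟨bvec_mem_Vsp hfree x, ?_⟩
      intro k hk
      apply bvec_not
      rintro ⟨ζ, rfl⟩
      exact hxK (by simpa [inv_smul_smul] using hK ζ⁻¹ _ hk)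
    have hconst := (h hmem).2 P hP
    obtain ⟨y, hy, hyx⟩ : ∃ y ∈ P, y ≠ x := by
      rcases hc.hnt P hP with ⟨a, ha, b, hb, hab⟩
      by_cases hax : a = x
      · exact ⟨b, hb, by rw [← hax]; exact fun hh => hab hh.symm⟩
      · exact ⟨a, ha, hax⟩
    have h1 : bvec r x y = bvec r x x := hconst y hy x hxP
    rw [bvec_self hfree] at h1
    exact bvec_ne_one hfree hyx h1
  · intro h z hz
    refine ⟨hz.1, ?_⟩
    intro P hP j hj j' hj'
    rw [hz.2 j (h ⟨P, hP, hj⟩), hz.2 j' (h ⟨P, hP, hj'⟩)]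

lemma XJpi_subset_iff (hfree : FreeAct r I) {π π' : Set (Set I)} (hc : Coh r ∅ π)
    (hc' : Coh r ∅ π') :
    XJpi r I π ⊆ XJpi r I π' ↔ ∀ P' ∈ π', ∃ P ∈ π, P' ⊆ P := by
  constructor
  · intro h P' hP'
    obtain ⟨j, hj, j', hj', hne⟩ := hc'.hnt P' hP'
    have hFP : FP (Ysp r ∅ π) j j' := by
      refine ⟨hne, ?_, ?_⟩
      · exact Ysp_exists_ne_zero hfree hc (Set.notMem_empty j)
      · intro z hz
        rw [← XJpi_eq_Ysp] at hz
        exact (h hz).2 P' hP' j hj j' hj'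
    rw [FP_Ysp hfree hc] at hFP
    obtain ⟨P, hP, hjP, hj'P, -⟩ := hFP
    refine ⟨P, hP, ?_⟩
    intro x hx
    by_cases hxj : x = j
    · rw [hxj]; exact hjP
    · have hFPx : FP (Ysp r ∅ π) j x := by
        refine ⟨fun hh => hxj hh.symm, ?_, ?_⟩
        · exact Ysp_exists_ne_zero hfree hc (Set.notMem_empty j)
        · intro z hz
          rw [← XJpi_eq_Ysp] at hz
          exact (h hz).2 P' hP' j hj x hx
      rw [FP_Ysp hfree hc] at hFPx
      obtain ⟨Q, hQ, hjQ, hxQ, -⟩ := hFPx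
      rw [← pd_eq hc.hdj hQ hP hjQ hjP]; exact hxQ
  · exact XJpi_mono

end Aux3
section Aux4
set_option linter.unusedSectionVars false

open Set

variable {r} {I}
variable [MulAction (mu r) I] [Fintype I] {F : Set (Set I)}

lemma Tr.nonempty (hF : IsTrHierarchyOn r (Set.univ : Set I) F) {J : Set I} (hJ : J ∈ F) :
    J.Nonempty := (hF.1.1 J hJ).1

lemma Tr.nested (hF : IsTrHierarchyOn r (Set.univ : Set I) F) {J K : Set I} (hJ : J ∈ F)
    (hK : K ∈ F) (h : (J ∩ K).Nonempty) : J ⊆ K ∨ K ⊆ J := by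
  rcases hF.1.2.2.2.1 J hJ K hK with h1 | h1 | h1
  · exact Or.inl h1
  · exact Or.inr h1
  · obtain ⟨x, hx1, hx2⟩ := h
    exact absurd hx2 (Set.disjoint_left.mp h1 hx1)

lemma Tr.zdot_eq_of_meet (hF : IsTrHierarchyOn r (Set.univ : Set I) F) {J : Set I}
    (hJ : J ∈ F) {ζ : mu r} (h : (zdot ζ J ∩ J).Nonempty) : zdot ζ J = J := by
  rcases Tr.nested hF (hF.2.1 ζ J hJ) hJ h with h1 | h1
  · exact Set.eq_of_subset_of_ncard_le h1 (by rw [zdot_ncard])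
  · exact (Set.eq_of_subset_of_ncard_le h1 (by rw [zdot_ncard])).symm

lemma Tr.fixed_of_superset (hF : IsTrHierarchyOn r (Set.univ : Set I) F) {K J : Set I}
    (hKfix : IsFixedSet r K) (hKne : K.Nonempty) (hKJ : K ⊆ J) (hJ : J ∈ F) :
    IsFixedSet r J := by
  intro ζ
  apply Tr.zdot_eq_of_meet hF hJ
  obtain ⟨x, hx⟩ := hKne
  refine ⟨x, ?_, hKJ hx⟩
  have : x ∈ zdot ζ K := by rw [hKfix ζ]; exact hx
  exact zdot_mono hKJ this

lemma Tr.exists_child (hF : IsTrHierarchyOn r (Set.univ : Set I) F) {J K : Set I}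
    (hJ : J ∈ F) (hK : K ∈ F) (hJK : J ⊂ K) : ∃ C, IsChild F C K ∧ J ⊆ C := by
  obtain ⟨C, hCs, hmax⟩ := Set.Finite.exists_maximalFor id {L | L ∈ F ∧ J ⊆ L ∧ L ⊂ K}
    (Set.toFinite _) ⟨J, hJ, subset_rfl, hJK⟩
  refine ⟨C, ⟨hCs.1, hCs.2.2, ?_⟩, hCs.2.1⟩
  intro L hL hLK hCL
  exact Set.Subset.antisymm (hmax ⟨hL, hCs.2.1.trans hCL, hLK⟩ hCL) hCL

lemma Tr.child_disjoint (hF : IsTrHierarchyOn r (Set.univ : Set I) F) {C C' K : Set I}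
    (hC : IsChild F C K) (hC' : IsChild F C' K) (hne : C ≠ C') : Disjoint C C' := by
  rw [Set.disjoint_left]
  intro x hx hx'
  rcases Tr.nested hF hC.1 hC'.1 ⟨x, hx, hx'⟩ with h | h
  · exact hne (hC.2.2 C' hC'.1 hC'.2.1 h).symm
  · exact hne (hC'.2.2 C hC.1 hC.2.1 h)

lemma Tr.univ_fixed_mem (hF : IsTrHierarchyOn r (Set.univ : Set I) F) :
    (Set.univ : Set I) ∈ F ∧ IsFixedSet r (Set.univ : Set I) :=
  ⟨hF.1.2.2.1, univ_fixed⟩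

/-- non-fixed members of a tree hierarchy have trivial stabilizer. -/
lemma Tr.free_nonfixed (hF : IsTrHierarchyOn r (Set.univ : Set I) F) {J : Set I}
    (hJ : J ∈ F) (hnf : ¬IsFixedSet r J) {ζ : mu r} (hζ : zdot ζ J = J) : ζ = 1 := by
  by_contra hζ1
  -- minimal fixed member containing J
  obtain ⟨K, hKs, hmin⟩ := Set.Finite.exists_minimalFor id
    {L | L ∈ F ∧ IsFixedSet r L ∧ J ⊆ L} (Set.toFinite _)
    ⟨Set.univ, hF.1.2.2.1, univ_fixed, Set.subset_univ J⟩
  obtain ⟨hKF, hKfix, hJK⟩ := hKs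
  have hJKs : J ⊂ K := by
    refine ⟨hJK, ?_⟩
    intro h
    exact hnf (by
      have : J = K := Set.Subset.antisymm hJK h
      rw [this]; exact hKfix)
  obtain ⟨C, hC, hJC⟩ := Tr.exists_child hF hJ hKF hJKs
  have hCeq : zdot ζ C = C := by
    apply Tr.zdot_eq_of_meet hF hC.1
    obtain ⟨x, hx⟩ := Tr.nonempty hF hJ
    refine ⟨x, ?_, hJC hx⟩
    have : x ∈ zdot ζ J := by rw [hζ]; exact hx
    exact zdot_mono hJC this
  by_cases hCfix : IsFixedSet r C
  · have hCmem : C ∈ {L | L ∈ F ∧ IsFixedSet r L ∧ J ⊆ L} := ⟨hC.1, hCfix, hJC⟩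
    have h5 : K = C := Set.Subset.antisymm (hmin hCmem hC.2.1.1) hC.2.1.1
    exact hC.2.1.2 h5.subset
  · exact hζ1 (hF.2.2.2 K hKF hKfix C hC hCfix ζ hCeq)

/-- the fixed members of a tree hierarchy form a chain. -/
lemma Tr.fixed_chain (hF : IsTrHierarchyOn r (Set.univ : Set I) F) {K K' : Set I}
    (hK : K ∈ F) (hK' : K' ∈ F) (hKfix : IsFixedSet r K) (hK'fix : IsFixedSet r K') :
    K ⊆ K' ∨ K' ⊆ K := by
  by_contra hcon
  push_neg at hcon
  have hdisj : Disjoint K K' := by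
    rw [Set.disjoint_left]
    intro x hx hx'
    rcases Tr.nested hF hK hK' ⟨x, hx, hx'⟩ with h | h
    · exact hcon.1 h
    · exact hcon.2 h
  obtain ⟨M, hMs, hmin⟩ := Set.Finite.exists_minimalFor id
    {L | L ∈ F ∧ K ∪ K' ⊆ L} (Set.toFinite _)
    ⟨Set.univ, hF.1.2.2.1, Set.subset_univ _⟩
  obtain ⟨hMF, hKM⟩ := hMs
  have hKssM : K ⊂ M := by
    refine ⟨(Set.union_subset_iff.mp hKM).1, ?_⟩
    intro h
    obtain ⟨x, hx⟩ := Tr.nonempty hF hK'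
    exact Set.disjoint_right.mp hdisj hx (h (hKM (Set.mem_union_right K hx)))
  have hK'ssM : K' ⊂ M := by
    refine ⟨(Set.union_subset_iff.mp hKM).2, ?_⟩
    intro h
    obtain ⟨x, hx⟩ := Tr.nonempty hF hK
    exact Set.disjoint_left.mp hdisj hx (h (hKM (Set.mem_union_left K' hx)))
  obtain ⟨C, hC, hKC⟩ := Tr.exists_child hF hK hMF hKssM
  obtain ⟨C', hC', hK'C⟩ := Tr.exists_child hF hK' hMF hK'ssM
  have hMfix : IsFixedSet r M :=
    Tr.fixed_of_superset hF hKfix (Tr.nonempty hF hK) (Set.union_subset_iff.mp hKM).1 hMF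
  have hCfix : IsFixedSet r C :=
    Tr.fixed_of_superset hF hKfix (Tr.nonempty hF hK) hKC hC.1
  have hC'fix : IsFixedSet r C' :=
    Tr.fixed_of_superset hF hK'fix (Tr.nonempty hF hK') hK'C hC'.1
  have hCC' : C = C' := hF.2.2.1 M hMF hMfix C C' hC hC' hCfix hC'fix
  have hmem : C ∈ {L | L ∈ F ∧ K ∪ K' ⊆ L} := by
    refine ⟨hC.1, Set.union_subset hKC (hCC' ▸ hK'C)⟩
  have h5 : M = C := Set.Subset.antisymm (hmin hmem hC.2.1.1) hC.2.1.1
  exact hC.2.1.2 h5.subset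

/-- the orbit of a non-fixed member is an FT partition. -/
lemma Tr.orbit_FT (hr : 1 ≤ r) (hfree : FreeAct r I)
    (hF : IsTrHierarchyOn r (Set.univ : Set I) F) {J : Set I} (hJ : J ∈ F)
    (hnf : ¬IsFixedSet r J) :
    IsFTPartition r I {P | ∃ ζ : mu r, P = zdot ζ J} :=
  FT_orbit hr hfree (Tr.nonempty hF hJ) (fun ζ h => Tr.free_nonfixed hF hJ hnf h)
    (fun ζ h => Tr.zdot_eq_of_meet hF hJ h)

lemma Tr.orbit_card (hr : 1 ≤ r) (hfree : FreeAct r I)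
    (hF : IsTrHierarchyOn r (Set.univ : Set I) F) {J : Set I} (hJ : J ∈ F)
    (hnf : ¬IsFixedSet r J) (h2 : 2 ≤ J.ncard) :
    2 * r ≤ (⋃₀ {P | ∃ ζ : mu r, P = zdot ζ J}).ncard := by
  have hJmem : J ∈ {P | ∃ ζ : mu r, P = zdot ζ J} := ⟨1, (zdot_one J).symm⟩
  rw [FT_ncard hr (Tr.orbit_FT hr hfree hF hJ hnf) hJmem]
  calc 2 * r = r * 2 := by ring
    _ ≤ r * J.ncard := Nat.mul_le_mul_left r h2

lemma Tr.orbit_Coh (hr : 1 ≤ r) (hfree : FreeAct r I)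
    (hF : IsTrHierarchyOn r (Set.univ : Set I) F) {J : Set I} (hJ : J ∈ F)
    (hnf : ¬IsFixedSet r J) (h2 : 2 ≤ J.ncard) :
    Coh r ∅ {P | ∃ ζ : mu r, P = zdot ζ J} :=
  Coh_FT hr (Tr.orbit_FT hr hfree hF hJ hnf) (Tr.orbit_card hr hfree hF hJ hnf h2)

lemma Tr.not_fixed_translate (hr : 2 ≤ r) (hfree : FreeAct r I)
    (hF : IsTrHierarchyOn r (Set.univ : Set I) F) {J : Set I} (hJ : J ∈ F)
    (hnf : ¬IsFixedSet r J) (ζ : mu r) : ¬IsFixedSet r (zdot ζ J) := by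
  intro hfix
  obtain ⟨η, hη⟩ := exists_ne_one hr
  have hFT := Tr.orbit_FT (by omega) hfree hF hJ hnf
  exact hη (hFT.free (zdot ζ J) ⟨ζ, rfl⟩ η (hfix η))

end Aux4
section Aux5
set_option linter.unusedSectionVars false

open Set

variable {r} {I}
variable [MulAction (mu r) I] [Fintype I] {F : Set (Set I)}

lemma nontrivial_of_two_le {s : Set I} (h : 2 ≤ s.ncard) : s.Nontrivial := by
  obtain ⟨a, b, ha, hb, hab⟩ := (Set.one_lt_ncard_iff (Set.toFinite s)).mp (by omega)
  exact ⟨a, ha, b, hb, hab⟩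

lemma stable_univ : IsStable r I (Set.univ : Set I) := stable_iff_fixed.mpr univ_fixed

lemma mem_nOT {X : Set (I → ℂ)} : X ∈ nestedOfTree r I F ↔
    (∃ J, J ∈ F ∧ 2 ≤ J.ncard ∧ IsFixedSet r J ∧ J ≠ Set.univ ∧ X = XJ r I J) ∨
    (∃ J, J ∈ F ∧ 2 ≤ J.ncard ∧ ¬IsFixedSet r J ∧
      X = XJpi r I {P | ∃ ζ : mu r, P = zdot ζ J}) := by
  constructor
  · rintro (⟨J, hJ, h⟩ | ⟨J, hJ, h⟩)
    · exact Or.inl ⟨J, hJ, h⟩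
    · exact Or.inr ⟨J, hJ, h⟩
  · rintro (⟨J, hJ, h⟩ | ⟨J, hJ, h⟩)
    · exact Or.inl ⟨J, hJ, h⟩
    · exact Or.inr ⟨J, hJ, h⟩

lemma mapsTo_nested (hr : 2 ≤ r) [Nonempty I] (hfree : FreeAct r I)
    (hF : IsTrHierarchyOn r (Set.univ : Set I) F) :
    IsNested r I (nestedOfTree r I F) := by
  have hr1 : 1 ≤ r := by omega
  constructor
  · -- S_T ⊆ F*
    intro X hX
    rcases mem_nOT.mp hX with ⟨J, hJF, h2, hfix, hnu, rfl⟩ | ⟨J, hJF, h2, hnfix, rfl⟩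
    · have hst : IsStable r I J := stable_iff_fixed.mpr hfix
      refine ⟨Or.inl ⟨J, Set.nonempty_of_ncard_ne_zero (by omega), hst, rfl⟩, ?_⟩
      intro hmem
      rw [Set.mem_singleton_iff] at hmem
      exact hnu (XJ_inj hfree hst stable_univ hmem)
    · have hFT := Tr.orbit_FT hr1 hfree hF hJF hnfix
      have hcard := Tr.orbit_card hr1 hfree hF hJF hnfix h2
      refine ⟨Or.inr ⟨_, hFT, hcard, rfl⟩, ?_⟩
      intro hmem
      rw [Set.mem_singleton_iff] at hmem
      exact XJ_ne_XJpi hfree stable_univ Set.univ_nonempty (Coh_FT hr1 hFT hcard) hmem.symm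
  · -- antichain condition
    intro C hCS hcard hanti hmem
    set KS : Set (Set I) :=
      {K | K ∈ F ∧ 2 ≤ K.ncard ∧ IsFixedSet r K ∧ K ≠ Set.univ ∧ XJ r I K ∈ C} with hKSdef
    set PS : Set (Set I) :=
      {P | ∃ J, J ∈ F ∧ 2 ≤ J.ncard ∧ ¬IsFixedSet r J ∧
        XJpi r I {Q | ∃ ζ : mu r, Q = zdot ζ J} ∈ C ∧ ∃ ζ : mu r, P = zdot ζ J} with hPSdef
    set A : Set I := ⋃₀ KS with hAdef
    -- (i) KS is (at most) a single member
    have hKS1 : ∀ K ∈ KS, ∀ K' ∈ KS, K = K' := by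
      intro K hK K' hK'
      by_contra hne
      have hXne : XJ r I K ≠ XJ r I K' := by
        intro h
        exact hne (XJ_inj hfree (stable_iff_fixed.mpr hK.2.2.1)
          (stable_iff_fixed.mpr hK'.2.2.1) h)
      rcases Tr.fixed_chain hF hK.1 hK'.1 hK.2.2.1 hK'.2.2.1 with h | h
      · exact hanti _ hK'.2.2.2.2 _ hK.2.2.2.2 hXne.symm (XJ_anti h)
      · exact hanti _ hK.2.2.2.2 _ hK'.2.2.2.2 hXne (XJ_anti h)
    -- parts are in F
    have hPSF : ∀ P ∈ PS, P ∈ F := by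
      rintro P ⟨J, hJF, -, -, -, ζ, rfl⟩
      exact hF.2.1 ζ J hJF
    -- (ii) PS is pairwise disjoint
    have hPSsub : ∀ P ∈ PS, ∀ Q ∈ PS, P ⊆ Q → P = Q := by
      rintro P ⟨J, hJF, h2, hnfix, hXC, ζ, rfl⟩ Q ⟨J', hJ'F, h2', hnfix', hX'C, η, rfl⟩ hsub
      by_cases hXX' : XJpi r I {Q | ∃ τ : mu r, Q = zdot τ J}
          = XJpi r I {Q | ∃ τ : mu r, Q = zdot τ J'}
      · have horb : {Q | ∃ τ : mu r, Q = zdot τ J} = {Q | ∃ τ : mu r, Q = zdot τ J'} := by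
          have := Ysp_inj hfree (Tr.orbit_Coh hr1 hfree hF hJF hnfix h2)
            (Tr.orbit_Coh hr1 hfree hF hJ'F hnfix' h2')
            (by rw [← XJpi_eq_Ysp, ← XJpi_eq_Ysp]; exact hXX')
          exact this.2
        have hQmem : zdot η J' ∈ {Q | ∃ τ : mu r, Q = zdot τ J} := by
          rw [horb]; exact ⟨η, rfl⟩
        obtain ⟨τ, hτ⟩ := hQmem
        apply Set.eq_of_subset_of_ncard_le hsub
        rw [hτ, zdot_ncard, zdot_ncard]
      · -- distinct elements of the antichain: derive inclusion of subspaces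
        exfalso
        apply hanti _ hX'C _ hXC (fun h => hXX' h.symm)
        apply XJpi_mono
        rintro R ⟨τ, rfl⟩
        refine ⟨zdot (τ * ζ⁻¹ * η) J', ⟨τ * ζ⁻¹ * η, rfl⟩, ?_⟩
        have h1 : zdot τ J = zdot (τ * ζ⁻¹) (zdot ζ J) := by
          rw [zdot_zdot, mul_assoc, inv_mul_cancel, mul_one]
        have hh2 : zdot (τ * ζ⁻¹ * η) J' = zdot (τ * ζ⁻¹) (zdot η J') := by
          rw [zdot_zdot]
        rw [h1, hh2]
        exact zdot_mono hsub
    have hPSdisj : PS.PairwiseDisjoint id := by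
      intro P hP Q hQ hne
      simp only [Function.onFun, id_eq]
      rw [Set.disjoint_left]
      intro x hxP hxQ
      rcases Tr.nested hF (hPSF P hP) (hPSF Q hQ) ⟨x, hxP, hxQ⟩ with h | h
      · exact hne (hPSsub P hP Q hQ h)
      · exact hne (hPSsub Q hQ P hP h).symm
    -- (iii) parts avoid A
    have hAd : ∀ P ∈ PS, ∀ x ∈ P, x ∉ A := by
      rintro P hP x hxP ⟨K, hK, hxK⟩
      obtain ⟨J, hJF, h2, hnfix, hXC, ζ, rfl⟩ := hP
      rcases Tr.nested hF (hPSF _ ⟨J, hJF, h2, hnfix, hXC, ζ, rfl⟩) hK.1 ⟨x, hxP, hxK⟩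
        with h | h
      · -- ζJ ⊆ K : then XJ K ⊆ XJpi orb J, contradicting the antichain
        have hsub : XJ r I K ⊆ XJpi r I {Q | ∃ τ : mu r, Q = zdot τ J} := by
          rw [XJ_subset_XJpi_iff hfree (stable_iff_fixed.mpr hK.2.2.1)
            (Tr.orbit_Coh hr1 hfree hF hJF hnfix h2)]
          rintro y ⟨R, ⟨τ, rfl⟩, hy⟩
          have h1 : zdot τ J = zdot (τ * ζ⁻¹) (zdot ζ J) := by
            rw [zdot_zdot, mul_assoc, inv_mul_cancel, mul_one]
          rw [h1] at hy
          have h2' : y ∈ zdot (τ * ζ⁻¹) K := zdot_mono h hy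
          rwa [hK.2.2.1 (τ * ζ⁻¹)] at h2'
        have hXne : XJ r I K ≠ XJpi r I {Q | ∃ τ : mu r, Q = zdot τ J} :=
          XJ_ne_XJpi hfree (stable_iff_fixed.mpr hK.2.2.1)
            (Set.nonempty_of_ncard_ne_zero (by have := hK.2.1; omega))
            (Tr.orbit_Coh hr1 hfree hF hJF hnfix h2)
        exact hanti _ hK.2.2.2.2 _ hXC hXne hsub
      · -- K ⊆ ζJ: then ζJ is fixed, contradiction
        have : IsFixedSet r (zdot ζ J) :=
          Tr.fixed_of_superset hF hK.2.2.1
            (Set.nonempty_of_ncard_ne_zero (by have := hK.2.1; omega)) h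
            (hPSF _ ⟨J, hJF, h2, hnfix, hXC, ζ, rfl⟩)
        exact Tr.not_fixed_translate hr hfree hF hJF hnfix ζ this
    -- intersection is a Ysp
    have hInter : ⋂₀ (C : Set (Set (I → ℂ))) = Ysp r A PS := by
      obtain ⟨Y₀, hY₀⟩ := Finset.card_pos.mp (by omega : 0 < C.card)
      ext z
      rw [Set.mem_sInter]
      constructor
      · intro hz
        refine ⟨?_, ?_, ?_⟩
        · rcases mem_nOT.mp (hCS hY₀) with ⟨J, hJ, h⟩ | ⟨J, hJ, h⟩
          · have hh := hz _ hY₀; rw [h.2.2.2] at hh; exact hh.1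
          · have hh := hz _ hY₀; rw [h.2.2] at hh; exact hh.1
        · rintro a ⟨K, hK, haK⟩
          exact (hz _ hK.2.2.2.2).2 a haK
        · rintro P ⟨J, hJF, h2, hnfix, hXC, ζ, rfl⟩ j hj j' hj'
          exact (hz _ hXC).2 _ ⟨ζ, rfl⟩ j hj j' hj'
      · intro hz Y hY
        rcases mem_nOT.mp (hCS hY) with ⟨J, hJF, h2, hfix, hnu, rfl⟩ |
          ⟨J, hJF, h2, hnfix, rfl⟩
        · exact ⟨hz.1, fun j hj => hz.2.1 j ⟨J, ⟨hJF, h2, hfix, hnu, hY⟩, hj⟩⟩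
        · refine ⟨hz.1, ?_⟩
          rintro Q ⟨ζ, rfl⟩ j hj j' hj'
          exact hz.2.2 _ ⟨J, hJF, h2, hnfix, hY, ζ, rfl⟩ j hj j' hj'
    -- coherence
    have hCoh : Coh r A PS := by
      refine ⟨?_, ?_, hPSdisj, ?_, ?_, hAd⟩
      · apply stable_sUnion
        intro ζ K hK
        rw [stable_iff_fixed.mp (stable_iff_fixed.mpr hK.2.2.1) ζ]
        exact hK
      · rintro P ⟨J, hJF, h2, hnfix, hXC, ζ, rfl⟩
        apply nontrivial_of_two_le
        rw [zdot_ncard]; exact h2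
      · rintro ζ' P ⟨J, hJF, h2, hnfix, hXC, ζ, rfl⟩
        exact ⟨J, hJF, h2, hnfix, hXC, ζ' * ζ, (zdot_zdot ζ' ζ J)⟩
      · rintro P ⟨J, hJF, h2, hnfix, hXC, ζ, rfl⟩ η hη
        exact (Tr.orbit_FT hr1 hfree hF hJF hnfix).free (zdot ζ J) ⟨ζ, rfl⟩ η hη
    -- final contradiction
    rw [hInter] at hmem
    obtain ⟨Y, hY, Y', hY', hYY'⟩ := Finset.one_lt_card.mp (by omega : 1 < C.card)
    rcases hmem with ⟨K', hK'ne, hK'st, hEq⟩ | ⟨π'', hFT'', hcard'', hEq⟩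
    · rw [XJ_eq_Ysp] at hEq
      obtain ⟨hAeq, hPSeq⟩ := Ysp_inj hfree hCoh (Coh_XJ hK'st) hEq
      -- some element of C must be of XJpi type, giving a member of PS
      have hB : ∀ Z ∈ C, ∃ J, J ∈ F ∧ 2 ≤ J.ncard ∧ IsFixedSet r J ∧ J ≠ Set.univ ∧
          Z = XJ r I J := by
        intro Z hZ
        rcases mem_nOT.mp (hCS hZ) with h | ⟨J, hJF, h2, hnfix, rfl⟩
        · exact h
        · exfalso
          have : J ∈ PS := ⟨J, hJF, h2, hnfix, hZ, 1, (zdot_one J).symm⟩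
          rw [hPSeq] at this
          exact this
      obtain ⟨K1, hK1F, h21, hfix1, hnu1, rfl⟩ := hB Y hY
      obtain ⟨K2, hK2F, h22, hfix2, hnu2, rfl⟩ := hB Y' hY'
      exact hYY' (by rw [hKS1 K1 ⟨hK1F, h21, hfix1, hnu1, hY⟩ K2 ⟨hK2F, h22, hfix2, hnu2, hY'⟩])
    · rw [XJpi_eq_Ysp] at hEq
      obtain ⟨hAeq, hPSeq⟩ := Ysp_inj hfree hCoh (Coh_FT hr1 hFT'' hcard'') hEq
      have hB : ∀ Z ∈ C, ∃ J, J ∈ F ∧ 2 ≤ J.ncard ∧ ¬IsFixedSet r J ∧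
          Z = XJpi r I {P | ∃ ζ : mu r, P = zdot ζ J} := by
        intro Z hZ
        rcases mem_nOT.mp (hCS hZ) with ⟨K, hKF, h2, hfix, hnu, rfl⟩ | h
        · exfalso
          have hKA : K ⊆ A := fun x hx => ⟨K, ⟨hKF, h2, hfix, hnu, hZ⟩, hx⟩
          rw [hAeq] at hKA
          obtain ⟨x, hx⟩ := Set.nonempty_of_ncard_ne_zero (by omega : K.ncard ≠ 0)
          exact hKA hx
        · exact h
      obtain ⟨J1, hJ1F, h21, hnf1, rfl⟩ := hB Y hY
      obtain ⟨J2, hJ2F, h22, hnf2, rfl⟩ := hB Y' hY'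
      have horb : ∀ (J : Set I), J ∈ F → 2 ≤ J.ncard → ¬IsFixedSet r J →
          XJpi r I {P | ∃ ζ : mu r, P = zdot ζ J} ∈ C →
          {P | ∃ ζ : mu r, P = zdot ζ J} = π'' := by
        intro J hJF h2 hnfix hXC
        have hsub : {P | ∃ ζ : mu r, P = zdot ζ J} ⊆ π'' := by
          rw [← hPSeq]
          rintro P ⟨ζ, rfl⟩
          exact ⟨J, hJF, h2, hnfix, hXC, ζ, rfl⟩
        apply Set.eq_of_subset_of_ncard_le hsub
        rw [hFT''.card, (Tr.orbit_FT hr1 hfree hF hJF hnfix).card]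
      rw [horb J1 hJ1F h21 hnf1 hY, ← horb J2 hJ2F h22 hnf2 hY'] at hYY'
      exact hYY' rfl

end Aux5
section Aux6
set_option linter.unusedSectionVars false

open Set

variable {r} {I}
variable [MulAction (mu r) I] [Fintype I]

lemma nOT_inj (hr : 2 ≤ r) (hfree : FreeAct r I) {F F' : Set (Set I)}
    (hF : IsTrHierarchyOn r (Set.univ : Set I) F)
    (hF' : IsTrHierarchyOn r (Set.univ : Set I) F')
    (h : nestedOfTree r I F = nestedOfTree r I F') : F ⊆ F' := by
  have hr1 : 1 ≤ r := by omega
  intro J hJ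
  by_cases h1 : 2 ≤ J.ncard
  · by_cases hfix : IsFixedSet r J
    · by_cases hu : J = Set.univ
      · rw [hu]; exact hF'.1.2.2.1
      · have hmem : XJ r I J ∈ nestedOfTree r I F :=
          mem_nOT.mpr (Or.inl ⟨J, hJ, h1, hfix, hu, rfl⟩)
        rw [h] at hmem
        rcases mem_nOT.mp hmem with ⟨K, hKF', h2, hfixK, hnuK, hEq⟩ |
          ⟨K, hKF', h2, hnfixK, hEq⟩
        · rw [XJ_inj hfree (stable_iff_fixed.mpr hfix) (stable_iff_fixed.mpr hfixK) hEq]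
          exact hKF'
        · exact absurd hEq (XJ_ne_XJpi hfree (stable_iff_fixed.mpr hfix)
            (Set.nonempty_of_ncard_ne_zero (by omega))
            (Tr.orbit_Coh hr1 hfree hF' hKF' hnfixK h2))
    · have hmem : XJpi r I {P | ∃ ζ : mu r, P = zdot ζ J} ∈ nestedOfTree r I F :=
        mem_nOT.mpr (Or.inr ⟨J, hJ, h1, hfix, rfl⟩)
      rw [h] at hmem
      rcases mem_nOT.mp hmem with ⟨K, hKF', h2, hfixK, hnuK, hEq⟩ |
        ⟨K, hKF', h2, hnfixK, hEq⟩
      · exact absurd hEq.symm (XJ_ne_XJpi hfree (stable_iff_fixed.mpr hfixK)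
          (Set.nonempty_of_ncard_ne_zero (by omega))
          (Tr.orbit_Coh hr1 hfree hF hJ hfix h1))
      · have horb := (Ysp_inj hfree (Tr.orbit_Coh hr1 hfree hF hJ hfix h1)
          (Tr.orbit_Coh hr1 hfree hF' hKF' hnfixK h2)
          (by rw [← XJpi_eq_Ysp, ← XJpi_eq_Ysp]; exact hEq)).2
        have hJmem : J ∈ {P | ∃ ζ : mu r, P = zdot ζ K} := by
          rw [← horb]; exact ⟨1, (zdot_one J).symm⟩
        obtain ⟨ζ, rfl⟩ := hJmem
        exact hF'.2.1 ζ K hKF'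
  · have hpos : 0 < J.ncard := (Set.ncard_pos (Set.toFinite J)).mpr (Tr.nonempty hF hJ)
    have : J.ncard = 1 := by omega
    obtain ⟨i, rfl⟩ := Set.ncard_eq_one.mp this
    exact hF'.1.2.1 i (Set.mem_univ i)

/-- pair version of the nestedness condition. -/
lemma nested_pair {S : Set (Set (I → ℂ))} (hS : IsNested r I S) {X Y : Set (I → ℂ)}
    (hX : X ∈ S) (hY : Y ∈ S) (hne : X ≠ Y) (h1 : ¬X ⊆ Y) (h2 : ¬Y ⊆ X) :
    X ∩ Y ∉ Fcal r I := by
  classical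
  have key := hS.2 {X, Y} ?_ ?_ ?_
  · have : ⋂₀ (({X, Y} : Finset (Set (I → ℂ))) : Set (Set (I → ℂ))) = X ∩ Y := by
      simp
    rwa [this] at key
  · intro Z hZ
    rcases Finset.mem_insert.mp hZ with rfl | hZ
    · exact hX
    · rw [Finset.mem_singleton.mp hZ]; exact hY
  · rw [Finset.card_insert_of_notMem (by simp [hne]), Finset.card_singleton]
  · intro Z hZm Z' hZ'm hne'
    rcases Finset.mem_insert.mp hZm with rfl | hZ1 <;>
      rcases Finset.mem_insert.mp hZ'm with rfl | hZ'1
    · exact absurd rfl hne'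
    · rw [Finset.mem_singleton.mp hZ'1]; exact h1
    · rw [Finset.mem_singleton.mp hZ1]; exact h2
    · rw [Finset.mem_singleton.mp hZ1, Finset.mem_singleton.mp hZ'1] at hne' ⊢
      exact absurd rfl hne'

lemma XJ_inter {K K' : Set I} : XJ r I K ∩ XJ r I K' = XJ r I (K ∪ K') := by
  ext z
  constructor
  · rintro ⟨⟨hV, h1⟩, ⟨-, h2⟩⟩
    refine ⟨hV, ?_⟩
    rintro j (hj | hj)
    · exact h1 j hj
    · exact h2 j hj
  · rintro ⟨hV, hz⟩
    exact ⟨⟨hV, fun j hj => hz j (Or.inl hj)⟩, ⟨hV, fun j hj => hz j (Or.inr hj)⟩⟩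

lemma nested_XJ_chain {S : Set (Set (I → ℂ))} (hS : IsNested r I S) (hfree : FreeAct r I)
    {K K' : Set I} (hK : IsStable r I K) (hKne : K.Nonempty) (hK' : IsStable r I K')
    (hK'ne : K'.Nonempty) (hXK : XJ r I K ∈ S) (hXK' : XJ r I K' ∈ S) :
    K ⊆ K' ∨ K' ⊆ K := by
  by_contra hcon
  push_neg at hcon
  have hne : XJ r I K ≠ XJ r I K' := fun h => hcon.1 ((XJ_inj hfree hK hK' h).subset)
  apply nested_pair hS hXK hXK' hne
    (fun h => hcon.2 ((XJ_subset_iff hfree hK hK').mp h))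
    (fun h => hcon.1 ((XJ_subset_iff hfree hK' hK).mp h))
  rw [XJ_inter]
  exact Or.inl ⟨K ∪ K', hKne.mono Set.subset_union_left, stable_union hK hK', rfl⟩

lemma nested_XJ_XJpi (hr1 : 1 ≤ r) {S : Set (Set (I → ℂ))} (hS : IsNested r I S)
    (hfree : FreeAct r I) {K : Set I} (hK : IsStable r I K) (hKne : K.Nonempty)
    {π : Set (Set I)} (hFT : IsFTPartition r I π) (hcπ : 2 * r ≤ (⋃₀ π).ncard)
    (hXK : XJ r I K ∈ S) (hXπ : XJpi r I π ∈ S) {P : Set I} (hP : P ∈ π)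
    (hmeets : (P ∩ K).Nonempty) : P ⊆ K := by
  by_contra hPK
  have hCoh := Coh_FT hr1 hFT hcπ
  have hne : XJ r I K ≠ XJpi r I π := XJ_ne_XJpi hfree hK hKne hCoh
  have hns1 : ¬XJ r I K ⊆ XJpi r I π := by
    intro h
    exact hPK (fun x hx => (XJ_subset_XJpi_iff hfree hK hCoh).mp h ⟨P, hP, hx⟩)
  have hns2 : ¬XJpi r I π ⊆ XJ r I K := XJpi_not_subset_XJ hfree hKne hCoh
  apply nested_pair hS hXK hXπ hne hns1 hns2
  have heq : XJ r I K ∩ XJpi r I π = XJ r I (K ∪ ⋃₀ π) := by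
    obtain ⟨x₀, hx₀P, hx₀K⟩ := hmeets
    ext z
    constructor
    · rintro ⟨⟨hV, h1⟩, ⟨-, h2⟩⟩
      refine ⟨hV, ?_⟩
      have hPzero : ∀ p ∈ P, z p = 0 := by
        intro p hp
        rw [h2 P hP p hp x₀ hx₀P]
        exact h1 x₀ hx₀K
      rintro j (hj | ⟨Q, hQ, hj⟩)
      · exact h1 j hj
      · obtain ⟨ζ, rfl⟩ := hFT.trans P hP Q hQ
        obtain ⟨p, hp, rfl⟩ := hj
        rw [hV ζ p, hPzero p hp, mul_zero]
    · rintro ⟨hV, hz⟩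
      refine ⟨⟨hV, fun j hj => hz j (Or.inl hj)⟩, ⟨hV, ?_⟩⟩
      intro Q hQ j hj j' hj'
      rw [hz j (Or.inr ⟨Q, hQ, hj⟩), hz j' (Or.inr ⟨Q, hQ, hj'⟩)]
  rw [heq]
  exact Or.inl ⟨K ∪ ⋃₀ π, hKne.mono Set.subset_union_left,
    stable_union hK (FT_sUnion_stable hFT), rfl⟩

end Aux6
section Aux7
set_option linter.unusedSectionVars false

open Set

variable {r} {I}
variable [MulAction (mu r) I] [Fintype I]

lemma nested_XJpi_cross (hr1 : 1 ≤ r) {S : Set (Set (I → ℂ))} (hS : IsNested r I S)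
    (hfree : FreeAct r I) {π π' : Set (Set I)} (hFT : IsFTPartition r I π)
    (hFT' : IsFTPartition r I π') (hcπ : 2 * r ≤ (⋃₀ π).ncard)
    (hcπ' : 2 * r ≤ (⋃₀ π').ncard) (hXπ : XJpi r I π ∈ S) (hXπ' : XJpi r I π' ∈ S)
    {P P' : Set I} (hP : P ∈ π) (hP' : P' ∈ π') {x₀ : I} (hx₀ : x₀ ∈ P ∩ P')
    (h1 : ¬P ⊆ P') (h2 : ¬P' ⊆ P) : False := by
  have hCoh := Coh_FT hr1 hFT hcπ
  have hCoh' := Coh_FT hr1 hFT' hcπ'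
  set R : I → I → Prop :=
    Relation.EqvGen (fun a b => ∃ Q, (Q ∈ π ∨ Q ∈ π') ∧ a ∈ Q ∧ b ∈ Q) with hRdef
  have e2 : ∀ (ζ : mu r) (a b : I), R a b → R (ζ • a) (ζ • b) := by
    intro ζ a b hab
    induction hab with
    | rel x y hxy =>
      obtain ⟨Q, hQ, hx, hy⟩ := hxy
      apply Relation.EqvGen.rel
      refine ⟨zdot ζ Q, ?_, ⟨x, hx, rfl⟩, ⟨y, hy, rfl⟩⟩
      rcases hQ with h | h
      · exact Or.inl (hFT.stab ζ Q h)
      · exact Or.inr (hFT'.stab ζ Q h)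
    | refl x => exact Relation.EqvGen.refl _
    | symm x y _ ih => exact Relation.EqvGen.symm _ _ ih
    | trans x y z _ _ ih1 ih2 => exact Relation.EqvGen.trans _ _ _ ih1 ih2
  have e1 : ∀ z, z ∈ XJpi r I π ∩ XJpi r I π' → ∀ a b, R a b → z a = z b := by
    rintro z ⟨hz, hz'⟩ a b hab
    induction hab with
    | rel x y hxy =>
      obtain ⟨Q, hQ, hx, hy⟩ := hxy
      rcases hQ with h | h
      · exact hz.2 Q h x hx y hy
      · exact hz'.2 Q h x hx y hy
    | refl x => rfl
    | symm x y _ ih => exact ih.symm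
    | trans x y w _ _ ih1 ih2 => exact ih1.trans ih2
  have hne : XJpi r I π ≠ XJpi r I π' := by
    intro h
    have heq := (Ysp_inj hfree hCoh hCoh'
      (by rw [← XJpi_eq_Ysp, ← XJpi_eq_Ysp]; exact h)).2
    rw [heq] at hP
    exact h1 ((pd_eq hFT'.disj hP hP' hx₀.1 hx₀.2).subset)
  have hns1 : ¬XJpi r I π ⊆ XJpi r I π' := by
    intro h
    obtain ⟨Q, hQ, hsub⟩ := (XJpi_subset_iff hfree hCoh hCoh').mp h P' hP'
    have hQP : Q = P := pd_eq hFT.disj hQ hP (hsub hx₀.2) hx₀.1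
    exact h2 (hQP ▸ hsub)
  have hns2 : ¬XJpi r I π' ⊆ XJpi r I π := by
    intro h
    obtain ⟨Q, hQ, hsub⟩ := (XJpi_subset_iff hfree hCoh' hCoh).mp h P hP
    have hQP : Q = P' := pd_eq hFT'.disj hQ hP' (hsub hx₀.1) hx₀.2
    exact h1 (hQP ▸ hsub)
  have hInt := nested_pair hS hXπ hXπ' hne hns1 hns2
  have hPC : ∀ p ∈ P, R x₀ p := fun p hp =>
    Relation.EqvGen.rel _ _ ⟨P, Or.inl hP, hx₀.1, hp⟩
  have hP'C : ∀ p ∈ P', R x₀ p := fun p hp =>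
    Relation.EqvGen.rel _ _ ⟨P', Or.inr hP', hx₀.2, hp⟩
  by_cases hdbl : ∃ (y : I) (ζ : mu r), ζ ≠ 1 ∧ R y (ζ • y)
  · -- zero-forcing case : the intersection is X_{J ∪ J'}
    obtain ⟨y, ζ, hζ, hRy⟩ := hdbl
    have hyQ : ∃ Q, (Q ∈ π ∨ Q ∈ π') ∧ y ∈ Q := by
      have hyne : y ≠ ζ • y := fun h => hζ (hfree ζ y h.symm)
      have ext : ∀ a b, R a b → a = b ∨
          ((∃ Q, (Q ∈ π ∨ Q ∈ π') ∧ a ∈ Q) ∧ (∃ Q, (Q ∈ π ∨ Q ∈ π') ∧ b ∈ Q)) := by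
        intro a b hab
        induction hab with
        | rel x y hxy =>
          obtain ⟨Q, hQ, hx, hy⟩ := hxy
          exact Or.inr ⟨⟨Q, hQ, hx⟩, ⟨Q, hQ, hy⟩⟩
        | refl x => exact Or.inl rfl
        | symm x y _ ih =>
          rcases ih with h | h
          · exact Or.inl h.symm
          · exact Or.inr ⟨h.2, h.1⟩
        | trans x y w _ _ ih1 ih2 =>
          rcases ih1 with h | h
          · rw [h]; exact ih2
          · rcases ih2 with h' | h'
            · rw [← h']; exact Or.inr h
            · exact Or.inr ⟨h.1, h'.2⟩
      rcases ext y (ζ • y) hRy with h | h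
      · exact absurd h hyne
      · exact h.1
    obtain ⟨Qy, hQy, hyQy⟩ := hyQ
    have hzero : ∀ z ∈ XJpi r I π ∩ XJpi r I π', ∀ u ∈ ⋃₀ π ∪ ⋃₀ π', z u = 0 := by
      intro z hz u hu
      have hVz : z ∈ Vsp r I := hz.1.1
      have hzy : z y = 0 := by
        have h3 : z y = z (ζ • y) := e1 z hz y (ζ • y) hRy
        rw [hVz ζ y] at h3
        have hc : ((ζ : ℂˣ) : ℂ) ≠ 1 := by
          intro hcc; apply hζ; apply mu_coe_inj; rw [hcc, mu_coe_one]
        have h4 : (1 - ((ζ : ℂˣ) : ℂ)) * z y = 0 := by linear_combination h3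
        rcases mul_eq_zero.mp h4 with h5 | h5
        · exact absurd (by linear_combination -h5) hc
        · exact h5
      have hzx₀ : z x₀ = 0 := by
        rcases hQy with hQy1 | hQy1
        · obtain ⟨τ, rfl⟩ := hFT.trans P hP Qy hQy1
          have hR1 : R y (τ • x₀) :=
            Relation.EqvGen.rel _ _ ⟨zdot τ P, Or.inl (hFT.stab τ P hP), hyQy,
              ⟨x₀, hx₀.1, rfl⟩⟩
          have h6 : z (τ • x₀) = 0 := by rw [← e1 z hz y (τ • x₀) hR1]; exact hzy
          rw [hVz τ x₀] at h6
          rcases mul_eq_zero.mp h6 with h7 | h7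
          · exact absurd h7 (mu_coe_ne_zero τ)
          · exact h7
        · obtain ⟨τ, rfl⟩ := hFT'.trans P' hP' Qy hQy1
          have hR1 : R y (τ • x₀) :=
            Relation.EqvGen.rel _ _ ⟨zdot τ P', Or.inr (hFT'.stab τ P' hP'), hyQy,
              ⟨x₀, hx₀.2, rfl⟩⟩
          have h6 : z (τ • x₀) = 0 := by rw [← e1 z hz y (τ • x₀) hR1]; exact hzy
          rw [hVz τ x₀] at h6
          rcases mul_eq_zero.mp h6 with h7 | h7
          · exact absurd h7 (mu_coe_ne_zero τ)
          · exact h7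
      rcases hu with ⟨Q, hQ, hu⟩ | ⟨Q, hQ, hu⟩
      · obtain ⟨σ, rfl⟩ := hFT.trans P hP Q hQ
        obtain ⟨p, hp, rfl⟩ := hu
        rw [hVz σ p, ← e1 z hz x₀ p (hPC p hp), hzx₀, mul_zero]
      · obtain ⟨σ, rfl⟩ := hFT'.trans P' hP' Q hQ
        obtain ⟨p, hp, rfl⟩ := hu
        rw [hVz σ p, ← e1 z hz x₀ p (hP'C p hp), hzx₀, mul_zero]
    apply hInt
    have heq : XJpi r I π ∩ XJpi r I π' = XJ r I (⋃₀ π ∪ ⋃₀ π') := by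
      ext z
      constructor
      · intro hz
        exact ⟨hz.1.1, hzero z hz⟩
      · rintro ⟨hV, hz⟩
        constructor
        · refine ⟨hV, ?_⟩
          intro Q hQ j hj j' hj'
          rw [hz j (Or.inl ⟨Q, hQ, hj⟩), hz j' (Or.inl ⟨Q, hQ, hj'⟩)]
        · refine ⟨hV, ?_⟩
          intro Q hQ j hj j' hj'
          rw [hz j (Or.inr ⟨Q, hQ, hj⟩), hz j' (Or.inr ⟨Q, hQ, hj'⟩)]
    rw [heq]
    refine Or.inl ⟨⋃₀ π ∪ ⋃₀ π', ?_, stable_union (FT_sUnion_stable hFT)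
      (FT_sUnion_stable hFT'), rfl⟩
    exact ⟨x₀, Or.inl ⟨P, hP, hx₀.1⟩⟩
  · -- no doubling : the intersection is an X_{J,π} for the component partition
    have hnd : ∀ (y : I) (ζ : mu r), R y (ζ • y) → ζ = 1 := by
      intro y ζ h
      by_contra hne1
      exact hdbl ⟨y, ζ, hne1, h⟩
    set Cl : Set I := {c | R x₀ c} with hCldef
    have hCx₀ : x₀ ∈ Cl := Relation.EqvGen.refl _
    have e5 : ∀ (ζ : mu r) (c : I), c ∈ zdot ζ Cl ↔ R (ζ • x₀) c := by
      intro ζ c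
      rw [mem_zdot]
      constructor
      · intro h
        have := e2 ζ _ _ h
        rwa [smul_inv_smul] at this
      · intro h
        have := e2 ζ⁻¹ _ _ h
        rwa [inv_smul_smul] at this
    have hfreeC : ∀ ζ : mu r, zdot ζ Cl = Cl → ζ = 1 := by
      intro ζ h
      have hmem : ζ • x₀ ∈ zdot ζ Cl := (e5 ζ _).mpr (Relation.EqvGen.refl _)
      rw [h] at hmem
      exact hnd x₀ ζ hmem
    have hmeet : ∀ ζ : mu r, (zdot ζ Cl ∩ Cl).Nonempty → zdot ζ Cl = Cl := by
      rintro ζ ⟨u, hu1, hu2⟩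
      have hR1 : R (ζ • x₀) u := (e5 ζ u).mp hu1
      have hR2 : R x₀ (ζ • x₀) := Relation.EqvGen.trans _ _ _ hu2
        (Relation.EqvGen.symm _ _ hR1)
      rw [hnd x₀ ζ hR2, zdot_one]
    have hρFT := FT_orbit hr1 hfree ⟨x₀, hCx₀⟩ hfreeC hmeet
    have hQsub : ∀ Q, (Q ∈ π ∨ Q ∈ π') → ∃ ζ : mu r, Q ⊆ zdot ζ Cl := by
      rintro Q (hQ | hQ)
      · obtain ⟨τ, rfl⟩ := hFT.trans P hP Q hQ
        exact ⟨τ, zdot_mono hPC⟩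
      · obtain ⟨τ, rfl⟩ := hFT'.trans P' hP' Q hQ
        exact ⟨τ, zdot_mono hP'C⟩
    have hcard2 : 2 * r ≤ (⋃₀ {Q | ∃ ζ : mu r, Q = zdot ζ Cl}).ncard := by
      refine le_trans hcπ (Set.ncard_le_ncard ?_ (Set.toFinite _))
      rintro u ⟨Q, hQ, hu⟩
      obtain ⟨ζ, hζ⟩ := hQsub Q (Or.inl hQ)
      exact ⟨zdot ζ Cl, ⟨ζ, rfl⟩, hζ hu⟩
    apply hInt
    have heq : XJpi r I π ∩ XJpi r I π'
        = XJpi r I {Q | ∃ ζ : mu r, Q = zdot ζ Cl} := by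
      ext z
      constructor
      · intro hz
        refine ⟨hz.1.1, ?_⟩
        rintro Q ⟨ζ, rfl⟩ j hj j' hj'
        have hR1 : R (ζ • x₀) j := (e5 ζ j).mp hj
        have hR2 : R (ζ • x₀) j' := (e5 ζ j').mp hj'
        exact e1 z hz j j' (Relation.EqvGen.trans _ _ _
          (Relation.EqvGen.symm _ _ hR1) hR2)
      · rintro ⟨hV, hz⟩
        constructor
        · refine ⟨hV, ?_⟩
          intro Q hQ j hj j' hj'
          obtain ⟨ζ, hζ⟩ := hQsub Q (Or.inl hQ)
          exact hz _ ⟨ζ, rfl⟩ j (hζ hj) j' (hζ hj')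
        · refine ⟨hV, ?_⟩
          intro Q hQ j hj j' hj'
          obtain ⟨ζ, hζ⟩ := hQsub Q (Or.inr hQ)
          exact hz _ ⟨ζ, rfl⟩ j (hζ hj) j' (hζ hj')
    rw [heq]
    exact Or.inr ⟨_, hρFT, hcard2, rfl⟩

end Aux7
section Aux8
set_option linter.unusedSectionVars false

open Set

variable {r} {I}
variable [MulAction (mu r) I] [Fintype I]

variable (r) in
/-- The tree hierarchy reconstructed from a nested set. -/
def recF (S : Set (Set (I → ℂ))) : Set (Set I) :=
  {J | J = Set.univ ∨ (∃ i : I, J = {i}) ∨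
    (IsStable r I J ∧ J.Nonempty ∧ XJ r I J ∈ S) ∨
    (∃ π : Set (Set I), IsFTPartition r I π ∧ 2 * r ≤ (⋃₀ π).ncard ∧
      XJpi r I π ∈ S ∧ J ∈ π)}

lemma S_rep {S : Set (Set (I → ℂ))} (hS : IsNested r I S) {X : Set (I → ℂ)} (hX : X ∈ S) :
    (∃ K, IsStable r I K ∧ K.Nonempty ∧ K ≠ Set.univ ∧ X = XJ r I K) ∨
    (∃ π, IsFTPartition r I π ∧ 2 * r ≤ (⋃₀ π).ncard ∧ X = XJpi r I π) := by
  have h := hS.1 hX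
  rcases h.1 with ⟨K, hne, hst, rfl⟩ | h2
  · refine Or.inl ⟨K, hst, hne, ?_, rfl⟩
    intro hu
    exact h.2 (by rw [hu]; exact Set.mem_singleton _)
  · exact Or.inr h2

lemma orb_eq_of_mem {π : Set (Set I)} (hFT : IsFTPartition r I π) {P : Set I} (hP : P ∈ π) :
    {Q | ∃ ζ : mu r, Q = zdot ζ P} = π := by
  apply Set.Subset.antisymm
  · rintro Q ⟨ζ, rfl⟩
    exact hFT.stab ζ P hP
  · intro Q hQ
    obtain ⟨ζ, hζ⟩ := hFT.trans P hP Q hQ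
    exact ⟨ζ, hζ.symm⟩

lemma part_not_fixed (hr : 2 ≤ r) {π : Set (Set I)} (hFT : IsFTPartition r I π)
    {P : Set I} (hP : P ∈ π) : ¬IsFixedSet r P := by
  intro hfix
  obtain ⟨ζ, hζ⟩ := exists_ne_one hr
  exact hζ (hFT.free P hP ζ (hfix ζ))

lemma recF_laminar (hr : 2 ≤ r) (hfree : FreeAct r I) {S : Set (Set (I → ℂ))}
    (hS : IsNested r I S) : IsLaminar (recF r S) := by
  have hr1 : 1 ≤ r := by omega
  -- key symmetric-case helper for the two nontrivial cases
  intro J hJ K hK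
  rcases hJ with rfl | ⟨i, rfl⟩ | hJA | ⟨π, hFT, hcπ, hXπ, hJπ⟩
  · exact Or.inr (Or.inl (Set.subset_univ K))
  · by_cases hi : i ∈ K
    · exact Or.inl (Set.singleton_subset_iff.mpr hi)
    · exact Or.inr (Or.inr (Set.disjoint_singleton_left.mpr hi))
  · rcases hK with rfl | ⟨i, rfl⟩ | hKA | ⟨π, hFT, hcπ, hXπ, hKπ⟩
    · exact Or.inl (Set.subset_univ J)
    · by_cases hi : i ∈ J
      · exact Or.inr (Or.inl (Set.singleton_subset_iff.mpr hi))
      · exact Or.inr (Or.inr (Set.disjoint_singleton_right.mpr hi))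
    · rcases nested_XJ_chain hS hfree hJA.1 hJA.2.1 hKA.1 hKA.2.1 hJA.2.2 hKA.2.2 with h | h
      · exact Or.inl h
      · exact Or.inr (Or.inl h)
    · -- J of XJ type, K a part
      by_cases hd : Disjoint J K
      · exact Or.inr (Or.inr hd)
      · obtain ⟨x, hxJ, hxK⟩ := Set.not_disjoint_iff.mp hd
        exact Or.inr (Or.inl (nested_XJ_XJpi hr1 hS hfree hJA.1 hJA.2.1 hFT hcπ hJA.2.2
          hXπ hKπ ⟨x, hxK, hxJ⟩))
  · rcases hK with rfl | ⟨i, rfl⟩ | hKA | ⟨π', hFT', hcπ', hXπ', hKπ'⟩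
    · exact Or.inl (Set.subset_univ J)
    · by_cases hi : i ∈ J
      · exact Or.inr (Or.inl (Set.singleton_subset_iff.mpr hi))
      · exact Or.inr (Or.inr (Set.disjoint_singleton_right.mpr hi))
    · by_cases hd : Disjoint J K
      · exact Or.inr (Or.inr hd)
      · obtain ⟨x, hxJ, hxK⟩ := Set.not_disjoint_iff.mp hd
        exact Or.inl (nested_XJ_XJpi hr1 hS hfree hKA.1 hKA.2.1 hFT hcπ hKA.2.2
          hXπ hJπ ⟨x, hxJ, hxK⟩)
    · -- part vs part
      by_cases hXX : XJpi r I π = XJpi r I π'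
      · have hππ' : π = π' := (Ysp_inj hfree (Coh_FT hr1 hFT hcπ) (Coh_FT hr1 hFT' hcπ')
          (by rw [← XJpi_eq_Ysp, ← XJpi_eq_Ysp]; exact hXX)).2
        subst hππ'
        by_cases hd : Disjoint J K
        · exact Or.inr (Or.inr hd)
        · obtain ⟨x, hxJ, hxK⟩ := Set.not_disjoint_iff.mp hd
          exact Or.inl (pd_eq hFT.disj hJπ hKπ' hxJ hxK).subset
      · by_cases hd : Disjoint J K
        · exact Or.inr (Or.inr hd)
        · obtain ⟨x, hxJ, hxK⟩ := Set.not_disjoint_iff.mp hd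
          by_cases hsub1 : J ⊆ K
          · exact Or.inl hsub1
          by_cases hsub2 : K ⊆ J
          · exact Or.inr (Or.inl hsub2)
          exact absurd (nested_XJpi_cross hr1 hS hfree hFT hFT' hcπ hcπ' hXπ hXπ'
            hJπ hKπ' ⟨hxJ, hxK⟩ hsub1 hsub2) (fun h => h)

lemma lam_nested {F : Set (Set I)} (hlam : IsLaminar F) {J K : Set I} (hJ : J ∈ F)
    (hK : K ∈ F) (h : (J ∩ K).Nonempty) : J ⊆ K ∨ K ⊆ J := by
  rcases hlam J hJ K hK with h1 | h1 | h1
  · exact Or.inl h1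
  · exact Or.inr h1
  · obtain ⟨x, hx1, hx2⟩ := h
    exact absurd hx2 (Set.disjoint_left.mp h1 hx1)

lemma lam_child_disjoint {F : Set (Set I)} (hlam : IsLaminar F) {C C' K : Set I}
    (hC : IsChild F C K) (hC' : IsChild F C' K) (hne : C ≠ C') : Disjoint C C' := by
  rw [Set.disjoint_left]
  intro x hx hx'
  rcases lam_nested hlam hC.1 hC'.1 ⟨x, hx, hx'⟩ with h | h
  · exact hne (hC.2.2 C' hC'.1 hC'.2.1 h).symm
  · exact hne (hC'.2.2 C hC.1 hC.2.1 h)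

lemma recF_mem_nonempty [Nonempty I] {S : Set (Set (I → ℂ))} {J : Set I}
    (hJ : J ∈ recF r S) : J.Nonempty := by
  rcases hJ with rfl | ⟨i, rfl⟩ | hJA | ⟨π, hFT, hcπ, hXπ, hJπ⟩
  · exact Set.univ_nonempty
  · exact Set.singleton_nonempty i
  · exact hJA.2.1
  · exact hFT.nonempty J hJπ

lemma recF_fixed_cases (hr : 2 ≤ r) (hfree : FreeAct r I) {S : Set (Set (I → ℂ))}
    {J : Set I} (hJ : J ∈ recF r S) (hfix : IsFixedSet r J) :
    J = Set.univ ∨ (IsStable r I J ∧ J.Nonempty ∧ XJ r I J ∈ S) := by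
  rcases hJ with rfl | ⟨i, rfl⟩ | hJA | ⟨π, hFT, hcπ, hXπ, hJπ⟩
  · exact Or.inl rfl
  · exfalso
    obtain ⟨ζ, hζ⟩ := exists_ne_one hr
    have h1 : zdot ζ {i} = {i} := hfix ζ
    rw [zdot_singleton] at h1
    exact hζ (hfree ζ i (Set.singleton_eq_singleton_iff.mp h1))
  · exact Or.inr hJA
  · exact absurd hfix (part_not_fixed hr hFT hJπ)

lemma recF_isTr (hr : 2 ≤ r) [Nonempty I] (hfree : FreeAct r I) {S : Set (Set (I → ℂ))}
    (hS : IsNested r I S) : IsTrHierarchyOn r (Set.univ : Set I) (recF r S) := by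
  have hr1 : 1 ≤ r := by omega
  have hlam := recF_laminar hr hfree hS
  refine ⟨⟨?_, ?_, ?_, hlam, ?_⟩, ?_, ?_, ?_⟩
  · exact fun J hJ => ⟨recF_mem_nonempty hJ, Set.subset_univ J⟩
  · exact fun i _ => Or.inr (Or.inl ⟨i, rfl⟩)
  · exact Or.inl rfl
  · -- at least two children
    intro K hK J hJ hJK hforall
    obtain ⟨i, hiK, hiJ⟩ := Set.exists_of_ssubset hJK
    have hsing : ({i} : Set I) ∈ recF r S := Or.inr (Or.inl ⟨i, rfl⟩)
    have hss : ({i} : Set I) ⊂ K := by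
      refine ⟨Set.singleton_subset_iff.mpr hiK, ?_⟩
      intro hKi
      obtain ⟨x, hx⟩ := recF_mem_nonempty hJ
      have : x = i := hKi (hJK.1 hx)
      exact hiJ (this ▸ hx)
    exact hiJ (hforall {i} hsing hss rfl)
  · -- zdot stability
    rintro ζ J (rfl | ⟨i, rfl⟩ | ⟨hst, hne, hXS⟩ | ⟨π, hFT, hcπ, hXπ, hJπ⟩)
    · rw [zdot_univ]; exact Or.inl rfl
    · rw [zdot_singleton]; exact Or.inr (Or.inl ⟨ζ • i, rfl⟩)
    · rw [stable_iff_fixed.mp hst ζ]; exact Or.inr (Or.inr (Or.inl ⟨hst, hne, hXS⟩))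
    · exact Or.inr (Or.inr (Or.inr ⟨π, hFT, hcπ, hXπ, hFT.stab ζ J hJπ⟩))
  · -- at most one fixed child
    intro K hK hKfix C C' hC hC' hCfix hC'fix
    by_contra hne
    have hCu : C ≠ Set.univ := by
      intro h
      rw [h] at hC
      exact hC.2.1.2 (Set.subset_univ K)
    have hC'u : C' ≠ Set.univ := by
      intro h
      rw [h] at hC'
      exact hC'.2.1.2 (Set.subset_univ K)
    have hCA := (recF_fixed_cases hr hfree hC.1 hCfix).resolve_left hCu
    have hC'A := (recF_fixed_cases hr hfree hC'.1 hC'fix).resolve_left hC'u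
    have hdisj := lam_child_disjoint hlam hC hC' hne
    rcases nested_XJ_chain hS hfree hCA.1 hCA.2.1 hC'A.1 hC'A.2.1 hCA.2.2 hC'A.2.2 with h | h
    · obtain ⟨x, hx⟩ := hCA.2.1
      exact Set.disjoint_left.mp hdisj hx (h hx)
    · obtain ⟨x, hx⟩ := hC'A.2.1
      exact Set.disjoint_right.mp hdisj hx (h hx)
  · -- non-fixed children are free
    rintro K hK hKfix C hC hCnfix ζ hζ
    rcases hC.1 with rfl | ⟨i, rfl⟩ | ⟨hst, hne, hXS⟩ | ⟨π, hFT, hcπ, hXπ, hCπ⟩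
    · exact absurd univ_fixed hCnfix
    · rw [zdot_singleton] at hζ
      exact hfree ζ i (Set.singleton_eq_singleton_iff.mp hζ)
    · exact absurd (stable_iff_fixed.mp hst) hCnfix
    · exact hFT.free C hCπ ζ hζ

end Aux8
section Aux9
set_option linter.unusedSectionVars false

open Set

variable {r} {I}
variable [MulAction (mu r) I] [Fintype I]

lemma nOT_recF (hr : 2 ≤ r) [Nonempty I] (hfree : FreeAct r I) {S : Set (Set (I → ℂ))}
    (hS : IsNested r I S) : nestedOfTree r I (recF r S) = S := by
  have hr1 : 1 ≤ r := by omega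
  apply Set.Subset.antisymm
  · intro X hX
    rcases mem_nOT.mp hX with ⟨J, hJrec, h2, hfix, hnu, rfl⟩ | ⟨J, hJrec, h2, hnfix, rfl⟩
    · rcases recF_fixed_cases hr hfree hJrec hfix with rfl | ⟨-, -, hXS⟩
      · exact absurd rfl hnu
      · exact hXS
    · rcases hJrec with rfl | ⟨i, rfl⟩ | ⟨hst, hne, hXS⟩ | ⟨π, hFT, hcπ, hXπ, hJπ⟩
      · exact absurd univ_fixed hnfix
      · rw [Set.ncard_singleton] at h2; omega
      · exact absurd (stable_iff_fixed.mp hst) hnfix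
      · rw [orb_eq_of_mem hFT hJπ]; exact hXπ
  · intro X hX
    rcases S_rep hS hX with ⟨K, hst, hne, hnu, rfl⟩ | ⟨π, hFT, hcπ, rfl⟩
    · apply mem_nOT.mpr
      refine Or.inl ⟨K, Or.inr (Or.inr (Or.inl ⟨hst, hne, hX⟩)), ?_,
        stable_iff_fixed.mp hst, hnu, rfl⟩
      have := stable_ncard hr1 hfree hst hne
      omega
    · obtain ⟨P₀, hP₀⟩ : π.Nonempty :=
        Set.nonempty_of_ncard_ne_zero (by rw [hFT.card]; omega)
      apply mem_nOT.mpr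
      refine Or.inr ⟨P₀, Or.inr (Or.inr (Or.inr ⟨π, hFT, hcπ, hX, hP₀⟩)), ?_,
        part_not_fixed hr hFT hP₀, ?_⟩
      · obtain ⟨a, ha, b, hb, hab⟩ := FT_part_nontrivial hr1 hFT hcπ hP₀
        exact (Set.one_lt_ncard_iff (Set.toFinite P₀)).mpr ⟨a, b, ha, hb, hab⟩
      · rw [orb_eq_of_mem hFT hP₀]

end Aux9

/--
Let `r ≥ 2` and let `I` be a nonempty finite set with a free
`μ_r`-action.  For every `T ∈ T(r,I)` the set `S_T` is a nested subset of `F*`, and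
`T ↦ S_T` is a bijection from `T(r,I)` onto the set of all nested subsets of `F*`.
-/
theorem trees_nested_sets_bijection (hr : 2 ≤ r) [Fintype I] [Nonempty I]
    (hfree : ∀ (ζ : mu r) (x : I), ζ • x = x → ζ = 1) :
    Set.BijOn (nestedOfTree r I) {F | IsTrHierarchyOn r (Set.univ : Set I) F}
      {S | IsNested r I S} := by
  refine ⟨fun F hF => mapsTo_nested hr hfree hF, ?_, ?_⟩
  · intro F hF F' hF' h
    exact Set.Subset.antisymm (nOT_inj hr hfree hF hF' h) (nOT_inj hr hfree hF' hF h.symm)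
  · intro S hSmem
    exact ⟨recF r S, recF_isTr hr hfree hSmem, nOT_recF hr hfree hSmem⟩

end
end

section
/- In the ring of formal power series in p_1, p_2, p_3, … with coefficients in ℂ[q]: exp(∑_{i≥1} (q^i/i) p_i) ∘ (∑_{d≥1} (μ(d)/d) log(1+p_d)) = ∏_{n≥1} (1+p_n)^{R_n/n}, where R_n := ∑_{d|n} μ(d) q^{n/d}, μ is the Möbius function, and (1+p_n)^{R_n/n} := exp((R_n/n) log(1+p_n)). (This identity is the combinatorial content of Lehrer's formula for the S_n-equivariant weight polynomials of the pure braid space quotients M(1,n).) -/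
open scoped Classical

noncomputable section

/-- `Λ̂(1)[q]`: formal power series in the variables `p_j` (indexed by `Sum.inl j`,
`j : ℕ+`) and the variable `q` (indexed by `Sum.inr ()`). -/
abbrev Lambda1Q : Type := MvPowerSeries (ℕ+ ⊕ Unit) ℂ

/-- The variable `q`. -/
def qv : Lambda1Q := MvPowerSeries.X (Sum.inr ())

/-- The variable `p_j`. -/
def pv (j : ℕ+) : Lambda1Q := MvPowerSeries.X (Sum.inl j)

/-- Coefficientwise infinite sum of a family of formal power series. -/
def seriesSum {σ : Type*} {α : Sort*} (F : α → MvPowerSeries σ ℂ) : MvPowerSeries σ ℂ :=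
  fun m => ∑ᶠ a : α, MvPowerSeries.coeff m (F a)

/-- Substitution of the family `φ` into a multivariate formal power series `f`:
the unique continuous `ℂ`-algebra homomorphism sending `X s` to `φ s`. -/
def ssubst {σ τ : Type*} (φ : σ → MvPowerSeries τ ℂ) (f : MvPowerSeries σ ℂ) :
    MvPowerSeries τ ℂ :=
  fun m => ∑ᶠ d : σ →₀ ℕ,
    MvPowerSeries.coeff d f * MvPowerSeries.coeff m (d.prod fun s k => φ s ^ k)

/-- `exp f = ∑_{n≥0} f^n/n!`. -/
def expS {σ : Type*} (f : MvPowerSeries σ ℂ) : MvPowerSeries σ ℂ :=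
  seriesSum fun n : ℕ => (n.factorial : ℂ)⁻¹ • f ^ n

/-- `log(1 + f) = ∑_{n≥1} (-1)^{n-1} f^n/n`. -/
def logOneAdd {σ : Type*} (f : MvPowerSeries σ ℂ) : MvPowerSeries σ ℂ :=
  seriesSum fun n : ℕ => ((-1 : ℂ) ^ n / (n + 1)) • f ^ (n + 1)

/-- The infinite product `∏_{n ≥ 0} F n`, computed coefficientwise as the limit of the
coefficients of the partial products (so `∏_{n ≥ 1} G n` is `seriesProd (fun n => G (n+1))`). -/
def seriesProd {σ : Type*} (F : ℕ → MvPowerSeries σ ℂ) : MvPowerSeries σ ℂ :=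
  fun m => Filter.limUnder Filter.atTop
    (fun N => MvPowerSeries.coeff m (∏ n ∈ Finset.range N, F n))

/-- Plethysm on `Λ̂(1)[q]`: `f ∘ g` is the unique continuous `ℂ[q]`-algebra homomorphism
in `f` sending each `p_i` to the series obtained from `g` by replacing each `p_j` by
`p_{ij}` and `q` by `q^i`. -/
def pleth1Q (f g : Lambda1Q) : Lambda1Q :=
  ssubst (fun v => match v with
    | Sum.inl i => ssubst (fun w => match w with
        | Sum.inl j => pv (i * j)
        | Sum.inr _ => qv ^ (i : ℕ)) g
    | Sum.inr _ => qv) f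

/-- `R_n = ∑_{d ∣ n} μ(d) q^{n/d}`. -/
def Rq (n : ℕ) : Lambda1Q :=
  ∑ d ∈ n.divisors, (ArithmeticFunction.moebius d : ℂ) • qv ^ (n / d)


namespace LehrerAux

open MvPowerSeries Finsupp Finset

variable {σ τ : Type*}

local notation "cf" => MvPowerSeries.coeff (R := ℂ)

lemma coeff_seriesSum {α : Sort*} (F : α → MvPowerSeries σ ℂ) (m : σ →₀ ℕ) :
    cf m (seriesSum F) = ∑ᶠ a, cf m (F a) := rfl

lemma seriesSum_congr {α : Sort*} {F G : α → MvPowerSeries σ ℂ} (h : ∀ a, F a = G a) :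
    seriesSum F = seriesSum G := by
  have : F = G := funext h
  rw [this]

/-- Pointwise (coefficientwise) summability of a family. -/
def Smm {α : Type*} (F : α → MvPowerSeries σ ℂ) : Prop :=
  ∀ m : σ →₀ ℕ, (Function.support fun a => cf m (F a)).Finite

lemma coeff_seriesSum_eq_sum {α : Type*} {F : α → MvPowerSeries σ ℂ} {m : σ →₀ ℕ}
    (s : Finset α) (h : ∀ a, cf m (F a) ≠ 0 → a ∈ s) :
    cf m (seriesSum F) = ∑ a ∈ s, cf m (F a) := by
  rw [coeff_seriesSum]
  exact finsum_eq_sum_of_support_subset _ (fun a ha => h a ha)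

lemma degree_add (a b : σ →₀ ℕ) : degree (a + b) = degree a + degree b := by
  simp [degree_eq_weight_one, map_add]

lemma degree_le_of_le {a b : σ →₀ ℕ} (h : a ≤ b) : degree a ≤ degree b := by
  obtain ⟨c, rfl⟩ := le_iff_exists_add.mp h
  simp [degree_add]

lemma coeff_pow_eq_zero {f : MvPowerSeries σ ℂ} (hf : constantCoeff f = 0)
    {d : σ →₀ ℕ} {n : ℕ} (h : degree d < n) : cf d (f ^ n) = 0 := by
  classical
  refine coeff_eq_zero_of_constantCoeff_nilpotent (m := 1) (by simpa using hf) ?_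
  omega

lemma coeff_smul (c : ℂ) (f : MvPowerSeries σ ℂ) (m : σ →₀ ℕ) :
    cf m (c • f) = c * cf m f := by
  rw [map_smul, smul_eq_mul]

lemma smm_pow_family {f : MvPowerSeries σ ℂ} (hf : constantCoeff f = 0)
    (c : ℕ → ℂ) (e : ℕ → ℕ) (he : ∀ n, n ≤ e n) :
    Smm (fun n => c n • f ^ (e n)) := by
  intro m
  refine Set.Finite.subset (Set.finite_Iic (degree m)) ?_
  intro n hn
  simp only [Function.mem_support, coeff_smul] at hn
  by_contra hlt
  simp only [Set.mem_Iic, not_le] at hlt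
  exact hn (by rw [coeff_pow_eq_zero hf (lt_of_lt_of_le hlt (he n)), mul_zero])

lemma seriesSum_mul_right {α : Type*} (F : α → MvPowerSeries σ ℂ) (hF : Smm F)
    (g : MvPowerSeries σ ℂ) :
    seriesSum F * g = seriesSum fun a => F a * g := by
  classical
  ext m
  set s : Finset α := (Finset.HasAntidiagonal.antidiagonal m).biUnion
    (fun p => ((hF p.1).toFinset)) with hs
  have hsub : ∀ p ∈ Finset.HasAntidiagonal.antidiagonal m, ∀ a : α, cf p.1 (F a) ≠ 0 → a ∈ s := by
    intro p hp a ha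
    exact Finset.mem_biUnion.mpr ⟨p, hp, (hF p.1).mem_toFinset.mpr ha⟩
  rw [coeff_mul]
  have h1 : ∀ p ∈ Finset.HasAntidiagonal.antidiagonal m,
      cf p.1 (seriesSum F) * cf p.2 g = ∑ a ∈ s, cf p.1 (F a) * cf p.2 g := by
    intro p hp
    rw [coeff_seriesSum_eq_sum s (hsub p hp), Finset.sum_mul]
  rw [Finset.sum_congr rfl h1, Finset.sum_comm]
  rw [coeff_seriesSum_eq_sum (F := fun a => F a * g) s ?_]
  · refine Finset.sum_congr rfl fun a _ => ?_
    rw [coeff_mul]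
  · intro a ha
    rw [coeff_mul] at ha
    obtain ⟨p, hp, hne⟩ := Finset.exists_ne_zero_of_sum_ne_zero ha
    exact hsub p hp a (fun h0 => hne (by rw [h0, zero_mul]))

lemma seriesSum_mul_left {α : Type*} (F : α → MvPowerSeries σ ℂ) (hF : Smm F)
    (g : MvPowerSeries σ ℂ) :
    g * seriesSum F = seriesSum fun a => g * F a := by
  rw [mul_comm, seriesSum_mul_right F hF g]
  exact seriesSum_congr fun a => mul_comm _ _

lemma seriesSum_seriesSum {α β : Type*} (H : α → β → MvPowerSeries σ ℂ)
    (h : Smm (fun p : α × β => H p.1 p.2)) :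
    seriesSum (fun a => seriesSum fun b => H a b) = seriesSum (fun p : α × β => H p.1 p.2) := by
  classical
  ext m
  set s : Finset α := (h m).toFinset.image Prod.fst with hs
  set t : Finset β := (h m).toFinset.image Prod.snd with ht
  have hmem : ∀ a b, cf m (H a b) ≠ 0 → a ∈ s ∧ b ∈ t := by
    intro a b hab
    have : (a, b) ∈ (h m).toFinset := (h m).mem_toFinset.mpr hab
    exact ⟨Finset.mem_image.mpr ⟨(a,b), this, rfl⟩, Finset.mem_image.mpr ⟨(a,b), this, rfl⟩⟩
  rw [coeff_seriesSum_eq_sum (F := fun p : α × β => H p.1 p.2) (s ×ˢ t)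
    (fun p hp => Finset.mem_product.mpr ⟨(hmem p.1 p.2 hp).1, (hmem p.1 p.2 hp).2⟩)]
  rw [coeff_seriesSum_eq_sum (F := fun a => seriesSum fun b => H a b) s ?_]
  · rw [Finset.sum_congr rfl
      (fun a _ => coeff_seriesSum_eq_sum t (fun b hb => (hmem a b hb).2)),
      ← Finset.sum_product']
  · intro a ha
    rw [coeff_seriesSum] at ha
    obtain ⟨b, hb⟩ : ∃ b, cf m (H a b) ≠ 0 := by
      by_contra hno
      push_neg at hno
      exact ha (by simp [hno])
    exact (hmem a b hb).1

lemma smm_mul_pairs {α β : Type*} {F : α → MvPowerSeries σ ℂ} {G : β → MvPowerSeries σ ℂ}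
    (hF : Smm F) (hG : Smm G) : Smm (fun p : α × β => F p.1 * G p.2) := by
  classical
  intro m
  set s : Finset α := (Finset.HasAntidiagonal.antidiagonal m).biUnion (fun p => (hF p.1).toFinset)
  set t : Finset β := (Finset.HasAntidiagonal.antidiagonal m).biUnion (fun p => (hG p.2).toFinset)
  refine Set.Finite.subset (s ×ˢ t : Finset (α × β)).finite_toSet ?_
  rintro ⟨a, b⟩ hab
  simp only [Function.mem_support] at hab
  rw [coeff_mul] at hab
  obtain ⟨p, hp, hne⟩ := Finset.exists_ne_zero_of_sum_ne_zero hab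
  have h1 : cf p.1 (F a) ≠ 0 := fun h0 => hne (by rw [h0, zero_mul])
  have h2 : cf p.2 (G b) ≠ 0 := fun h0 => hne (by rw [h0, mul_zero])
  simp only [Finset.coe_product, Set.mem_prod]
  exact ⟨Finset.mem_coe.mpr (Finset.mem_biUnion.mpr ⟨p, hp, (hF p.1).mem_toFinset.mpr h1⟩),
    Finset.mem_coe.mpr (Finset.mem_biUnion.mpr ⟨p, hp, (hG p.2).mem_toFinset.mpr h2⟩)⟩

lemma seriesSum_mul_seriesSum {α β : Type*} (F : α → MvPowerSeries σ ℂ)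
    (G : β → MvPowerSeries σ ℂ) (hF : Smm F) (hG : Smm G) :
    seriesSum F * seriesSum G = seriesSum fun p : α × β => F p.1 * G p.2 := by
  rw [seriesSum_mul_right F hF]
  rw [seriesSum_congr (fun a => seriesSum_mul_left G hG (F a))]
  exact seriesSum_seriesSum _ (smm_mul_pairs hF hG)

lemma seriesSum_smul {α : Type*} (c : ℂ) (F : α → MvPowerSeries σ ℂ) (hF : Smm F) :
    c • seriesSum F = seriesSum fun a => c • F a := by
  ext m
  rw [coeff_smul, coeff_seriesSum, coeff_seriesSum]
  rw [← smul_eq_mul, smul_finsum' c (hF m)]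
  exact finsum_congr fun a => by rw [coeff_smul, smul_eq_mul]

section Exp

lemma coeff_expS (f : MvPowerSeries σ ℂ) (m : σ →₀ ℕ) :
    cf m (expS f) = ∑ᶠ n : ℕ, (n.factorial : ℂ)⁻¹ * cf m (f ^ n) := by
  rw [expS, coeff_seriesSum]
  exact finsum_congr fun n => coeff_smul _ _ _

lemma smm_expS_family {f : MvPowerSeries σ ℂ} (hf : constantCoeff f = 0) :
    Smm (fun n : ℕ => (n.factorial : ℂ)⁻¹ • f ^ n) :=
  smm_pow_family hf _ _ (fun n => le_rfl)

lemma smm_log_family {f : MvPowerSeries σ ℂ} (hf : constantCoeff f = 0) :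
    Smm (fun n : ℕ => ((-1 : ℂ) ^ n / (n + 1)) • f ^ (n + 1)) :=
  smm_pow_family hf _ _ (fun n => Nat.le_succ n)

lemma expS_zero : expS (0 : MvPowerSeries σ ℂ) = 1 := by
  ext m
  rw [coeff_expS, finsum_eq_single _ 0 ?h0]
  · simp
  · intro n hn
    rw [zero_pow hn, map_zero, mul_zero]

/-- Equality of coefficients below a monomial `m`. -/
def CEq (m : σ →₀ ℕ) (f g : MvPowerSeries σ ℂ) : Prop :=
  ∀ u, u ≤ m → cf u f = cf u g

lemma cEq_refl (m : σ →₀ ℕ) (f : MvPowerSeries σ ℂ) : CEq m f f := fun _ _ => rfl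

lemma cEq_mul {m : σ →₀ ℕ} {f f' g g' : MvPowerSeries σ ℂ}
    (h1 : CEq m f f') (h2 : CEq m g g') : CEq m (f * g) (f' * g') := by
  intro u hu
  rw [MvPowerSeries.coeff_mul, MvPowerSeries.coeff_mul]
  refine Finset.sum_congr rfl fun p hp => ?_
  rw [Finset.HasAntidiagonal.mem_antidiagonal] at hp
  have hp1 : p.1 ≤ m := le_trans (hp ▸ self_le_add_right p.1 p.2) hu
  have hp2 : p.2 ≤ m := le_trans (hp ▸ self_le_add_left p.2 p.1) hu
  rw [h1 p.1 hp1, h2 p.2 hp2]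

lemma cEq_pow {m : σ →₀ ℕ} {f f' : MvPowerSeries σ ℂ} (h : CEq m f f') (n : ℕ) :
    CEq m (f ^ n) (f' ^ n) := by
  induction n with
  | zero => simpa using cEq_refl m 1
  | succ k ih => rw [pow_succ, pow_succ]; exact cEq_mul ih h

lemma cEq_expS {m : σ →₀ ℕ} {f f' : MvPowerSeries σ ℂ} (h : CEq m f f') :
    CEq m (expS f) (expS f') := by
  intro u hu
  rw [coeff_expS, coeff_expS]
  exact finsum_congr fun n => by rw [cEq_pow h n u hu]

lemma expS_add {f g : MvPowerSeries σ ℂ} (hf : constantCoeff f = 0)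
    (hg : constantCoeff g = 0) : expS (f + g) = expS f * expS g := by
  classical
  ext m
  set D := degree m with hD
  set T : Finset (ℕ × ℕ) := (Finset.range (D + 1)).biUnion (fun n => Finset.HasAntidiagonal.antidiagonal n)
    with hT
  have hTmem : ∀ p : ℕ × ℕ, p ∈ T ↔ p.1 + p.2 ≤ D := by
    intro p
    simp only [hT, Finset.mem_biUnion, Finset.mem_range, Finset.HasAntidiagonal.mem_antidiagonal]
    constructor
    · rintro ⟨n, hn, rfl⟩; omega
    · intro h; exact ⟨p.1 + p.2, by omega, rfl⟩
  have hzero : ∀ k l : ℕ, D < k + l → cf m (f ^ k * g ^ l) = 0 := by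
    intro k l h
    rw [MvPowerSeries.coeff_mul]
    apply Finset.sum_eq_zero
    rintro ⟨u, v⟩ hp
    rw [Finset.HasAntidiagonal.mem_antidiagonal] at hp
    have hd : degree u + degree v = D := by rw [← degree_add, hp]
    rcases lt_or_ge (degree u) k with h1 | h1
    · rw [coeff_pow_eq_zero hf h1, zero_mul]
    · have h2 : degree v < l := by omega
      rw [coeff_pow_eq_zero hg h2, mul_zero]
  set h : ℕ × ℕ → ℂ :=
    fun p => ((p.1.factorial : ℂ)⁻¹ * (p.2.factorial : ℂ)⁻¹) * cf m (f ^ p.1 * g ^ p.2)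
    with hh
  -- RHS
  simp only [expS]
  rw [seriesSum_mul_seriesSum _ _ (smm_expS_family hf) (smm_expS_family hg),
    seriesSum_congr (G := fun p : ℕ × ℕ =>
      ((p.1.factorial : ℂ)⁻¹ * (p.2.factorial : ℂ)⁻¹) • (f ^ p.1 * g ^ p.2))
      (fun p => smul_mul_smul_comm _ _ _ _),
    coeff_seriesSum_eq_sum T (fun p hp => by
      rw [coeff_smul] at hp
      have : cf m (f ^ p.1 * g ^ p.2) ≠ 0 := fun h0 => hp (by rw [h0, mul_zero])
      exact (hTmem p).mpr (by by_contra hc; exact this (hzero _ _ (by omega))))]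
  -- LHS
  have hfg : constantCoeff (f + g) = 0 := by rw [map_add, hf, hg, add_zero]
  have hexpand : ∀ n : ℕ, (n.factorial : ℂ)⁻¹ * cf m ((f + g) ^ n)
      = ∑ p ∈ Finset.HasAntidiagonal.antidiagonal n, h p := by
    intro n
    have hpow : (f + g) ^ n
        = ∑ k ∈ Finset.range (n + 1), (n.choose k : ℂ) • (f ^ k * g ^ (n - k)) := by
      rw [add_pow]
      refine Finset.sum_congr rfl fun k _ => ?_
      rw [Algebra.smul_def, map_natCast, mul_comm]
    rw [hpow, map_sum, Finset.Nat.sum_antidiagonal_eq_sum_range_succ_mk, Finset.mul_sum]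
    refine Finset.sum_congr rfl fun k hk => ?_
    rw [Finset.mem_range] at hk
    have hkn : k ≤ n := by omega
    rw [coeff_smul, hh]
    have hfac : (n.factorial : ℂ)⁻¹ * (n.choose k : ℂ)
        = (k.factorial : ℂ)⁻¹ * ((n - k).factorial : ℂ)⁻¹ := by
      have h1 : (k.factorial : ℂ) ≠ 0 := Nat.cast_ne_zero.mpr k.factorial_ne_zero
      have h2 : ((n - k).factorial : ℂ) ≠ 0 := Nat.cast_ne_zero.mpr (n - k).factorial_ne_zero
      have hc : (n.factorial : ℂ)
          = (n.choose k : ℂ) * (k.factorial : ℂ) * ((n - k).factorial : ℂ) := by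
        exact_mod_cast (Nat.choose_mul_factorial_mul_factorial hkn).symm
      have h3 : (n.choose k : ℂ) ≠ 0 := Nat.cast_ne_zero.mpr (Nat.choose_pos hkn).ne'
      rw [hc]
      field_simp
    rw [← mul_assoc, hfac, mul_assoc]
    show _ = (↑k.factorial : ℂ)⁻¹ * (↑(n - k).factorial : ℂ)⁻¹ * (cf m) (f ^ k * g ^ (n - k))
    ring
  have hsupp : (Function.support fun n : ℕ => cf m ((n.factorial : ℂ)⁻¹ • (f + g) ^ n))
      ⊆ ↑(Finset.range (D + 1)) := by
    intro n hn
    simp only [Function.mem_support, coeff_smul] at hn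
    simp only [Finset.coe_range, Set.mem_Iio]
    by_contra hc
    exact hn (by rw [coeff_pow_eq_zero hfg (by omega), mul_zero])
  have hdisj : Set.PairwiseDisjoint ↑(Finset.range (D + 1))
      (fun n : ℕ => Finset.HasAntidiagonal.antidiagonal n) := by
    intro a _ b _ hab
    simp only [Function.onFun, Finset.disjoint_left]
    intro p hpa hpb
    rw [Finset.HasAntidiagonal.mem_antidiagonal] at hpa hpb
    exact hab (by rw [← hpa, ← hpb])
  have hstep : ∀ n ∈ Finset.range (D + 1),
      cf m ((n.factorial : ℂ)⁻¹ • (f + g) ^ n) = ∑ p ∈ Finset.HasAntidiagonal.antidiagonal n, h p :=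
    fun n _ => by rw [coeff_smul]; exact hexpand n
  rw [coeff_seriesSum, finsum_eq_sum_of_support_subset _ hsupp,
    Finset.sum_congr rfl hstep, hT, ← Finset.sum_biUnion hdisj]
  exact Finset.sum_congr rfl fun p _ => (coeff_smul _ _ _).symm

lemma constantCoeff_sum {α : Type*} (s : Finset α) (A : α → MvPowerSeries σ ℂ)
    (h : ∀ a ∈ s, constantCoeff (A a) = 0) :
    constantCoeff (∑ a ∈ s, A a) = 0 := by
  rw [map_sum]
  exact Finset.sum_eq_zero h

lemma expS_finset_sum {α : Type*} (s : Finset α) (A : α → MvPowerSeries σ ℂ)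
    (h : ∀ a ∈ s, constantCoeff (A a) = 0) :
    expS (∑ a ∈ s, A a) = ∏ a ∈ s, expS (A a) := by
  classical
  induction s using Finset.induction_on with
  | empty => simpa using expS_zero
  | @insert a s ha ih =>
    rw [Finset.sum_insert ha, Finset.prod_insert ha,
      expS_add (h a (Finset.mem_insert_self a s))
        (constantCoeff_sum s A (fun b hb => h b (Finset.mem_insert_of_mem hb))),
      ih (fun b hb => h b (Finset.mem_insert_of_mem hb))]

end Exp


section Ssubst

variable {φ : σ → MvPowerSeries τ ℂ}

/-- The monomial-product appearing in `ssubst`. -/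
def Pd (φ : σ → MvPowerSeries τ ℂ) (d : σ →₀ ℕ) : MvPowerSeries τ ℂ :=
  d.prod fun s k => φ s ^ k

lemma coeff_ssubst (φ : σ → MvPowerSeries τ ℂ) (f : MvPowerSeries σ ℂ) (m : τ →₀ ℕ) :
    cf m (ssubst φ f) = ∑ᶠ d : σ →₀ ℕ, cf d f * cf m (Pd φ d) := rfl

lemma ssubst_eq (φ : σ → MvPowerSeries τ ℂ) (f : MvPowerSeries σ ℂ) :
    ssubst φ f = seriesSum fun d : σ →₀ ℕ => cf d f • Pd φ d := by
  ext m
  rw [coeff_ssubst, coeff_seriesSum]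
  exact finsum_congr fun d => (coeff_smul _ _ _).symm

/-- Admissible substitution family. -/
def SAdm (φ : σ → MvPowerSeries τ ℂ) : Prop :=
  (∀ s, constantCoeff (φ s) = 0) ∧
  ∀ m : τ →₀ ℕ, {s : σ | ∃ u ≤ m, cf u (φ s) ≠ 0}.Finite

lemma Pd_zero (φ : σ → MvPowerSeries τ ℂ) : Pd φ 0 = 1 :=
  Finsupp.prod_zero_index

lemma Pd_add (φ : σ → MvPowerSeries τ ℂ) (d e : σ →₀ ℕ) :
    Pd φ (d + e) = Pd φ d * Pd φ e :=
  Finsupp.prod_add_index' (fun s => pow_zero (φ s)) (fun s a b => pow_add (φ s) a b)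

lemma Pd_single (φ : σ → MvPowerSeries τ ℂ) (s : σ) :
    Pd φ (Finsupp.single s 1) = φ s := by
  show (Finsupp.single s 1).prod (fun s k => φ s ^ k) = φ s
  exact (Finsupp.prod_single_index (h := fun s k => φ s ^ k) (pow_zero (φ s))).trans
    (pow_one _)

lemma coeff_Pd_ne_zero (hφ : SAdm φ) {m : τ →₀ ℕ} {d : σ →₀ ℕ}
    (h : cf m (Pd φ d) ≠ 0) :
    (∀ s ∈ d.support, ∃ u ≤ m, cf u (φ s) ≠ 0) ∧ (∀ s, d s ≤ degree m) := by
  classical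
  rw [Pd, Finsupp.prod, MvPowerSeries.coeff_prod] at h
  obtain ⟨l, hl, hne⟩ := Finset.exists_ne_zero_of_sum_ne_zero h
  rw [Finset.mem_finsuppAntidiag] at hl
  obtain ⟨hlsum, hlsupp⟩ := hl
  have hfac : ∀ s ∈ d.support, cf (l s) (φ s ^ d s) ≠ 0 := by
    intro s hs h0
    exact hne (Finset.prod_eq_zero hs h0)
  have hls : ∀ s ∈ d.support, l s ≤ m := by
    intro s hs
    rw [← hlsum]
    exact Finset.single_le_sum (f := fun s => l s) (fun i _ => zero_le) hs
  constructor
  · intro s hs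
    have h1 := hfac s hs
    have hds : d s ≠ 0 := Finsupp.mem_support_iff.mp hs
    rw [MvPowerSeries.coeff_pow] at h1
    obtain ⟨l', hl', hne'⟩ := Finset.exists_ne_zero_of_sum_ne_zero h1
    rw [Finset.mem_finsuppAntidiag] at hl'
    have h0mem : 0 ∈ Finset.range (d s) := Finset.mem_range.mpr (Nat.pos_of_ne_zero hds)
    have hc0 : cf (l' 0) (φ s) ≠ 0 := fun hz => hne' (Finset.prod_eq_zero h0mem hz)
    refine ⟨l' 0, ?_, hc0⟩
    calc l' 0 ≤ ∑ i ∈ Finset.range (d s), l' i :=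
          Finset.single_le_sum (fun i _ => zero_le) h0mem
    _ = l s := hl'.1
    _ ≤ m := hls s hs
  · intro s
    by_cases hs : s ∈ d.support
    · have h1 := hfac s hs
      have h2 : ¬ degree (l s) < d s := fun hlt => h1 (coeff_pow_eq_zero (hφ.1 s) hlt)
      calc d s ≤ degree (l s) := not_lt.mp h2
      _ ≤ degree m := degree_le_of_le (hls s hs)
    · simp [Finsupp.notMem_support_iff.mp hs]

lemma Pd_support_finite (hφ : SAdm φ) (m : τ →₀ ℕ) :
    {d : σ →₀ ℕ | cf m (Pd φ d) ≠ 0}.Finite := by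
  classical
  set S := (hφ.2 m).toFinset with hS
  set b : σ →₀ ℕ := ∑ s ∈ S, Finsupp.single s (degree m) with hb
  refine Set.Finite.subset (Set.finite_Icc 0 b) ?_
  intro d hd
  simp only [Set.mem_setOf_eq] at hd
  obtain ⟨hsupp, hval⟩ := coeff_Pd_ne_zero hφ hd
  simp only [Set.mem_Icc]
  refine ⟨zero_le, ?_⟩
  intro s
  have hbs : b s = if s ∈ S then degree m else 0 := by
    rw [hb, Finset.sum_apply']
    simp only [Finsupp.single_apply]
    rw [Finset.sum_ite_eq' S s (fun _ => degree m)]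
  by_cases hs : s ∈ d.support
  · have hsS : s ∈ S := by
      rw [hS, Set.Finite.mem_toFinset]
      exact hsupp s hs
    rw [hbs, if_pos hsS]
    exact hval s
  · rw [Finsupp.notMem_support_iff.mp hs]
    exact zero_le

lemma smm_ssubst_family (hφ : SAdm φ) (f : MvPowerSeries σ ℂ) :
    Smm (fun d : σ →₀ ℕ => cf d f • Pd φ d) := by
  intro m
  refine Set.Finite.subset (Pd_support_finite hφ m) ?_
  intro d hd
  simp only [Function.mem_support, coeff_smul] at hd
  exact fun h0 => hd (by rw [h0, mul_zero])

lemma ssubst_smul (hφ : SAdm φ) (c : ℂ) (f : MvPowerSeries σ ℂ) :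
    ssubst φ (c • f) = c • ssubst φ f := by
  rw [ssubst_eq, ssubst_eq, seriesSum_smul c _ (smm_ssubst_family hφ f)]
  exact seriesSum_congr fun d => by rw [coeff_smul, mul_smul]

lemma ssubst_X (φ : σ → MvPowerSeries τ ℂ) (s : σ) :
    ssubst φ (MvPowerSeries.X s) = φ s := by
  classical
  ext m
  rw [coeff_ssubst, finsum_eq_single _ (Finsupp.single s 1) ?_]
  · rw [MvPowerSeries.coeff_X, if_pos rfl, Pd_single, one_mul]
  · intro d hd
    rw [MvPowerSeries.coeff_X, if_neg hd, zero_mul]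

lemma ssubst_one (φ : σ → MvPowerSeries τ ℂ) :
    ssubst φ (1 : MvPowerSeries σ ℂ) = 1 := by
  classical
  ext m
  rw [coeff_ssubst, finsum_eq_single _ 0 ?_]
  · rw [Pd_zero, MvPowerSeries.coeff_one, if_pos rfl, one_mul]
  · intro d hd
    rw [MvPowerSeries.coeff_one, if_neg hd, zero_mul]

lemma ssubst_mul (hφ : SAdm φ) (f g : MvPowerSeries σ ℂ) :
    ssubst φ (f * g) = ssubst φ f * ssubst φ g := by
  classical
  rw [ssubst_eq φ (f * g), ssubst_eq φ f, ssubst_eq φ g,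
    seriesSum_mul_seriesSum _ _ (smm_ssubst_family hφ f) (smm_ssubst_family hφ g)]
  ext m
  set K := (Pd_support_finite hφ m).toFinset with hK
  set KA : Finset ((σ →₀ ℕ) × (σ →₀ ℕ)) := K.biUnion (fun D => Finset.HasAntidiagonal.antidiagonal D)
    with hKA
  have hdisj : Set.PairwiseDisjoint ↑K (fun D : σ →₀ ℕ => Finset.HasAntidiagonal.antidiagonal D) := by
    intro a _ b _ hab
    simp only [Function.onFun, Finset.disjoint_left]
    intro p hpa hpb
    rw [Finset.HasAntidiagonal.mem_antidiagonal] at hpa hpb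
    exact hab (by rw [← hpa, ← hpb])
  have hL : ∀ d : σ →₀ ℕ, cf m (cf d (f * g) • Pd φ d) ≠ 0 → d ∈ K := by
    intro d hd
    rw [coeff_smul] at hd
    rw [hK, Set.Finite.mem_toFinset]
    exact fun h0 => hd (by rw [h0, mul_zero])
  have hR : ∀ p : (σ →₀ ℕ) × (σ →₀ ℕ),
      cf m ((cf p.1 f • Pd φ p.1) * (cf p.2 g • Pd φ p.2)) ≠ 0 → p ∈ KA := by
    intro p hp
    rw [smul_mul_smul_comm, ← Pd_add, coeff_smul] at hp
    have h1 : cf m (Pd φ (p.1 + p.2)) ≠ 0 := fun h0 => hp (by rw [h0, mul_zero])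
    rw [hKA]
    refine Finset.mem_biUnion.mpr ⟨p.1 + p.2, ?_, Finset.HasAntidiagonal.mem_antidiagonal.mpr rfl⟩
    rw [hK, Set.Finite.mem_toFinset]
    exact h1
  rw [coeff_seriesSum_eq_sum K hL, coeff_seriesSum_eq_sum KA hR]
  have hstep : ∀ D ∈ K, cf m (cf D (f * g) • Pd φ D)
      = ∑ p ∈ Finset.HasAntidiagonal.antidiagonal D,
          cf m ((cf p.1 f • Pd φ p.1) * (cf p.2 g • Pd φ p.2)) := by
    intro D _
    rw [coeff_smul, MvPowerSeries.coeff_mul, Finset.sum_mul]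
    refine Finset.sum_congr rfl fun p hp => ?_
    rw [Finset.HasAntidiagonal.mem_antidiagonal] at hp
    rw [smul_mul_smul_comm, ← Pd_add, coeff_smul, hp]
  rw [Finset.sum_congr rfl hstep, ← Finset.sum_biUnion hdisj]

lemma ssubst_pow (hφ : SAdm φ) (f : MvPowerSeries σ ℂ) (n : ℕ) :
    ssubst φ (f ^ n) = (ssubst φ f) ^ n := by
  induction n with
  | zero => simpa using ssubst_one φ
  | succ k ih => rw [pow_succ, pow_succ, ssubst_mul hφ, ih]

lemma ssubst_seriesSum (hφ : SAdm φ) {α : Type*} (F : α → MvPowerSeries σ ℂ)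
    (hF : Smm F) :
    ssubst φ (seriesSum F) = seriesSum (fun a => ssubst φ (F a)) := by
  classical
  ext m
  set K := (Pd_support_finite hφ m).toFinset with hK
  set s : Finset α := K.biUnion (fun D => (hF D).toFinset) with hs
  have hmemK : ∀ D : σ →₀ ℕ, cf m (Pd φ D) ≠ 0 → D ∈ K := by
    intro D hD
    rw [hK, Set.Finite.mem_toFinset]; exact hD
  have hmems : ∀ (D : σ →₀ ℕ) (a : α), cf m (Pd φ D) ≠ 0 → cf D (F a) ≠ 0 → a ∈ s := by
    intro D a hD ha
    exact Finset.mem_biUnion.mpr ⟨D, hmemK D hD, (hF D).mem_toFinset.mpr ha⟩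
  rw [coeff_ssubst, coeff_seriesSum]
  rw [finsum_eq_sum_of_support_subset _ (s := K) (fun D hD => by
    simp only [Function.mem_support] at hD
    exact hmemK D (fun h0 => hD (by rw [h0, mul_zero])))]
  rw [finsum_eq_sum_of_support_subset _ (s := s) (fun a ha => by
    simp only [Function.mem_support, coeff_ssubst] at ha
    have : ∃ D : σ →₀ ℕ, cf D (F a) * cf m (Pd φ D) ≠ 0 := by
      by_contra hno
      push_neg at hno
      exact ha (finsum_eq_zero_of_forall_eq_zero hno)
    obtain ⟨D, hD⟩ := this
    exact hmems D a (fun h0 => hD (by rw [h0, mul_zero]))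
      (fun h0 => hD (by rw [h0, zero_mul])))]
  have hstep : ∀ D ∈ K, cf D (seriesSum F) * cf m (Pd φ D)
      = ∑ a ∈ s, cf D (F a) * cf m (Pd φ D) := by
    intro D hD
    by_cases hPd : cf m (Pd φ D) = 0
    · rw [hPd, mul_zero]
      exact (Finset.sum_eq_zero (fun a _ => mul_zero _)).symm
    · rw [coeff_seriesSum_eq_sum s (fun a ha => hmems D a hPd ha), Finset.sum_mul]
  rw [Finset.sum_congr rfl hstep, Finset.sum_comm]
  refine Finset.sum_congr rfl fun a _ => ?_
  rw [coeff_ssubst]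
  rw [finsum_eq_sum_of_support_subset _ (s := K) (fun D hD => by
    simp only [Function.mem_support] at hD
    exact hmemK D (fun h0 => hD (by rw [h0, mul_zero])))]

lemma constantCoeff_ssubst (hφ : SAdm φ) {f : MvPowerSeries σ ℂ}
    (hf : constantCoeff f = 0) : constantCoeff (ssubst φ f) = 0 := by
  classical
  rw [← MvPowerSeries.coeff_zero_eq_constantCoeff_apply, coeff_ssubst,
    finsum_eq_single _ 0 ?_]
  · rw [MvPowerSeries.coeff_zero_eq_constantCoeff_apply, hf, zero_mul]
  · intro d hd
    have : cf (0 : τ →₀ ℕ) (Pd φ d) = 0 := by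
      by_contra hc
      have hval := (coeff_Pd_ne_zero hφ hc).2
      refine hd ?_
      ext t
      have := hval t
      simp only [map_zero, Nat.le_zero] at this
      simpa using this
    rw [this, mul_zero]

lemma ssubst_expS (hφ : SAdm φ) {f : MvPowerSeries σ ℂ}
    (hf : constantCoeff f = 0) :
    ssubst φ (expS f) = expS (ssubst φ f) := by
  rw [expS, expS, ssubst_seriesSum hφ _ (smm_expS_family hf)]
  exact seriesSum_congr fun n => by rw [ssubst_smul hφ, ssubst_pow hφ]

lemma ssubst_logOneAdd (hφ : SAdm φ) {f : MvPowerSeries σ ℂ}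
    (hf : constantCoeff f = 0) :
    ssubst φ (logOneAdd f) = logOneAdd (ssubst φ f) := by
  rw [logOneAdd, logOneAdd, ssubst_seriesSum hφ _ (smm_log_family hf)]
  exact seriesSum_congr fun n => by rw [ssubst_smul hφ, ssubst_pow hφ]

end Ssubst


section App

lemma exists_ne_zero_of_finsum_ne_zero {α : Type*} {f : α → ℂ} (h : (∑ᶠ a, f a) ≠ 0) :
    ∃ a, f a ≠ 0 := by
  by_contra hno
  push_neg at hno
  exact h (finsum_eq_zero_of_forall_eq_zero hno)

lemma constantCoeff_seriesSum {α : Type*} (F : α → MvPowerSeries σ ℂ)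
    (h : ∀ a, constantCoeff (F a) = 0) :
    constantCoeff (seriesSum F) = 0 := by
  rw [← MvPowerSeries.coeff_zero_eq_constantCoeff_apply, coeff_seriesSum]
  refine finsum_eq_zero_of_forall_eq_zero fun a => ?_
  rw [MvPowerSeries.coeff_zero_eq_constantCoeff_apply, h a]

lemma constantCoeff_logOneAdd {f : MvPowerSeries σ ℂ} (hf : constantCoeff f = 0) :
    constantCoeff (logOneAdd f) = 0 := by
  rw [logOneAdd]
  refine constantCoeff_seriesSum _ fun n => ?_
  rw [← MvPowerSeries.coeff_zero_eq_constantCoeff_apply, coeff_smul,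
    coeff_pow_eq_zero hf (by simp), mul_zero]

lemma coeff_log_X_ne_zero {s : σ} {u : σ →₀ ℕ}
    (h : cf u (logOneAdd (MvPowerSeries.X s : MvPowerSeries σ ℂ)) ≠ 0) : u s ≠ 0 := by
  classical
  rw [logOneAdd, coeff_seriesSum] at h
  obtain ⟨n, hn⟩ := exists_ne_zero_of_finsum_ne_zero h
  rw [coeff_smul, MvPowerSeries.X_pow_eq] at hn
  by_cases hu : u = Finsupp.single s (n + 1)
  · subst hu
    simp [Finsupp.single_apply]
  · rw [MvPowerSeries.coeff_monomial_ne hu, mul_zero] at hn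
    exact absurd rfl hn

lemma le_apply_ne_zero {u m : σ →₀ ℕ} (h : u ≤ m) {s : σ} (hs : u s ≠ 0) : m s ≠ 0 := by
  have := Finsupp.le_def.mp h s
  omega

/-- If a coefficient of `h * log(1+p_n)` is nonzero, the monomial contains `p_n`. -/
lemma coeff_mul_logpv_ne_zero {h : Lambda1Q} {n : ℕ+} {u : (ℕ+ ⊕ Unit) →₀ ℕ}
    (hc : cf u (h * logOneAdd (pv n)) ≠ 0) : u (Sum.inl n) ≠ 0 := by
  rw [MvPowerSeries.coeff_mul] at hc
  obtain ⟨p, hp, hne⟩ := Finset.exists_ne_zero_of_sum_ne_zero hc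
  have h2 : cf p.2 (logOneAdd (pv n)) ≠ 0 := fun h0 => hne (by rw [h0, mul_zero])
  have h3 : p.2 (Sum.inl n) ≠ 0 := coeff_log_X_ne_zero h2
  rw [Finset.HasAntidiagonal.mem_antidiagonal] at hp
  exact le_apply_ne_zero (hp ▸ self_le_add_left p.2 p.1) h3

lemma pnat_finite_le (N : ℕ) : {i : ℕ+ | (i : ℕ) ≤ N}.Finite := by
  refine Set.Finite.preimage (PNat.coe_injective.injOn) (Set.finite_Iic N)

lemma smm_of_var' {α : Type*} (G : α → Lambda1Q) (e : α → ℕ+)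
    (hfib : ∀ n : ℕ+, {a | e a = n}.Finite)
    (hG : ∀ a u, cf u (G a) ≠ 0 → u (Sum.inl (e a)) ≠ 0) : Smm G := by
  intro m
  have hI : {n : ℕ+ | Sum.inl n ∈ m.support}.Finite :=
    Set.Finite.preimage (Sum.inl_injective.injOn) m.support.finite_toSet
  refine Set.Finite.subset (Set.Finite.biUnion hI (fun n _ => hfib n)) ?_
  intro a ha
  simp only [Function.mem_support] at ha
  have h1 : Sum.inl (e a) ∈ m.support := Finsupp.mem_support_iff.mpr (hG a m ha)
  exact Set.mem_biUnion h1 rfl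

lemma smm_of_var {α : Type*} (G : α → Lambda1Q) (e : α → ℕ+) (he : Function.Injective e)
    (hG : ∀ a u, cf u (G a) ≠ 0 → u (Sum.inl (e a)) ≠ 0) : Smm G :=
  smm_of_var' G e (fun n => Set.Subsingleton.finite
    (fun a ha b hb => he (ha.trans hb.symm))) hG

end App


section App2

/-- The inner substitution family. -/
def psiF (i : ℕ+) : (ℕ+ ⊕ Unit) → Lambda1Q := fun w => match w with
  | Sum.inl j => pv (i * j)
  | Sum.inr _ => qv ^ (i : ℕ)

/-- The series `g = ∑ (μ(d)/d) log(1+p_d)`. -/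
def gseries : Lambda1Q := seriesSum fun d : ℕ+ =>
  ((ArithmeticFunction.moebius (d : ℕ) : ℂ) / ((d : ℕ) : ℂ)) • logOneAdd (pv d)

/-- The outer substitution family. -/
def phiF : (ℕ+ ⊕ Unit) → Lambda1Q := fun v => match v with
  | Sum.inl i => ssubst (psiF i) gseries
  | Sum.inr _ => qv

lemma coeff_X_ne_zero {s : σ} {u : σ →₀ ℕ}
    (h : cf u (MvPowerSeries.X s : MvPowerSeries σ ℂ) ≠ 0) : u = Finsupp.single s 1 := by
  classical
  rw [MvPowerSeries.coeff_X] at h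
  by_cases hu : u = Finsupp.single s 1
  · exact hu
  · rw [if_neg hu] at h; exact absurd rfl h

lemma cc_pv (n : ℕ+) : constantCoeff (pv n) = 0 :=
  MvPowerSeries.constantCoeff_X _

lemma cc_qv : constantCoeff qv = 0 :=
  MvPowerSeries.constantCoeff_X _

lemma coeff_log_pv_ne_zero {n : ℕ+} {u : (ℕ+ ⊕ Unit) →₀ ℕ}
    (h : cf u (logOneAdd (pv n)) ≠ 0) : u (Sum.inl n) ≠ 0 :=
  coeff_log_X_ne_zero h

lemma cc_log_pv (n : ℕ+) : constantCoeff (logOneAdd (pv n)) = 0 :=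
  constantCoeff_logOneAdd (cc_pv n)

lemma SAdm_psiF (i : ℕ+) : SAdm (psiF i) := by
  constructor
  · intro w
    match w with
    | Sum.inl j => exact MvPowerSeries.constantCoeff_X _
    | Sum.inr _ =>
      show constantCoeff (qv ^ (i : ℕ)) = 0
      rw [map_pow, cc_qv, zero_pow i.pos.ne']
  · intro m
    have hA : {j : ℕ+ | Sum.inl (i * j) ∈ m.support}.Finite :=
      Set.Finite.preimage
        (((Sum.inl_injective).comp (mul_right_injective i)).injOn) m.support.finite_toSet
    refine Set.Finite.subset ((Set.finite_singleton (Sum.inr () : ℕ+ ⊕ Unit)).union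
      (hA.image (fun j => Sum.inl j))) ?_
    rintro (j | u) hw
    · obtain ⟨u, hu, hne⟩ := hw
      have h1 : u = Finsupp.single (Sum.inl (i * j)) 1 := coeff_X_ne_zero hne
      have h2 : u (Sum.inl (i * j)) ≠ 0 := by
        rw [h1]; simp
      refine Or.inr ⟨j, ?_, rfl⟩
      exact Finsupp.mem_support_iff.mpr (le_apply_ne_zero hu h2)
    · exact Or.inl rfl

lemma smm_gfam : Smm (fun d : ℕ+ =>
    ((ArithmeticFunction.moebius (d : ℕ) : ℂ) / ((d : ℕ) : ℂ)) • logOneAdd (pv d)) := by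
  refine smm_of_var _ id Function.injective_id ?_
  intro d u h
  rw [coeff_smul] at h
  exact coeff_log_pv_ne_zero (n := d) (fun h0 => h (by rw [h0, mul_zero]))

lemma hser_eq (i : ℕ+) : ssubst (psiF i) gseries = seriesSum fun d : ℕ+ =>
    ((ArithmeticFunction.moebius (d : ℕ) : ℂ) / ((d : ℕ) : ℂ)) • logOneAdd (pv (i * d)) := by
  rw [gseries, ssubst_seriesSum (SAdm_psiF i) _ smm_gfam]
  refine seriesSum_congr fun d => ?_
  rw [ssubst_smul (SAdm_psiF i), ssubst_logOneAdd (SAdm_psiF i) (cc_pv d),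
    show ssubst (psiF i) (pv d) = psiF i (Sum.inl d) from ssubst_X _ _]
  rfl

lemma cc_gseries : constantCoeff gseries = 0 := by
  rw [gseries]
  refine constantCoeff_seriesSum _ fun d => ?_
  rw [← MvPowerSeries.coeff_zero_eq_constantCoeff_apply, coeff_smul,
    MvPowerSeries.coeff_zero_eq_constantCoeff_apply,
    cc_log_pv d, mul_zero]

/-- index bound of a variable -/
def vIdx : (ℕ+ ⊕ Unit) → ℕ := fun v => match v with
  | Sum.inl i => (i : ℕ)
  | Sum.inr _ => 0

lemma SAdm_phiF : SAdm phiF := by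
  constructor
  · intro v
    match v with
    | Sum.inl i => exact constantCoeff_ssubst (SAdm_psiF i) cc_gseries
    | Sum.inr _ => exact MvPowerSeries.constantCoeff_X _
  · intro m
    set N : ℕ := m.support.sup vIdx with hN
    refine Set.Finite.subset ((Set.finite_singleton (Sum.inr () : ℕ+ ⊕ Unit)).union
      ((pnat_finite_le N).image (fun i => Sum.inl i))) ?_
    rintro (i | u) hv
    · obtain ⟨u, hu, hne⟩ := hv
      have h1 : cf u (ssubst (psiF i) gseries) ≠ 0 := hne
      rw [hser_eq i, coeff_seriesSum] at h1
      obtain ⟨d, hd⟩ := exists_ne_zero_of_finsum_ne_zero h1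
      rw [coeff_smul] at hd
      have h2 : u (Sum.inl (i * d)) ≠ 0 :=
        coeff_log_pv_ne_zero (fun h0 => hd (by rw [h0, mul_zero]))
      have h3 : Sum.inl (i * d) ∈ m.support :=
        Finsupp.mem_support_iff.mpr (le_apply_ne_zero hu h2)
      have h4 : ((i * d : ℕ+) : ℕ) ≤ N := by
        rw [hN]
        exact Finset.le_sup (f := vIdx) h3
      refine Or.inr ⟨i, ?_, rfl⟩
      have h5 : (i : ℕ) ≤ ((i * d : ℕ+) : ℕ) := by
        rw [PNat.mul_coe]
        exact Nat.le_mul_of_pos_right _ d.pos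
      exact le_trans h5 h4
    · exact Or.inl rfl

lemma qvpow_mul_pv (i : ℕ+) : qv ^ (i : ℕ) * pv i = MvPowerSeries.monomial
    (Finsupp.single (Sum.inr () : ℕ+ ⊕ Unit) (i : ℕ) + Finsupp.single (Sum.inl i) 1) 1 := by
  rw [qv, pv, MvPowerSeries.X_pow_eq, ← pow_one (MvPowerSeries.X (Sum.inl i)),
    MvPowerSeries.X_pow_eq, MvPowerSeries.monomial_mul_monomial, one_mul]

lemma coeff_Sterm_ne {i : ℕ+} {u : (ℕ+ ⊕ Unit) →₀ ℕ}
    (h : cf u (((i : ℂ))⁻¹ • (qv ^ (i : ℕ) * pv i)) ≠ 0) : u (Sum.inl i) ≠ 0 := by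
  classical
  rw [coeff_smul, qvpow_mul_pv] at h
  by_cases hu : u = Finsupp.single (Sum.inr () : ℕ+ ⊕ Unit) (i : ℕ) + Finsupp.single (Sum.inl i) 1
  · rw [hu]
    simp [Finsupp.single_apply]
  · rw [MvPowerSeries.coeff_monomial_ne hu, mul_zero] at h
    exact absurd rfl h

lemma smm_Sfam : Smm (fun i : ℕ+ => ((i : ℂ))⁻¹ • (qv ^ (i : ℕ) * pv i)) :=
  smm_of_var _ id Function.injective_id (fun i u h => coeff_Sterm_ne h)

lemma cc_Sser : constantCoeff
    (seriesSum fun i : ℕ+ => ((i : ℂ))⁻¹ • (qv ^ (i : ℕ) * pv i)) = 0 := by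
  refine constantCoeff_seriesSum _ fun i => ?_
  rw [← MvPowerSeries.coeff_zero_eq_constantCoeff_apply]
  by_contra h
  exact coeff_Sterm_ne h rfl

/-- The summand `B_n = (R_n/n) log(1+p_n)`. -/
def Bp (n : ℕ+) : Lambda1Q := ((((n : ℕ) : ℂ))⁻¹ • Rq (n : ℕ)) * logOneAdd (pv n)

/-- The pair family after substitution. -/
def Tfam (p : ℕ+ × ℕ+) : Lambda1Q :=
  ((((p.1 : ℕ) : ℂ))⁻¹ * ((ArithmeticFunction.moebius (p.2 : ℕ) : ℂ) / ((p.2 : ℕ) : ℂ))) •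
    (qv ^ (p.1 : ℕ) * logOneAdd (pv (p.1 * p.2)))

lemma smm_Tfam : Smm Tfam := by
  refine smm_of_var' Tfam (fun p => p.1 * p.2) ?_ ?_
  · intro n
    refine Set.Finite.subset (Set.Finite.prod (pnat_finite_le (n : ℕ)) (pnat_finite_le (n : ℕ)))
      ?_
    rintro ⟨i, d⟩ h
    simp only [Set.mem_setOf_eq] at h
    have h1 : (i : ℕ) * (d : ℕ) = (n : ℕ) := by
      rw [← PNat.mul_coe, h]
    constructor
    · simp only [Set.mem_setOf_eq]
      calc (i : ℕ) ≤ (i : ℕ) * (d : ℕ) := Nat.le_mul_of_pos_right _ d.pos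
      _ = (n : ℕ) := h1
    · simp only [Set.mem_setOf_eq]
      calc (d : ℕ) ≤ (i : ℕ) * (d : ℕ) := Nat.le_mul_of_pos_left _ i.pos
      _ = (n : ℕ) := h1
  · intro p u h
    rw [Tfam, coeff_smul] at h
    exact coeff_mul_logpv_ne_zero (fun h0 => h (by rw [h0, mul_zero]))

lemma smm_inner_fam (i : ℕ+) : Smm (fun d : ℕ+ =>
    ((ArithmeticFunction.moebius (d : ℕ) : ℂ) / ((d : ℕ) : ℂ)) • logOneAdd (pv (i * d))) := by
  refine smm_of_var _ (fun d => i * d) (mul_right_injective i) ?_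
  intro d u h
  rw [coeff_smul] at h
  exact coeff_log_pv_ne_zero (n := i * d) (fun h0 => h (by rw [h0, mul_zero]))

lemma ssubst_Sser :
    ssubst phiF (seriesSum fun i : ℕ+ => ((i : ℂ))⁻¹ • (qv ^ (i : ℕ) * pv i))
      = seriesSum Tfam := by
  rw [ssubst_seriesSum SAdm_phiF _ smm_Sfam]
  rw [seriesSum_congr (G := fun i : ℕ+ => seriesSum fun d : ℕ+ => Tfam (i, d)) ?hstep]
  · exact seriesSum_seriesSum (fun i d => Tfam (i, d)) smm_Tfam
  · intro i
    have hq : ssubst phiF qv = qv := ssubst_X phiF (Sum.inr ())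
    have hp : ssubst phiF (pv i) = ssubst (psiF i) gseries := ssubst_X phiF (Sum.inl i)
    have hfam : (fun d : ℕ+ => qv ^ (i : ℕ) *
        (((ArithmeticFunction.moebius (d : ℕ) : ℂ) / ((d : ℕ) : ℂ)) • logOneAdd (pv (i * d))))
        = fun d : ℕ+ => ((ArithmeticFunction.moebius (d : ℕ) : ℂ) / ((d : ℕ) : ℂ)) •
            (qv ^ (i : ℕ) * logOneAdd (pv (i * d))) :=
      funext fun d => mul_smul_comm _ _ _
    have hsmm2 : Smm (fun d : ℕ+ => qv ^ (i : ℕ) *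
        (((ArithmeticFunction.moebius (d : ℕ) : ℂ) / ((d : ℕ) : ℂ)) •
          logOneAdd (pv (i * d)))) := by
      rw [hfam]
      refine smm_of_var _ (fun d => i * d) (mul_right_injective i) ?_
      intro d u h
      rw [coeff_smul] at h
      exact coeff_mul_logpv_ne_zero (n := i * d) (fun h0 => h (by rw [h0, mul_zero]))
    rw [ssubst_smul SAdm_phiF, ssubst_mul SAdm_phiF, ssubst_pow SAdm_phiF, hq, hp, hser_eq i,
      seriesSum_mul_left _ (smm_inner_fam i), seriesSum_smul _ _ hsmm2]
    refine seriesSum_congr fun d => ?_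
    rw [mul_smul_comm, smul_smul]
    rfl

end App2


section Regroup

/-- ℕ+-index of a variable (junk 1 at `q`). -/
def vIdxP : (ℕ+ ⊕ Unit) → ℕ+ := fun v => match v with
  | Sum.inl i => i
  | Sum.inr _ => 1

lemma Bp_eq (n : ℕ+) : Bp n = ∑ d ∈ ((n : ℕ)).divisors,
    ((((n : ℕ) : ℂ))⁻¹ * (ArithmeticFunction.moebius d : ℂ)) •
      (qv ^ ((n : ℕ) / d) * logOneAdd (pv n)) := by
  rw [Bp, Rq, Finset.smul_sum, Finset.sum_mul]
  refine Finset.sum_congr rfl fun d _ => ?_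
  rw [smul_smul, smul_mul_assoc]

lemma toPNat'_coe_pnat (p : ℕ+) : Nat.toPNat' (p : ℕ) = p :=
  PNat.coe_injective (PNat.toPNat'_coe p.pos)

lemma Tfam_term {n : ℕ+} {d : ℕ} (hd : d ∈ ((n : ℕ)).divisors) :
    Tfam (Nat.toPNat' ((n : ℕ) / d), Nat.toPNat' d)
      = ((((n : ℕ) : ℂ))⁻¹ * (ArithmeticFunction.moebius d : ℂ)) •
          (qv ^ ((n : ℕ) / d) * logOneAdd (pv n)) := by
  obtain ⟨hdvd, hn0⟩ := Nat.mem_divisors.mp hd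
  have hdpos : 0 < d := Nat.pos_of_mem_divisors hd
  have hapos : 0 < (n : ℕ) / d := Nat.div_pos (Nat.le_of_dvd n.pos hdvd) hdpos
  have hca : ((Nat.toPNat' ((n : ℕ) / d) : ℕ+) : ℕ) = (n : ℕ) / d := PNat.toPNat'_coe hapos
  have hcd : ((Nat.toPNat' d : ℕ+) : ℕ) = d := PNat.toPNat'_coe hdpos
  have hprod : Nat.toPNat' ((n : ℕ) / d) * Nat.toPNat' d = n := by
    apply PNat.coe_injective
    rw [PNat.mul_coe, hca, hcd]
    exact Nat.div_mul_cancel hdvd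
  have hmulc : (((n : ℕ) / d : ℕ) : ℂ) * ((d : ℕ) : ℂ) = ((n : ℕ) : ℂ) := by
    exact_mod_cast congrArg (Nat.cast (R := ℂ)) (Nat.div_mul_cancel hdvd)
  rw [Tfam]
  simp only [hca, hcd, hprod]
  congr 1
  have h1 : (((n : ℕ) / d : ℕ) : ℂ) ≠ 0 := Nat.cast_ne_zero.mpr hapos.ne'
  have h2 : ((d : ℕ) : ℂ) ≠ 0 := Nat.cast_ne_zero.mpr hdpos.ne'
  rw [div_eq_mul_inv, ← hmulc, mul_inv]
  ring

lemma regroup : seriesSum Tfam = seriesSum Bp := by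
  classical
  ext m
  set Q : Finset ℕ+ := m.support.image vIdxP with hQdef
  have hQ : ∀ n : ℕ+, Sum.inl n ∈ m.support → n ∈ Q := fun n hn =>
    Finset.mem_image.mpr ⟨Sum.inl n, hn, rfl⟩
  set e : ℕ × ℕ → ℕ+ × ℕ+ := fun pq => (Nat.toPNat' pq.1, Nat.toPNat' pq.2) with he
  set P : Finset (ℕ+ × ℕ+) :=
    Q.biUnion (fun n => (((n : ℕ)).divisorsAntidiagonal).image e) with hP
  have hTsupp : ∀ p : ℕ+ × ℕ+, cf m (Tfam p) ≠ 0 → Sum.inl (p.1 * p.2) ∈ m.support := by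
    intro p h
    rw [Tfam, coeff_smul] at h
    exact Finsupp.mem_support_iff.mpr
      (coeff_mul_logpv_ne_zero (n := p.1 * p.2) (fun h0 => h (by rw [h0, mul_zero])))
  have hPmem : ∀ p, cf m (Tfam p) ≠ 0 → p ∈ P := by
    intro p h
    refine Finset.mem_biUnion.mpr ⟨p.1 * p.2, hQ _ (hTsupp p h), ?_⟩
    refine Finset.mem_image.mpr ⟨((p.1 : ℕ), (p.2 : ℕ)), ?_, ?_⟩
    · rw [Nat.mem_divisorsAntidiagonal]
      exact ⟨(PNat.mul_coe p.1 p.2).symm, (p.1 * p.2).pos.ne'⟩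
    · rw [he]
      exact Prod.ext (toPNat'_coe_pnat p.1) (toPNat'_coe_pnat p.2)
  have hBmem : ∀ n : ℕ+, cf m (Bp n) ≠ 0 → n ∈ Q := by
    intro n h
    have h' : cf m (((((n : ℕ) : ℂ))⁻¹ • Rq (n : ℕ)) * logOneAdd (pv n)) ≠ 0 := h
    exact hQ n (Finsupp.mem_support_iff.mpr (coeff_mul_logpv_ne_zero h'))
  have hprodeq : ∀ (n : ℕ+) (pq : ℕ × ℕ), pq ∈ ((n : ℕ)).divisorsAntidiagonal →
      (e pq).1 * (e pq).2 = n := by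
    intro n pq hpq
    obtain ⟨hmul, hn0⟩ := Nat.mem_divisorsAntidiagonal.mp hpq
    have h1 : 0 < pq.1 := Nat.pos_of_ne_zero (fun h0 => hn0 (by rw [← hmul, h0, zero_mul]))
    have h2 : 0 < pq.2 := Nat.pos_of_ne_zero (fun h0 => hn0 (by rw [← hmul, h0, mul_zero]))
    apply PNat.coe_injective
    rw [PNat.mul_coe, he]
    simp only []
    rw [PNat.toPNat'_coe h1, PNat.toPNat'_coe h2]
    exact hmul
  have hdisj : Set.PairwiseDisjoint ↑Q
      (fun n : ℕ+ => (((n : ℕ)).divisorsAntidiagonal).image e) := by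
    intro a _ b _ hab
    simp only [Function.onFun, Finset.disjoint_left]
    intro p hpa hpb
    obtain ⟨pq, hpq, hpe⟩ := Finset.mem_image.mp hpa
    obtain ⟨pq', hpq', hpe'⟩ := Finset.mem_image.mp hpb
    refine hab ?_
    rw [← hprodeq a pq hpq, ← hprodeq b pq' hpq', hpe, hpe']
  rw [coeff_seriesSum_eq_sum P hPmem, coeff_seriesSum_eq_sum Q hBmem, hP,
    Finset.sum_biUnion hdisj]
  refine Finset.sum_congr rfl fun n hn => ?_
  have hinj : ∀ x ∈ ((n : ℕ)).divisorsAntidiagonal, ∀ y ∈ ((n : ℕ)).divisorsAntidiagonal,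
      e x = e y → x = y := by
    intro x hx y hy hxy
    obtain ⟨hmulx, hn0⟩ := Nat.mem_divisorsAntidiagonal.mp hx
    obtain ⟨hmuly, _⟩ := Nat.mem_divisorsAntidiagonal.mp hy
    have hx1 : 0 < x.1 := Nat.pos_of_ne_zero (fun h0 => hn0 (by rw [← hmulx, h0, zero_mul]))
    have hx2 : 0 < x.2 := Nat.pos_of_ne_zero (fun h0 => hn0 (by rw [← hmulx, h0, mul_zero]))
    have hy1 : 0 < y.1 := Nat.pos_of_ne_zero (fun h0 => hn0 (by rw [← hmuly, h0, zero_mul]))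
    have hy2 : 0 < y.2 := Nat.pos_of_ne_zero (fun h0 => hn0 (by rw [← hmuly, h0, mul_zero]))
    have h1 := congrArg (fun z : ℕ+ × ℕ+ => ((z.1 : ℕ), (z.2 : ℕ))) hxy
    simp only [he, PNat.toPNat'_coe hx1, PNat.toPNat'_coe hx2,
      PNat.toPNat'_coe hy1, PNat.toPNat'_coe hy2] at h1
    exact Prod.ext (congrArg Prod.fst h1) (congrArg Prod.snd h1)
  rw [Finset.sum_image hinj]
  have hright : cf m (Bp n) = ∑ d ∈ ((n : ℕ)).divisors,
      cf m (((((n : ℕ) : ℂ))⁻¹ * (ArithmeticFunction.moebius d : ℂ)) •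
        (qv ^ ((n : ℕ) / d) * logOneAdd (pv n))) := by
    rw [Bp_eq, map_sum]
  rw [hright,
    Nat.sum_divisorsAntidiagonal' (f := fun a b => cf m (Tfam (Nat.toPNat' a, Nat.toPNat' b)))]
  refine Finset.sum_congr rfl fun d hd => ?_
  rw [Tfam_term hd]

end Regroup


section Product

lemma ccBp (n : ℕ+) : constantCoeff (Bp n) = 0 := by
  show constantCoeff
    (((((n : ℕ) : ℂ))⁻¹ • Rq (n : ℕ)) * logOneAdd (pv n)) = 0
  rw [map_mul, cc_log_pv, mul_zero]

lemma coeff_Bp_ne_zero {n : ℕ+} {u : (ℕ+ ⊕ Unit) →₀ ℕ} (h : cf u (Bp n) ≠ 0) :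
    u (Sum.inl n) ≠ 0 := by
  have h' : cf u (((((n : ℕ) : ℂ))⁻¹ • Rq (n : ℕ)) * logOneAdd (pv n)) ≠ 0 := h
  exact coeff_mul_logpv_ne_zero h'

lemma expS_seriesSum_Bp :
    expS (seriesSum Bp) = seriesProd (fun k : ℕ => expS (Bp ⟨k + 1, k.succ_pos⟩)) := by
  classical
  ext m
  set N : ℕ := m.support.sup vIdx + 1 with hNdef
  have hbig : ∀ (n : ℕ+) (u : (ℕ+ ⊕ Unit) →₀ ℕ), u ≤ m → cf u (Bp n) ≠ 0 → (n : ℕ) < N := by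
    intro n u hu h
    have h2 : u (Sum.inl n) ≠ 0 := coeff_Bp_ne_zero h
    have h3 : Sum.inl n ∈ m.support := Finsupp.mem_support_iff.mpr (le_apply_ne_zero hu h2)
    have h4 : vIdx (Sum.inl n) ≤ m.support.sup vIdx := Finset.le_sup h3
    have h5 : vIdx (Sum.inl n) = (n : ℕ) := rfl
    omega
  set A : ℕ → Lambda1Q := fun k => Bp ⟨k + 1, k.succ_pos⟩ with hA
  -- LHS: truncate the sum
  have hCEq : CEq m (seriesSum Bp) (∑ k ∈ Finset.range N, A k) := by
    intro u hu
    have hsub : ∀ n : ℕ+, cf u (Bp n) ≠ 0 →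
        n ∈ (Finset.range N).image (fun k => (⟨k + 1, k.succ_pos⟩ : ℕ+)) := by
      intro n h
      have h4 : (n : ℕ) < N := hbig n u hu h
      have h5 := n.pos
      refine Finset.mem_image.mpr ⟨(n : ℕ) - 1, Finset.mem_range.mpr (by omega), ?_⟩
      apply PNat.coe_injective
      show ((n : ℕ) - 1) + 1 = (n : ℕ)
      omega
    have hinj : ∀ x ∈ Finset.range N, ∀ y ∈ Finset.range N,
        (⟨x + 1, x.succ_pos⟩ : ℕ+) = (⟨y + 1, y.succ_pos⟩ : ℕ+) → x = y := by
      intro x _ y _ hxy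
      have := congrArg (fun z : ℕ+ => (z : ℕ)) hxy
      simpa using this
    rw [coeff_seriesSum_eq_sum _ hsub, map_sum]
    exact Finset.sum_image hinj
  have hL : cf m (expS (seriesSum Bp)) = cf m (∏ k ∈ Finset.range N, expS (A k)) := by
    rw [cEq_expS hCEq m le_rfl, expS_finset_sum _ A (fun k _ => ccBp _)]
  -- RHS: the partial products stabilize
  have hconst : ∀ M, N ≤ M → cf m (∏ k ∈ Finset.range M, expS (A k))
      = cf m (∏ k ∈ Finset.range N, expS (A k)) := by
    intro M hM
    induction M, hM using Nat.le_induction with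
    | base => rfl
    | succ M hM ih =>
      have hone : CEq m (expS (A M)) 1 := by
        intro u hu
        rw [coeff_expS, finsum_eq_single _ 0 ?_]
        · simp
        · intro n hn
          have hzero : ∀ v, v ≤ u → cf v (A M) = 0 := by
            intro v hv
            by_contra hc
            have h6 := hbig ⟨M + 1, M.succ_pos⟩ v (le_trans hv hu) hc
            have h7 : M + 1 < N := h6
            omega
          have hCE0 : CEq u (A M) 0 := fun v hv => by rw [hzero v hv, map_zero]
          have h8 := cEq_pow hCE0 n u le_rfl
          rw [h8, zero_pow hn, map_zero, mul_zero]
      rw [Finset.prod_range_succ, cEq_mul (cEq_refl m _) hone m le_rfl, mul_one, ih]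
  have htend : Filter.Tendsto (fun M => cf m (∏ k ∈ Finset.range M, expS (A k)))
      Filter.atTop (nhds (cf m (∏ k ∈ Finset.range N, expS (A k)))) := by
    refine Filter.Tendsto.congr' ?_ tendsto_const_nhds
    filter_upwards [Filter.eventually_ge_atTop N] with M hM
    exact (hconst M hM).symm
  have hlim : cf m (seriesProd (fun k : ℕ => expS (A k)))
      = cf m (∏ k ∈ Finset.range N, expS (A k)) := htend.limUnder_eq
  rw [hL, hlim]

end Product


end LehrerAux

open LehrerAux

/--
Lehrer's formula for the equivariant weight polynomials of the spaces
`M(1,n)`, combinatorial form.  In `Λ̂(1)[q]`: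
`exp(∑_{i≥1} (q^i/i) p_i) ∘ (∑_{d≥1} (μ(d)/d) log(1+p_d)) = ∏_{n≥1} (1+p_n)^{R_n/n}`,
where `(1+p_n)^{R_n/n} := exp((R_n/n) log(1+p_n))`.
-/
theorem lehrer_rank_one :
    pleth1Q
        (expS (seriesSum fun i : ℕ+ => ((i : ℂ))⁻¹ • (qv ^ (i : ℕ) * pv i)))
        (seriesSum fun d : ℕ+ =>
          ((ArithmeticFunction.moebius (d : ℕ) : ℂ) / ((d : ℕ) : ℂ)) • logOneAdd (pv d))
      = seriesProd (fun n : ℕ =>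
          expS (((((n : ℕ) + 1 : ℂ))⁻¹ • Rq (n + 1)) *
            logOneAdd (pv ⟨n + 1, n.succ_pos⟩))) := by
  calc pleth1Q
        (expS (seriesSum fun i : ℕ+ => ((i : ℂ))⁻¹ • (qv ^ (i : ℕ) * pv i)))
        (seriesSum fun d : ℕ+ =>
          ((ArithmeticFunction.moebius (d : ℕ) : ℂ) / ((d : ℕ) : ℂ)) • logOneAdd (pv d))
      = ssubst phiF (expS (seriesSum fun i : ℕ+ => ((i : ℂ))⁻¹ • (qv ^ (i : ℕ) * pv i))) :=
        rfl
    _ = expS (ssubst phiF (seriesSum fun i : ℕ+ => ((i : ℂ))⁻¹ • (qv ^ (i : ℕ) * pv i))) :=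
        ssubst_expS SAdm_phiF cc_Sser
    _ = expS (seriesSum Tfam) := by rw [ssubst_Sser]
    _ = expS (seriesSum Bp) := by rw [regroup]
    _ = seriesProd (fun k : ℕ => expS (Bp ⟨k + 1, k.succ_pos⟩)) := expS_seriesSum_Bp
    _ = seriesProd (fun n : ℕ =>
          expS (((((n : ℕ) + 1 : ℂ))⁻¹ • Rq (n + 1)) *
            logOneAdd (pv ⟨n + 1, n.succ_pos⟩))) := by
        refine congrArg seriesProd (funext fun k => ?_)
        refine congrArg expS ?_
        show ((((k + 1 : ℕ) : ℂ))⁻¹ • Rq (k + 1)) * logOneAdd (pv ⟨k + 1, k.succ_pos⟩) = _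
        norm_cast

end
end
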